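/- arXiv:2211.13541 — 9 statements merged into one kernel-verified Lean document; each statement's English description precedes it below -/
import Mathlib

section
/- Let Ω > 0, let n ≥ 2 be an integer, and let 0 < σ ≤ m_min. Then there exist a positive discrete measure μ = Σ_{j=1}^n a_j δ_{y_j} with n distinct support points y_j ∈ I(n,Ω) and a_j > 0, and a positive discrete measure μ̂ = Σ_{j=1}^{n−1} â_j δ_{ŷ_j} with n−1 distinct support points and â_j > 0, such that sup_{ω∈[−Ω,Ω]} |Fμ̂(ω) − Fμ(ω)| < σ, min_{1≤j≤n} a_j = m_min, and min_{p≠j} |y_p − y_j| = (2e^{−1}/Ω)·(σ/m_min)^{1/(2n−2)}. -/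
open Real Complex Finset

private lemma sum_range_even_odd (f : ℕ → ℂ) (m : ℕ) :
    ∑ k ∈ Finset.range (2*m+1), f k
      = (∑ j ∈ Finset.range (m+1), f (2*j)) + ∑ j ∈ Finset.range m, f (2*j+1) := by
  induction m with
  | zero => simp
  | succ m ih =>
    have h1 : 2*(m+1)+1 = (2*m+1) + 1 + 1 := by ring
    rw [h1, Finset.sum_range_succ, Finset.sum_range_succ, ih,
        Finset.sum_range_succ (f := fun j => f (2*j)) (n := m+1),
        Finset.sum_range_succ (f := fun j => f (2*j+1)) (n := m)]
    have e1 : 2*(m+1) = 2*m+1+1 := by ring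
    rw [e1]
    ring

set_option maxHeartbeats 1000000 in
/-- lower bound for the computational resolution limit to number detection
(Theorem `thm:numberlowerboundthm0`). There exist a positive measure with `n` supports in
`I(n,Ω)` and one with `n-1` supports whose Fourier data differ by less than `σ` on `[-Ω,Ω]`,
with minimal amplitude `m_min` and minimal separation `(2e⁻¹/Ω)·(σ/m_min)^{1/(2n-2)}`. -/
theorem number_detection_lower_bound
    (Ω : ℝ) (hΩ : 0 < Ω) (n : ℕ) (hn : 2 ≤ n)
    (σ mmin : ℝ) (hσ : 0 < σ) (hσm : σ ≤ mmin) :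
    ∃ (a y : Fin n → ℝ) (b yh : Fin (n - 1) → ℝ),
      (∀ j, 0 < a j) ∧ Function.Injective y ∧
      (∀ j, y j ∈ Set.Icc (-(((n : ℝ) - 1) * π / (2 * Ω))) (((n : ℝ) - 1) * π / (2 * Ω))) ∧
      (∀ j, 0 < b j) ∧ Function.Injective yh ∧
      (∀ ω ∈ Set.Icc (-Ω) Ω,
        ‖(∑ j, (b j : ℂ) * Complex.exp (Complex.I * (yh j : ℝ) * (ω : ℝ)))
          - ∑ j, (a j : ℂ) * Complex.exp (Complex.I * (y j : ℝ) * (ω : ℝ))‖ < σ) ∧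
      IsLeast (Set.range a) mmin ∧
      (∀ p j, p ≠ j →
        2 * (Real.exp 1)⁻¹ / Ω * (σ / mmin) ^ ((1 : ℝ) / (2 * (n : ℝ) - 2)) ≤ |y p - y j|) ∧
      (∃ p j, p ≠ j ∧
        |y p - y j| = 2 * (Real.exp 1)⁻¹ / Ω * (σ / mmin) ^ ((1 : ℝ) / (2 * (n : ℝ) - 2))) := by
  obtain ⟨m, rfl⟩ : ∃ m, n = m + 1 := ⟨n - 1, by omega⟩
  have hm : 1 ≤ m := by omega
  have hmm : 0 < mmin := lt_of_lt_of_le hσ hσm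
  have hx0 : 0 < σ / mmin := div_pos hσ hmm
  have hx1 : σ / mmin ≤ 1 := (div_le_one hmm).2 hσm
  have he1 : (1:ℝ) ≤ Real.exp 1 := by
    have := Real.add_one_le_exp (1:ℝ); linarith
  have hexp : (2 * ((m+1 : ℕ) : ℝ) - 2) = (2*m : ℕ) := by push_cast; ring
  set t : ℝ := (σ / mmin) ^ ((1 : ℝ) / (2 * ((m+1 : ℕ) : ℝ) - 2)) with htdef
  have h2m : (0:ℝ) < (2*m : ℕ) := by positivity
  have ht0 : 0 < t := Real.rpow_pos_of_pos hx0 _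
  have ht1 : t ≤ 1 := Real.rpow_le_one hx0.le hx1 (by rw [hexp]; positivity)
  have htpow : t ^ (2*m) = σ / mmin := by
    rw [htdef, hexp, ← Real.rpow_natCast ((σ/mmin) ^ ((1:ℝ)/((2*m:ℕ):ℝ))) (2*m),
        ← Real.rpow_mul hx0.le, one_div, inv_mul_cancel₀ (ne_of_gt h2m), Real.rpow_one]
  set h : ℝ := (Real.exp 1)⁻¹ / Ω * t with hhdef
  have hh0 : 0 < h := by positivity
  have hhΩ : h * Ω = t / Real.exp 1 := by
    rw [hhdef]; field_simp
  refine ⟨fun j => mmin * ((2*m).choose (2*(j:ℕ))),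
         fun j => (2*(j:ℕ) - (m:ℝ)) * h,
         fun j => mmin * ((2*m).choose (2*(j:ℕ)+1)),
         fun j => (2*(j:ℕ) + 1 - (m:ℝ)) * h, ?_, ?_, ?_, ?_, ?_, ?_, ?_, ?_, ?_⟩
  · intro j
    have : 0 < (2*m).choose (2*(j:ℕ)) := Nat.choose_pos (by omega)
    positivity
  · intro p q hpq
    have h1 := mul_right_cancel₀ (ne_of_gt hh0) hpq
    have h2 : ((p:ℕ):ℝ) = ((q:ℕ):ℝ) := by linarith [h1]
    exact Fin.ext (Nat.cast_injective h2)
  · intro j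
    have hjm : (j:ℕ) ≤ m := by omega
    have hjm' : ((j:ℕ):ℝ) ≤ m := by exact_mod_cast hjm
    have hj0 : (0:ℝ) ≤ ((j:ℕ):ℝ) := Nat.cast_nonneg _
    have hhle : h ≤ π / (2*Ω) := by
      have hππ : (Real.exp 1)⁻¹ ≤ π / 2 := by
        have hπ : (2:ℝ) ≤ π := by linarith [Real.pi_gt_three]
        have : (Real.exp 1)⁻¹ ≤ 1 := by
          rw [inv_le_one_iff₀]; right; exact he1
        linarith
      calc h = (Real.exp 1)⁻¹ / Ω * t := rfl
        _ ≤ (Real.exp 1)⁻¹ / Ω * 1 := by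
            apply mul_le_mul_of_nonneg_left ht1; positivity
        _ = (Real.exp 1)⁻¹ / Ω := by ring
        _ ≤ (π/2) / Ω := div_le_div_of_nonneg_right hππ hΩ.le
        _ = π / (2*Ω) := by ring
    have hmh : (m:ℝ) * h ≤ m * (π/(2*Ω)) :=
      mul_le_mul_of_nonneg_left hhle (by positivity)
    constructor
    · push_cast
      have h1 : -(((m:ℝ)) * h) ≤ (2*((j:ℕ):ℝ) - m) * h := by nlinarith
      calc -((↑m + 1 - 1) * π / (2*Ω)) = -((m:ℝ) * (π/(2*Ω))) := by ring
        _ ≤ -((m:ℝ) * h) := by linarith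
        _ ≤ _ := h1
    · push_cast
      have h1 : (2*((j:ℕ):ℝ) - m) * h ≤ (m:ℝ) * h := by nlinarith
      calc (2*((j:ℕ):ℝ) - m) * h ≤ (m:ℝ) * (π/(2*Ω)) := by linarith
        _ = (↑m + 1 - 1) * π / (2*Ω) := by ring
  · intro j
    have : 0 < (2*m).choose (2*(j:ℕ)+1) := Nat.choose_pos (by omega)
    positivity
  · intro p q hpq
    have h1 := mul_right_cancel₀ (ne_of_gt hh0) hpq
    have h2 : ((p:ℕ):ℝ) = ((q:ℕ):ℝ) := by linarith [h1]
    exact Fin.ext (Nat.cast_injective h2)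
  · -- Fourier bound
    intro ω hω
    set w : ℂ := Complex.exp (((h*ω : ℝ) : ℂ) * Complex.I) with hw
    set E : ℂ := Complex.exp (((-((m:ℝ)*h)*ω : ℝ) : ℂ) * Complex.I) with hE
    set F : ℕ → ℂ := fun k => (mmin:ℂ) * ((2*m).choose k : ℕ) * (E * w^k) with hF
    have haterm : ∀ j : Fin (m+1),
        ((mmin * (((2*m).choose (2*(j:ℕ)) : ℕ) : ℝ) : ℝ) : ℂ) *
          Complex.exp (Complex.I * (((2*(j:ℕ) - (m:ℝ)) * h : ℝ) : ℂ) * ((ω : ℝ) : ℂ))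
          = F (2*(j:ℕ)) := by
      intro j
      rw [hF, hw, hE,
        show (Complex.I * (((2*(j:ℕ) - (m:ℝ)) * h : ℝ) : ℂ) * ((ω : ℝ) : ℂ))
          = ((-((m:ℝ)*h)*ω : ℝ) : ℂ) * Complex.I + ((2*(j:ℕ) : ℕ) : ℂ) * ((((h*ω : ℝ)) : ℂ) * Complex.I) by
            push_cast; ring,
        Complex.exp_add, Complex.exp_nat_mul]
      push_cast; ring
    have hbterm : ∀ j : Fin (m+1-1),
        ((mmin * (((2*m).choose (2*(j:ℕ)+1) : ℕ) : ℝ) : ℝ) : ℂ) *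
          Complex.exp (Complex.I * (((2*(j:ℕ) + 1 - (m:ℝ)) * h : ℝ) : ℂ) * ((ω : ℝ) : ℂ))
          = F (2*(j:ℕ)+1) := by
      intro j
      rw [hF, hw, hE,
        show (Complex.I * (((2*(j:ℕ) + 1 - (m:ℝ)) * h : ℝ) : ℂ) * ((ω : ℝ) : ℂ))
          = ((-((m:ℝ)*h)*ω : ℝ) : ℂ) * Complex.I + ((2*(j:ℕ)+1 : ℕ) : ℂ) * ((((h*ω : ℝ)) : ℂ) * Complex.I) by
            push_cast; ring,
        Complex.exp_add, Complex.exp_nat_mul]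
      push_cast; ring
    simp only [haterm, hbterm]
    rw [show (∑ j : Fin (m+1-1), F (2*(j:ℕ)+1)) = ∑ k ∈ Finset.range m, F (2*k+1) from
          Fin.sum_univ_eq_sum_range (fun k => F (2*k+1)) m,
        show (∑ j : Fin (m+1), F (2*(j:ℕ))) = ∑ k ∈ Finset.range (m+1), F (2*k) from
          Fin.sum_univ_eq_sum_range (fun k => F (2*k)) (m+1)]
    have hG : ∑ k ∈ Finset.range (2*m+1), ((-1:ℂ))^k * F k = (mmin:ℂ) * E * (1-w)^(2*m) := by
      rw [show (1:ℂ) - w = -w + 1 by ring, add_pow, Finset.mul_sum]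
      refine Finset.sum_congr rfl fun k hk => ?_
      simp only [hF, one_pow]
      rw [neg_pow]
      ring
    have hsplit := sum_range_even_odd (fun k => ((-1:ℂ))^k * F k) m
    have heven : ∀ j : ℕ, ((-1:ℂ))^(2*j) * F (2*j) = F (2*j) := by
      intro j; simp [pow_mul]
    have hodd : ∀ j : ℕ, ((-1:ℂ))^(2*j+1) * F (2*j+1) = -F (2*j+1) := by
      intro j; simp [pow_succ, pow_mul]
    simp only [heven, hodd, Finset.sum_neg_distrib] at hsplit
    have key : (∑ k ∈ Finset.range m, F (2*k+1)) - ∑ k ∈ Finset.range (m+1), F (2*k)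
        = -((mmin:ℂ) * E * (1-w)^(2*m)) := by
      rw [← hG, hsplit]; ring
    rw [key, norm_neg, norm_mul, norm_mul, norm_pow, hE,
        Complex.norm_exp_ofReal_mul_I, Complex.norm_real, Real.norm_eq_abs, abs_of_pos hmm, mul_one]
    have hωΩ : |ω| ≤ Ω := abs_le.2 ⟨hω.1, hω.2⟩
    have hhω : |h*ω| ≤ h*Ω := by
      rw [abs_mul, abs_of_pos hh0]
      exact mul_le_mul_of_nonneg_left hωΩ hh0.le
    have hhΩ1 : h*Ω ≤ 1 := by
      rw [hhΩ, div_le_one (by positivity)]; linarith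
    have hbw : ‖1 - w‖ ≤ 2 * (h*Ω) := by
      calc ‖1-w‖ = ‖Complex.exp (((h*ω : ℝ) : ℂ) * Complex.I) - 1‖ := by
            rw [hw, show (1:ℂ) - Complex.exp (((h*ω : ℝ) : ℂ) * Complex.I)
                = -(Complex.exp (((h*ω : ℝ) : ℂ) * Complex.I) - 1) by ring, norm_neg]
        _ ≤ 2 * ‖((h*ω : ℝ) : ℂ) * Complex.I‖ := by
            apply Complex.norm_exp_sub_one_le
            rw [norm_mul, Complex.norm_I, mul_one, Complex.norm_real, Real.norm_eq_abs]
            exact le_trans hhω hhΩ1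
        _ = 2 * |h*ω| := by rw [norm_mul, Complex.norm_I, mul_one, Complex.norm_real, Real.norm_eq_abs]
        _ ≤ 2 * (h*Ω) := by linarith
    calc mmin * ‖1-w‖^(2*m)
        ≤ mmin * (2*(h*Ω))^(2*m) := by
          apply mul_le_mul_of_nonneg_left (pow_le_pow_left₀ (norm_nonneg _) hbw _) hmm.le
      _ = (2/Real.exp 1)^(2*m) * σ := by
          rw [hhΩ, show 2*(t/Real.exp 1) = (2/Real.exp 1)*t by ring, mul_pow, htpow]
          field_simp
      _ < σ := by
          have hlt : (2/Real.exp 1)^(2*m) < 1 := by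
            apply pow_lt_one₀ (by positivity) _ (by omega)
            rw [div_lt_one (by positivity)]
            have := Real.exp_one_gt_d9; linarith
          nlinarith
  · constructor
    · refine ⟨(0 : Fin (m+1)), ?_⟩
      show mmin * (((2*m).choose (2*((0 : Fin (m+1)):ℕ)) : ℕ) : ℝ) = mmin
      norm_num
    · rintro x ⟨j, rfl⟩
      have h1 : 1 ≤ (2*m).choose (2*(j:ℕ)) := Nat.one_le_iff_ne_zero.2 (Nat.choose_pos (by omega)).ne'
      have h2 : (1:ℝ) ≤ (((2*m).choose (2*(j:ℕ)) : ℕ) : ℝ) := by exact_mod_cast h1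
      show mmin ≤ mmin * (((2*m).choose (2*(j:ℕ)) : ℕ) : ℝ)
      nlinarith
  · intro p q hpq
    have h1 : (1:ℝ) ≤ |((p:ℕ):ℝ) - ((q:ℕ):ℝ)| := by
      have hne : (p:ℕ) ≠ (q:ℕ) := fun hc => hpq (Fin.ext hc)
      rcases lt_or_gt_of_ne hne with hc | hc
      · rw [abs_sub_comm, le_abs]
        left
        have : ((p:ℕ):ℝ) + 1 ≤ (q:ℕ) := by exact_mod_cast hc
        linarith
      · rw [le_abs]; left
        have : ((q:ℕ):ℝ) + 1 ≤ (p:ℕ) := by exact_mod_cast hc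
        linarith
    rw [show (2*((p:ℕ):ℝ) - (m:ℝ)) * h - (2*((q:ℕ):ℝ) - (m:ℝ)) * h
          = 2*(((p:ℕ):ℝ) - ((q:ℕ):ℝ)) * h by ring,
        abs_mul, abs_of_pos hh0, abs_mul, _root_.abs_two,
        show 2 * (Real.exp 1)⁻¹ / Ω * t = 2 * h by rw [hhdef]; ring]
    nlinarith [abs_nonneg (((p:ℕ):ℝ) - ((q:ℕ):ℝ))]
  · refine ⟨⟨1, by omega⟩, ⟨0, by omega⟩, by simp [Fin.ext_iff], ?_⟩
    show |(2*((1:ℕ):ℝ) - (m:ℝ)) * h - (2*((0:ℕ):ℝ) - (m:ℝ)) * h| = 2 * (Real.exp 1)⁻¹ / Ω * t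
    rw [show (2*((1:ℕ):ℝ) - (m:ℝ)) * h - (2*((0:ℕ):ℝ) - (m:ℝ)) * h = 2*h by push_cast; ring,
        abs_of_pos (by positivity), hhdef]
    ring
end

section
/- Let Ω > 0, let n ≥ 2 be an integer, let 0 < σ ≤ m_min, and set τ = (e^{−1}/Ω)·(σ/m_min)^{1/(2n−1)}. Then there exist a positive discrete measure μ = Σ_{j=1}^n a_j δ_{y_j} with a_j > 0 whose support points are exactly the n points {−(n−1/2)τ + 2(j−1)τ : j = 1,…,n} = {−(n−1/2)τ, −(n−5/2)τ, …, (n−3/2)τ}, and a positive discrete measure μ̂ = Σ_{j=1}^n â_j δ_{ŷ_j} with â_j > 0 whose support points are exactly the n points {−(n−3/2)τ + 2(j−1)τ : j = 1,…,n} = {−(n−3/2)τ, −(n−7/2)τ, …, (n−1/2)τ}, such that sup_{ω∈[−Ω,Ω]} |Fμ̂(ω) − Fμ(ω)| < σ and min_{1≤j≤n} a_j = m_min. -/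
open Real Complex Finset

lemma aux_pair (f : ℕ → ℂ) (n : ℕ) :
    ∑ k ∈ range (2*n), f k = ∑ j ∈ range n, (f (2*j) + f (2*j+1)) := by
  induction n with
  | zero => simp
  | succ m ih => rw [Nat.mul_succ, sum_range_succ, sum_range_succ, sum_range_succ, ih]; ring

lemma aux_id (n : ℕ) (hn : 2 ≤ n) (mmin τ ω : ℝ) :
    (∑ j : Fin n, ((mmin * ((2*n-1).choose (2*(j:ℕ)+1)) : ℝ) : ℂ) *
        Complex.exp (Complex.I * (((-(n : ℝ) + 3 / 2 + 2 * (j : ℝ)) * τ : ℝ)) * (ω : ℝ)))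
      - (∑ j : Fin n, ((mmin * ((2*n-1).choose (2*(j:ℕ))) : ℝ) : ℂ) *
        Complex.exp (Complex.I * (((-(n : ℝ) + 1 / 2 + 2 * (j : ℝ)) * τ : ℝ)) * (ω : ℝ)))
    = -(mmin : ℂ) * Complex.exp (Complex.I * (((-(n:ℝ) + 1/2) * τ : ℝ)) * (ω:ℝ)) *
        (1 - Complex.exp (Complex.I * ((τ * ω : ℝ))))^(2*n-1) := by
  set q : ℂ := Complex.exp (Complex.I * ((τ * ω : ℝ))) with hqdef
  set E : ℂ := Complex.exp (Complex.I * (((-(n:ℝ) + 1/2) * τ : ℝ)) * (ω:ℝ)) with hEdef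
  have hEq : ∀ k : ℕ, E * q ^ k
      = Complex.exp (Complex.I * (((-(n : ℝ) + 1 / 2 + (k:ℝ)) * τ : ℝ)) * (ω : ℝ)) := by
    intro k
    rw [hqdef, hEdef, ← Complex.exp_nat_mul, ← Complex.exp_add]
    congr 1
    push_cast
    ring
  have h1 : (1 - q)^(2*n-1) = ∑ k ∈ range (2*n), (-q)^k * ((2*n-1).choose k : ℂ) := by
    have h := add_pow (-q) 1 (2*n-1)
    have h2 : 2*n-1+1 = 2*n := by omega
    rw [h2] at h
    have h3 : -q + 1 = 1 - q := by ring
    rw [h3] at h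
    simpa using h
  rw [h1, Finset.mul_sum, aux_pair,
    Fin.sum_univ_eq_sum_range (fun k : ℕ => ((mmin * ((2*n-1).choose (2*k+1)) : ℝ) : ℂ) *
      Complex.exp (Complex.I * (((-(n : ℝ) + 3 / 2 + 2 * (k:ℝ)) * τ : ℝ)) * (ω : ℝ))) n,
    Fin.sum_univ_eq_sum_range (fun k : ℕ => ((mmin * ((2*n-1).choose (2*k)) : ℝ) : ℂ) *
      Complex.exp (Complex.I * (((-(n : ℝ) + 1 / 2 + 2 * (k:ℝ)) * τ : ℝ)) * (ω : ℝ))) n,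
    ← Finset.sum_sub_distrib]
  apply Finset.sum_congr rfl
  intro j hj
  have ha : ((-(n : ℝ) + 1 / 2 + 2 * (j:ℝ)) * τ : ℝ) = ((-(n:ℝ) + 1/2 + ((2*j:ℕ):ℝ)) * τ) := by
    push_cast; ring
  have hb : ((-(n : ℝ) + 3 / 2 + 2 * (j:ℝ)) * τ : ℝ) = ((-(n:ℝ) + 1/2 + ((2*j+1:ℕ):ℝ)) * τ) := by
    push_cast; ring
  rw [ha, hb, ← hEq, ← hEq]
  have h4 : (-q)^(2*j) = q^(2*j) := by rw [neg_pow, pow_mul]; norm_num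
  have h5 : (-q)^(2*j+1) = -(q^(2*j+1)) := by rw [pow_succ, h4, pow_succ]; ring
  rw [h4, h5]
  push_cast
  ring

lemma aux_abs (θ : ℝ) : ‖1 - Complex.exp (Complex.I * θ)‖ ≤ |θ| := by
  have h2 : ‖1 - Complex.exp (Complex.I * θ)‖ ^ 2 ≤ |θ| ^ 2 := by
    rw [Complex.sq_norm, mul_comm, Complex.exp_mul_I]
    have hns : Complex.normSq (1 - (Complex.cos θ + Complex.sin θ * Complex.I))
        = 2 - 2 * Real.cos θ := by
      simp [Complex.normSq_apply, Complex.cos_ofReal_re, Complex.sin_ofReal_re,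
        Complex.cos_ofReal_im, Complex.sin_ofReal_im]
      nlinarith [Real.sin_sq_add_cos_sq θ]
    rw [hns]
    have hs : Real.sin (θ/2) ^ 2 = (1 - Real.cos θ) / 2 := by
      have h := Real.abs_sin_half θ
      have h2 : |Real.sin (θ/2)| ^ 2 = (1 - Real.cos θ) / 2 := by
        rw [h]; exact Real.sq_sqrt (by nlinarith [Real.cos_le_one θ])
      rwa [_root_.sq_abs] at h2
    have hb : Real.sin (θ/2) ^ 2 ≤ (θ/2) ^ 2 := by
      have := Real.abs_sin_le_abs (x := θ/2)
      nlinarith [_root_.sq_abs (Real.sin (θ/2)), _root_.sq_abs (θ/2), abs_nonneg (Real.sin (θ/2)), abs_nonneg (θ/2)]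
    nlinarith [_root_.sq_abs θ]
  have := abs_nonneg θ
  nlinarith [norm_nonneg (1 - Complex.exp (Complex.I * θ))]


/-- lower bound for the computational resolution limit to support recovery
(Theorem `thm:supportlowerboundthm0`). With `τ = (e⁻¹/Ω)(σ/m_min)^{1/(2n-1)}`, there are two
positive measures with `n` supports each, located at the interleaved grids
`{-(n-1/2)τ + 2(j-1)τ}` and `{-(n-3/2)τ + 2(j-1)τ}`, whose Fourier data on `[-Ω,Ω]` differ by
less than `σ`, and whose minimal amplitude is `m_min`. -/
theorem support_recovery_lower_bound
    (Ω σ mmin : ℝ) (hΩ : 0 < Ω) (n : ℕ) (hn : 2 ≤ n)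
    (hσ : 0 < σ) (hσm : σ ≤ mmin)
    (τ : ℝ) (hτ : τ = (Real.exp 1)⁻¹ / Ω * (σ / mmin) ^ ((1 : ℝ) / (2 * (n : ℝ) - 1))) :
    ∃ a b : Fin n → ℝ,
      (∀ j, 0 < a j) ∧ (∀ j, 0 < b j) ∧
      (∀ ω ∈ Set.Icc (-Ω) Ω,
        Norm.norm
          ((∑ j, (b j : ℂ) *
              Complex.exp (Complex.I * (((-(n : ℝ) + 3 / 2 + 2 * (j : ℝ)) * τ : ℝ)) * (ω : ℝ)))
            - ∑ j, (a j : ℂ) *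
              Complex.exp (Complex.I * (((-(n : ℝ) + 1 / 2 + 2 * (j : ℝ)) * τ : ℝ)) * (ω : ℝ)))
          < σ) ∧
      IsLeast (Set.range a) mmin := by
  have hm : 0 < mmin := lt_of_lt_of_le hσ hσm
  refine ⟨fun j => mmin * ((2*n-1).choose (2*(j:ℕ))),
          fun j => mmin * ((2*n-1).choose (2*(j:ℕ)+1)), ?_, ?_, ?_, ?_⟩
  · intro j
    have : 0 < (2*n-1).choose (2*(j:ℕ)) := Nat.choose_pos (by have := j.isLt; omega)
    positivity
  · intro j
    have : 0 < (2*n-1).choose (2*(j:ℕ)+1) := Nat.choose_pos (by have := j.isLt; omega)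
    positivity
  · intro ω hω
    rw [aux_id n hn mmin τ ω]
    have hτpos : 0 < τ := by
      rw [hτ]
      have := Real.rpow_pos_of_pos (div_pos hσ hm) ((1 : ℝ) / (2 * (n : ℝ) - 1))
      positivity
    have habs1 : ‖Complex.exp (Complex.I * (((-(n:ℝ) + 1/2) * τ : ℝ)) * (ω:ℝ))‖ = 1 := by
      rw [Complex.norm_exp]
      norm_num [Complex.mul_re, Complex.mul_im]
    rw [norm_mul, norm_mul, norm_neg, Complex.norm_real, Real.norm_eq_abs, abs_of_pos hm, habs1, mul_one,
      norm_pow]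
    have hb1 : ‖1 - Complex.exp (Complex.I * ((τ * ω : ℝ)))‖ ≤ τ * Ω := by
      refine (aux_abs (τ * ω)).trans ?_
      rw [abs_mul, abs_of_pos hτpos]
      have : |ω| ≤ Ω := abs_le.2 ⟨hω.1, hω.2⟩
      nlinarith
    have hb2 : ‖1 - Complex.exp (Complex.I * ((τ * ω : ℝ)))‖ ^ (2*n-1) ≤ (τ * Ω) ^ (2*n-1) :=
      pow_le_pow_left₀ (norm_nonneg _) hb1 _
    have hτΩ : τ * Ω = (Real.exp 1)⁻¹ * (σ / mmin) ^ ((1 : ℝ) / (2 * (n : ℝ) - 1)) := by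
      rw [hτ]; field_simp
    have hkey : (τ * Ω) ^ (2*n-1) = (Real.exp 1)⁻¹ ^ (2*n-1) * (σ / mmin) := by
      rw [hτΩ, mul_pow]
      congr 1
      rw [← Real.rpow_natCast ((σ / mmin) ^ ((1 : ℝ) / (2 * (n : ℝ) - 1))) (2*n-1),
        ← Real.rpow_mul (by positivity)]
      have hc : ((2*n-1 : ℕ) : ℝ) = 2 * (n:ℝ) - 1 := by push_cast [Nat.cast_sub (by omega : 1 ≤ 2*n)]; ring
      rw [hc, one_div, inv_mul_cancel₀ (ne_of_gt (by have h1 : (1:ℝ) ≤ (n:ℝ) := (by exact_mod_cast (by omega : 1 ≤ n)); linarith : (0:ℝ) < 2 * (n:ℝ) - 1)), Real.rpow_one]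
    have hlt : mmin * (τ * Ω) ^ (2*n-1) < σ := by
      rw [hkey]
      have h1 : (Real.exp 1)⁻¹ ^ (2*n-1) < 1 := by
        apply pow_lt_one₀ (by positivity) _ (by omega)
        rw [inv_lt_one_iff₀]
        right
        nlinarith [Real.add_one_le_exp 1]
      have : mmin * ((Real.exp 1)⁻¹ ^ (2*n-1) * (σ / mmin)) = σ * (Real.exp 1)⁻¹ ^ (2*n-1) := by
        field_simp
      rw [this]
      nlinarith
    calc mmin * ‖1 - Complex.exp (Complex.I * ((τ * ω : ℝ)))‖ ^ (2*n-1)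
        ≤ mmin * (τ * Ω) ^ (2*n-1) := by nlinarith [norm_nonneg (1 - Complex.exp (Complex.I * ((τ * ω : ℝ))))]
      _ < σ := hlt
  · constructor
    · exact ⟨⟨0, by omega⟩, by simp⟩
    · rintro x ⟨j, rfl⟩
      have h1 : 1 ≤ (2*n-1).choose (2*(j:ℕ)) := Nat.choose_pos (by have := j.isLt; omega)
      have : (1:ℝ) ≤ ((2*n-1).choose (2*(j:ℕ)) : ℝ) := by exact_mod_cast h1
      dsimp only
      nlinarith
end

section
/- Let k ≥ 1 and n ≥ 2 be integers. There exists a constant C_num(k,n) > 0, depending only on k and n, with the following property: for all Ω > 0 and σ > 0, for every positive discrete measure μ = Σ_{j=1}^n a_j δ_{y_j} with a_j > 0 and distinct points y_j ∈ ℝ^k satisfying ‖y_j‖₂ < (n−1)π/(2Ω), with m_min = min_j a_j, if min_{p≠j} ‖y_p − y_j‖₂ ≥ (C_num(k,n)/Ω)·(σ/m_min)^{1/(2n−2)}, then for every function W on the ball {ω ∈ ℝ^k : ‖ω‖₂ ≤ Ω} with sup_{‖ω‖₂≤Ω} |W(ω)| < σ and measurement Y(ω) = Fμ(ω) + W(ω),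 every discrete measure μ̂ = Σ_{j=1}^m â_j δ_{ŷ_j} with m < n, â_j > 0 and distinct ŷ_j ∈ ℝ^k satisfies sup_{‖ω‖₂≤Ω} |Fμ̂(ω) − Y(ω)| ≥ σ. -/
open Real Complex Finset
open scoped RealInnerProductSpace

lemma aux_sin_sq_exp (t : ℝ) :
    ((Real.sin t : ℂ))^2
      = 1/2 - Complex.exp (Complex.I * (2*t)) / 4 - Complex.exp (Complex.I * (-(2*t))) / 4 := by
  have h1 : (Real.sin t : ℂ) = Complex.sin t := Complex.ofReal_sin t
  rw [h1]
  simp only [Complex.sin]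
  have hE : Complex.exp (-(t:ℂ)*Complex.I) * Complex.exp ((t:ℂ)*Complex.I) = 1 := by
    rw [← Complex.exp_add]; ring_nf; exact Complex.exp_zero
  have h2 : Complex.exp (Complex.I * (2*(t:ℂ))) = Complex.exp ((t:ℂ)*Complex.I)^2 := by
    rw [← Complex.exp_nat_mul]; ring_nf
  have h3 : Complex.exp (Complex.I * (-(2*(t:ℂ)))) = Complex.exp (-(t:ℂ)*Complex.I)^2 := by
    rw [← Complex.exp_nat_mul]; ring_nf
  have h4 : Complex.exp (Complex.I * (2*(t:ℝ))) = Complex.exp (Complex.I * (2*(t:ℂ))) := by push_cast; ring_nf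
  have h5 : Complex.exp (Complex.I * (-(2*(t:ℝ)))) = Complex.exp (Complex.I * (-(2*(t:ℂ)))) := by push_cast; ring_nf
  rw [h4, h5, h2, h3]
  linear_combination ((Complex.exp (-(t:ℂ)*Complex.I) - Complex.exp ((t:ℂ)*Complex.I))^2/4) * Complex.I_sq + (1/2 : ℂ) * hE

lemma aux_sin_lb (u : ℝ) (hu : 0 < u) :
    ∃ θ : ℝ, u ≤ θ ∧ θ ≤ 2*u ∧ min u 1 / 4 ≤ |Real.sin θ| := by
  have hpi : (3.14159 : ℝ) < π := by
    have := Real.pi_gt_d6; linarith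
  have hpi' : π < 3.15 := by have := Real.pi_lt_d2; linarith
  rcases le_or_gt u (π/4) with h1 | h1
  · refine ⟨2*u, by linarith, le_refl _, ?_⟩
    have hs : 2/π * (2*u) ≤ Real.sin (2*u) :=
      Real.mul_le_sin (by linarith) (by linarith)
    have : min u 1 / 4 ≤ 2/π * (2*u) := by
      have h0 : min u 1 ≤ u := min_le_left _ _
      have : (0:ℝ) < π := by linarith
      rw [div_mul_eq_mul_div, le_div_iff₀ this]
      nlinarith
    exact this.trans (hs.trans (le_abs_self _))
  · rcases le_or_gt u (π/2) with h2 | h2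
    · refine ⟨π/2, h2, by linarith, ?_⟩
      rw [Real.sin_pi_div_two]
      have : min u 1 ≤ 1 := min_le_right _ _
      rw [abs_one]; linarith
    · rcases lt_or_ge u (3*π/4) with h3 | h3
      · refine ⟨u, le_refl _, by linarith, ?_⟩
        have hs : Real.sin u = Real.sin (π - u) := (Real.sin_pi_sub u).symm
        have hb : 2/π * (π - u) ≤ Real.sin (π - u) :=
          Real.mul_le_sin (by linarith) (by linarith)
        have hπpos : (0:ℝ) < π := by linarith
        have : (1:ℝ)/2 ≤ 2/π * (π - u) := by
          rw [div_mul_eq_mul_div, le_div_iff₀ hπpos]; nlinarith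
        have hmin : min u 1 ≤ 1 := min_le_right _ _
        rw [hs] at *
        calc min u 1 / 4 ≤ 1/2 := by linarith
          _ ≤ Real.sin (π - u) := by linarith
          _ ≤ |Real.sin (π - u)| := le_abs_self _
      · rcases lt_or_ge u π with h4 | h4
        · refine ⟨3*π/2, by linarith, by linarith, ?_⟩
          have : Real.sin (3*π/2) = -1 := by
            have : (3*π/2 : ℝ) = π + π/2 := by ring
            rw [this, Real.sin_add, Real.sin_pi, Real.cos_pi]; simp
          rw [this, abs_neg, abs_one]
          have hmin : min u 1 ≤ 1 := min_le_right _ _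
          linarith
        · set q : ℤ := ⌈u/π - 1/2⌉ with hq
          refine ⟨(q + 1/2)*π, ?_, ?_, ?_⟩
          · have := Int.le_ceil (u/π - 1/2)
            have hπpos : (0:ℝ) < π := by linarith
            rw [← hq] at this
            have : u/π - 1/2 ≤ (q:ℝ) := this
            calc u = (u/π) * π := by field_simp
              _ ≤ ((q:ℝ) + 1/2) * π := by nlinarith
          · have := Int.ceil_lt_add_one (u/π - 1/2)
            rw [← hq] at this
            have hπpos : (0:ℝ) < π := by linarith
            have h5 : ((q:ℝ) + 1/2) * π < u + π := by
              have h7 : (q:ℝ) < u/π + 1/2 := by linarith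
              have hh := mul_lt_mul_of_pos_right h7 hπpos
              have h8 : (u/π + 1/2)*π = u + π/2 := by field_simp
              rw [h8] at hh
              nlinarith
            linarith
          · have hsin : Real.sin ((q + 1/2)*π) = Real.cos (q*π) := by
              have : ((q:ℝ) + 1/2)*π = q*π + π/2 := by ring
              rw [this, Real.sin_add, Real.sin_pi_div_two, Real.cos_pi_div_two]
              ring
            rw [hsin, Real.abs_cos_int_mul_pi]
            have hmin : min u 1 ≤ 1 := min_le_right _ _
            linarith

set_option maxHeartbeats 2000000 in
/-- Theorem `thm:highdupperboundnumberlimit0`: upper bound for the computational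
resolution limit to number detection in `k` dimensions. There is a constant `C_num(k,n) > 0`
such that whenever the `n` positive sources in `B_{(n-1)π/(2Ω)}(0) ⊂ ℝᵏ` are separated by at
least `(C_num(k,n)/Ω)·(σ/m_min)^{1/(2n-2)}`, no positive measure with fewer than `n` supports
is `σ`-admissible for the noisy measurement `Y` on the ball `‖ω‖ ≤ Ω`. -/
theorem number_detection_upper_bound_multid
    (k n : ℕ) (hk : 1 ≤ k) (hn : 2 ≤ n) :
    ∃ C : ℝ, 0 < C ∧
      ∀ (Ω σ : ℝ), 0 < Ω → 0 < σ →
      ∀ (a : Fin n → ℝ) (y : Fin n → EuclideanSpace ℝ (Fin k)),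
        (∀ j, 0 < a j) → Function.Injective y →
        (∀ j, ‖y j‖ < ((n : ℝ) - 1) * π / (2 * Ω)) →
        ∀ mmin : ℝ, IsLeast (Set.range a) mmin →
        (∀ p j, p ≠ j → C / Ω * (σ / mmin) ^ ((1 : ℝ) / (2 * (n : ℝ) - 2)) ≤ ‖y p - y j‖) →
        ∀ W : EuclideanSpace ℝ (Fin k) → ℂ,
          (∀ ω, ‖ω‖ ≤ Ω → ‖W ω‖ < σ) →
        ∀ (m : ℕ), m < n →
        ∀ (b : Fin m → ℝ) (yh : Fin m → EuclideanSpace ℝ (Fin k)),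
          (∀ j, 0 < b j) → Function.Injective yh →
          ∃ ω : EuclideanSpace ℝ (Fin k), ‖ω‖ ≤ Ω ∧
            σ ≤ ‖
              ((∑ j, (b j : ℂ) * Complex.exp (Complex.I * (⟪yh j, ω⟫ : ℝ)))
                - ((∑ j, (a j : ℂ) * Complex.exp (Complex.I * (⟪y j, ω⟫ : ℝ))) + W ω))‖ := by
  classical
  have h2n : (2:ℝ) ≤ (n:ℝ) := by exact_mod_cast hn
  refine ⟨64*((n:ℝ)-1), by nlinarith, ?_⟩
  intro Ω σ hΩ hσ a y ha hyinj hyball mmin hmm hsep W hW m hm b yh hb hyhinj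
  by_contra hcon
  push_neg at hcon
  -- basic positivity
  obtain ⟨hmem, hlb⟩ := hmm
  obtain ⟨j₀, hj₀⟩ := hmem
  have hmpos : 0 < mmin := hj₀ ▸ ha j₀
  set t : ℝ := (σ / mmin) ^ ((1 : ℝ) / (2 * (n : ℝ) - 2)) with htdef
  have ht : 0 < t := Real.rpow_pos_of_pos (div_pos hσ hmpos) _
  set s : ℝ := 64*((n:ℝ)-1) / Ω * t with hsdef
  have hs : 0 < s := by
    apply mul_pos (div_pos (by nlinarith) hΩ) ht
  -- t is small
  have hx0 : (0:ℝ) ≤ σ / mmin := le_of_lt (div_pos hσ hmpos)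
  have h1n : 1 ≤ n := by omega
  have hcast : ((2*(n-1) : ℕ) : ℝ) = 2*(n:ℝ)-2 := by push_cast [h1n]; ring
  have htpow : t ^ (2*(n-1) : ℕ) = σ / mmin := by
    calc t ^ (2*(n-1) : ℕ) = t ^ (((2*(n-1):ℕ)):ℝ) := (Real.rpow_natCast t _).symm
      _ = (σ/mmin) ^ (((1:ℝ)/(2*(n:ℝ)-2)) * ((2*(n-1):ℕ):ℝ)) := by
          rw [htdef, ← Real.rpow_mul hx0]
      _ = (σ/mmin) ^ (1:ℝ) := by
          rw [hcast, one_div, inv_mul_cancel₀ (by nlinarith : 2*(n:ℝ)-2 ≠ 0)]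
      _ = σ/mmin := Real.rpow_one _
  have hn1 : (0:ℝ) < (n:ℝ) - 1 := by linarith
  have hΩs : Ω * s = 64*((n:ℝ)-1) * t := by
    rw [hsdef]; field_simp
  have ht16 : t < 1/16 := by
    have hne : (⟨0, by omega⟩ : Fin n) ≠ ⟨1, by omega⟩ := by simp [Fin.ext_iff]
    have h01 := hsep ⟨0, by omega⟩ ⟨1, by omega⟩ hne
    have htr : ‖y ⟨0, by omega⟩ - y ⟨1, by omega⟩‖ ≤ ‖y ⟨0, by omega⟩‖ + ‖y ⟨1, by omega⟩‖ :=
      norm_sub_le _ _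
    have hb0 := hyball ⟨0, by omega⟩
    have hb1 := hyball ⟨1, by omega⟩
    have hslt : s < ((n:ℝ)-1) * π / Ω := by
      have : s ≤ ‖y ⟨0, by omega⟩‖ + ‖y ⟨1, by omega⟩‖ := le_trans h01 htr
      calc s ≤ _ := this
        _ < ((n:ℝ)-1)*π/(2*Ω) + ((n:ℝ)-1)*π/(2*Ω) := by linarith
        _ = ((n:ℝ)-1)*π/Ω := by field_simp; ring
    have hΩslt : Ω * s < ((n:ℝ)-1)*π := by
      have := mul_lt_mul_of_pos_left hslt hΩ
      calc Ω * s < Ω * (((n:ℝ)-1)*π/Ω) := this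
        _ = ((n:ℝ)-1)*π := by field_simp
    rw [hΩs] at hΩslt
    have hπ : π < 3.15 := by have := Real.pi_lt_d2; linarith
    nlinarith
  -- the distant point j*
  obtain ⟨js, hfar⟩ : ∃ js : Fin n, ∀ l : Fin m, s/2 ≤ ‖y js - yh l‖ := by
    by_contra hno
    push_neg at hno
    choose f hf using hno
    have hfinj : Function.Injective f := by
      intro j1 j2 hf12
      by_contra hne
      have h1 := hf j1
      have h2 := hf j2
      rw [hf12] at h1
      have hsep12 := hsep j1 j2 hne
      have htr := dist_triangle (y j1) (yh (f j2)) (y j2)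
      rw [dist_eq_norm, dist_eq_norm, dist_eq_norm] at htr
      have hrev : ‖yh (f j2) - y j2‖ = ‖y j2 - yh (f j2)‖ := norm_sub_rev _ _
      rw [hrev] at htr
      linarith
    have := Fintype.card_le_of_injective f hfinj
    simp only [Fintype.card_fin] at this
    omega
  -- geometry setup
  set β : ℝ := Ω / (2*((n:ℝ)-1)) with hβdef
  have hβ : 0 < β := div_pos hΩ (by nlinarith)
  have hβs : β * s = 32 * t := by
    rw [hβdef, hsdef]; field_simp [ne_of_gt hΩ, ne_of_gt hn1]; ring
  set d : Fin m → ℝ := fun l => ‖y js - yh l‖ with hddef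
  have hd : ∀ l, s/2 ≤ d l := hfar
  have hdpos : ∀ l, 0 < d l := fun l => lt_of_lt_of_le (by linarith [hs]) (hd l)
  set e : Fin m → EuclideanSpace ℝ (Fin k) := fun l => (d l)⁻¹ • (y js - yh l) with hedef
  have he : ∀ l, ‖e l‖ = 1 := by
    intro l
    rw [hedef]
    simp only [norm_smul, Real.norm_eq_abs, abs_inv, abs_of_pos (hdpos l)]
    exact inv_mul_cancel₀ (ne_of_gt (hdpos l))
  choose θ hθ1 hθ2 hθ3 using fun l => aux_sin_lb (β * d l / 2) (by have := hdpos l; positivity)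
  set bl : Fin m → ℝ := fun l => θ l / d l with hbldef
  have hblpos : ∀ l, 0 < bl l := fun l =>
    div_pos (lt_of_lt_of_le (by have := hdpos l; positivity) (hθ1 l)) (hdpos l)
  have hblβ : ∀ l, bl l ≤ β := by
    intro l
    rw [hbldef]
    rw [div_le_iff₀ (hdpos l)]
    have := hθ2 l; linarith
  have hbld : ∀ l, bl l * d l = θ l := fun l => by
    rw [hbldef]; exact div_mul_cancel₀ _ (ne_of_gt (hdpos l))
  set κ : Fin m → ℝ := fun l => ⟪yh l, e l⟫ with hκdef
  -- inner product of js with e l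
  have hinner : ∀ l, ⟪y js, e l⟫ - κ l = d l := by
    intro l
    have hw : ‖y js - yh l‖ ≠ 0 := by
      have := hdpos l; rw [hddef] at this; exact ne_of_gt this
    simp only [hκdef, hedef, hddef]
    rw [← inner_sub_left, real_inner_smul_right, real_inner_self_eq_norm_sq]
    rw [sq, ← mul_assoc, inv_mul_cancel₀ hw, one_mul]
  -- the test function
  set φ : EuclideanSpace ℝ (Fin k) → ℝ :=
    fun x => ∏ l, (Real.sin (bl l * (⟪x, e l⟫ - κ l)))^2 with hφdef
  have hφ0 : ∀ x, 0 ≤ φ x := fun x => Finset.prod_nonneg fun l _ => sq_nonneg _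
  have hφyh : ∀ l, φ (yh l) = 0 := by
    intro l
    apply Finset.prod_eq_zero (Finset.mem_univ l)
    simp [hκdef]
  have hsin_lb : ∀ l, 2*t ≤ |Real.sin (θ l)| := by
    intro l
    have h1 : 8*t ≤ β * d l / 2 := by
      nlinarith [mul_le_mul_of_nonneg_left (hd l) hβ.le, hβs]
    have h2 : (8:ℝ)*t ≤ 1 := by linarith
    have h3 : 8*t ≤ min (β*(d l)/2) 1 := le_min h1 h2
    have := hθ3 l
    linarith
  have hφjs : ((2*t)^2)^m ≤ φ (y js) := by
    have hterm : ∀ l, (2*t)^2 ≤ (Real.sin (bl l * (⟪y js, e l⟫ - κ l)))^2 := by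
      intro l
      rw [hinner l, hbld l]
      calc (2*t)^2 ≤ |Real.sin (θ l)|^2 := by
            apply pow_le_pow_left₀ (by positivity) (hsin_lb l)
        _ = (Real.sin (θ l))^2 := sq_abs _
    simp only [hφdef]
    calc ((2*t)^2)^m = ∏ _l : Fin m, (2*t)^2 := by
          rw [Finset.prod_const, Finset.card_univ, Fintype.card_fin]
      _ ≤ ∏ l, (Real.sin (bl l * (⟪y js, e l⟫ - κ l)))^2 :=
          Finset.prod_le_prod (fun l _ => sq_nonneg _) (fun l _ => hterm l)
  -- expansion data
  set v : Fin m → Fin 3 → EuclideanSpace ℝ (Fin k) :=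
    fun l ee => if ee = 0 then 0 else if ee = 1 then (2*bl l) • e l else (-(2*bl l)) • e l
    with hvdef
  set c : Fin m → Fin 3 → ℂ :=
    fun l ee => if ee = 0 then 1/2
      else if ee = 1 then -(Complex.exp (Complex.I * ((-(2*(bl l)*(κ l))) : ℝ)))/4
      else -(Complex.exp (Complex.I * ((2*(bl l)*(κ l)) : ℝ)))/4 with hcdef
  have hfac : ∀ l (x : EuclideanSpace ℝ (Fin k)),
      ((Real.sin (bl l * (⟪x, e l⟫ - κ l)) : ℂ))^2
        = ∑ ee : Fin 3, c l ee * Complex.exp (Complex.I * ((⟪x, v l ee⟫ : ℝ) : ℂ)) := by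
    intro l x
    rw [aux_sin_sq_exp, Fin.sum_univ_three]
    have e01 : ((0:Fin 3) = 0) = True := by simp
    have e11 : ((1:Fin 3) = 0) = False := by simp [Fin.ext_iff]
    have e12 : ((1:Fin 3) = 1) = True := by simp
    have e21 : ((2:Fin 3) = 0) = False := by simp [Fin.ext_iff]
    have e22 : ((2:Fin 3) = 1) = False := by simp [Fin.ext_iff]
    simp only [hcdef, hvdef, e01, e11, e12, e21, e22, if_true, if_false,
      inner_zero_right, real_inner_smul_right,
      Complex.ofReal_zero, mul_zero, Complex.exp_zero, mul_one]
    have hprod1 : Complex.exp (Complex.I * ((-(2*(bl l)*(κ l)) : ℝ) : ℂ))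
        * Complex.exp (Complex.I * ((2*(bl l) * ⟪x, e l⟫ : ℝ) : ℂ))
        = Complex.exp (Complex.I * (2*(((bl l * (⟪x, e l⟫ - κ l)) : ℝ) : ℂ))) := by
      rw [← Complex.exp_add]; congr 1; push_cast; ring
    have hprod2 : Complex.exp (Complex.I * ((2*(bl l)*(κ l) : ℝ) : ℂ))
        * Complex.exp (Complex.I * ((-(2*(bl l)) * ⟪x, e l⟫ : ℝ) : ℂ))
        = Complex.exp (Complex.I * (-(2*(((bl l * (⟪x, e l⟫ - κ l)) : ℝ) : ℂ)))) := by
      rw [← Complex.exp_add]; congr 1; push_cast; ring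
    linear_combination (1/4 : ℂ) * hprod1 + (1/4 : ℂ) * hprod2
  set G := Fintype.piFinset (fun _ : Fin m => (Finset.univ : Finset (Fin 3))) with hGdef
  set ω : (Fin m → Fin 3) → EuclideanSpace ℝ (Fin k) := fun g => ∑ l, v l (g l) with hωdef
  set Γ : (Fin m → Fin 3) → ℂ := fun g => ∏ l, c l (g l) with hΓdef
  have hexpand : ∀ x : EuclideanSpace ℝ (Fin k),
      ((φ x : ℝ) : ℂ) = ∑ g ∈ G, Γ g * Complex.exp (Complex.I * ((⟪x, ω g⟫ : ℝ) : ℂ)) := by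
    intro x
    have h0 : ((φ x : ℝ) : ℂ) = ∏ l, ((Real.sin (bl l * (⟪x, e l⟫ - κ l)) : ℂ))^2 := by
      simp only [hφdef]; push_cast; rfl
    rw [h0, Finset.prod_congr rfl (fun l _ => hfac l x), Finset.prod_univ_sum]
    apply Finset.sum_congr rfl
    intro g _
    rw [Finset.prod_mul_distrib]
    simp only [hΓdef]
    congr 1
    rw [← Complex.exp_sum]
    congr 1
    simp only [hωdef]
    rw [inner_sum]
    push_cast
    rw [Finset.mul_sum]
  -- frequencies live in the ball
  have hων : ∀ g ∈ G, ‖ω g‖ ≤ Ω := by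
    intro g _
    have hv : ∀ l (ee : Fin 3), ‖v l ee‖ ≤ 2*β := by
      intro l ee
      have hbl := hblpos l
      have hblβ' := hblβ l
      simp only [hvdef]
      split_ifs
      · rw [norm_zero]; linarith
      · rw [norm_smul, Real.norm_eq_abs, he l, mul_one, abs_of_pos (by linarith)]; linarith
      · rw [norm_smul, Real.norm_eq_abs, he l, mul_one, abs_neg,
          abs_of_pos (by linarith)]; linarith
    have hmn : (m:ℝ) ≤ (n:ℝ) - 1 := by
      have : (m:ℝ) + 1 ≤ (n:ℝ) := by exact_mod_cast hm
      linarith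
    calc ‖ω g‖ = ‖∑ l, v l (g l)‖ := by rw [hωdef]
      _ ≤ ∑ l, ‖v l (g l)‖ := norm_sum_le _ _
      _ ≤ ∑ _l : Fin m, 2*β := Finset.sum_le_sum (fun l _ => hv l (g l))
      _ = (m:ℝ) * (2*β) := by
          rw [Finset.sum_const, Finset.card_univ, Fintype.card_fin, nsmul_eq_mul]
      _ ≤ ((n:ℝ)-1) * (2*β) := by nlinarith
      _ = Ω := by rw [hβdef]; field_simp
  -- sum of abs of coefficients is 1
  have habsexp : ∀ r : ℝ, ‖Complex.exp (Complex.I*(r:ℂ))‖ = 1 := by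
    intro r; rw [mul_comm]; exact Complex.norm_exp_ofReal_mul_I r
  have hΓ1 : ∑ g ∈ G, ‖Γ g‖ = 1 := by
    have hcabs : ∀ l, ∑ ee : Fin 3, ‖c l ee‖ = 1 := by
      intro l
      rw [Fin.sum_univ_three]
      have e01 : ((0:Fin 3) = 0) = True := by simp
      have e11 : ((1:Fin 3) = 0) = False := by simp [Fin.ext_iff]
      have e12 : ((1:Fin 3) = 1) = True := by simp
      have e21 : ((2:Fin 3) = 0) = False := by simp [Fin.ext_iff]
      have e22 : ((2:Fin 3) = 1) = False := by simp [Fin.ext_iff]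
      simp only [hcdef, e01, e11, e12, e21, e22, if_true, if_false]
      rw [norm_div, norm_div, norm_div, norm_neg, norm_neg, habsexp, habsexp]
      simp
      norm_num
    calc ∑ g ∈ G, ‖Γ g‖
        = ∑ g ∈ G, ∏ l, ‖c l (g l)‖ := by
          apply Finset.sum_congr rfl; intro g _
          simp only [hΓdef]; exact norm_prod _ _
      _ = ∏ l, ∑ ee : Fin 3, ‖c l ee‖ := by
          rw [hGdef]; exact (Finset.prod_univ_sum (fun _ : Fin m => (Finset.univ : Finset (Fin 3))) (fun l ee => ‖c l ee‖)).symm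
      _ = ∏ _l : Fin m, (1:ℝ) := Finset.prod_congr rfl (fun l _ => hcabs l)
      _ = 1 := Finset.prod_const_one
  -- measurement difference
  set D : EuclideanSpace ℝ (Fin k) → ℂ := fun w =>
    (∑ j, (a j : ℂ) * Complex.exp (Complex.I * ((⟪y j, w⟫ : ℝ) : ℂ)))
      - ∑ l, (b l : ℂ) * Complex.exp (Complex.I * ((⟪yh l, w⟫ : ℝ) : ℂ)) with hDdef
  have hDb : ∀ w, ‖w‖ ≤ Ω → ‖D w‖ ≤ 2*σ := by
    intro w hw
    have h1 := hcon w hw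
    have h2 := hW w hw
    set X : ℂ := (∑ l, (b l : ℂ) * Complex.exp (Complex.I * ((⟪yh l, w⟫ : ℝ) : ℂ)))
      - ((∑ j, (a j : ℂ) * Complex.exp (Complex.I * ((⟪y j, w⟫ : ℝ) : ℂ))) + W w) with hXdef
    have h3 : D w = -X - W w := by rw [hDdef, hXdef]; ring
    rw [h3]
    calc ‖-X - W w‖ ≤ ‖-X‖ + ‖W w‖ := norm_sub_le _ _
      _ = ‖X‖ + ‖W w‖ := by rw [norm_neg]
      _ ≤ 2*σ := by
          linarith
  -- the key identity
  set P : ℂ := (∑ j, (a j : ℂ) * ((φ (y j) : ℝ) : ℂ))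
      - ∑ l, (b l : ℂ) * ((φ (yh l) : ℝ) : ℂ) with hPdef
  have hkey : P = ∑ g ∈ G, Γ g * D (ω g) := by
    have hA : ∀ j, (a j : ℂ) * ((φ (y j) : ℝ) : ℂ)
        = ∑ g ∈ G, Γ g * ((a j : ℂ) * Complex.exp (Complex.I * ((⟪y j, ω g⟫ : ℝ) : ℂ))) := by
      intro j
      rw [hexpand (y j), Finset.mul_sum]
      exact Finset.sum_congr rfl (fun g _ => by ring)
    have hB : ∀ l, (b l : ℂ) * ((φ (yh l) : ℝ) : ℂ)
        = ∑ g ∈ G, Γ g * ((b l : ℂ) * Complex.exp (Complex.I * ((⟪yh l, ω g⟫ : ℝ) : ℂ))) := by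
      intro l
      rw [hexpand (yh l), Finset.mul_sum]
      exact Finset.sum_congr rfl (fun g _ => by ring)
    rw [hPdef, Finset.sum_congr rfl (fun j _ => hA j), Finset.sum_congr rfl (fun l _ => hB l),
      Finset.sum_comm, Finset.sum_comm (t := G), ← Finset.sum_sub_distrib]
    apply Finset.sum_congr rfl
    intro g _
    rw [hDdef, ← Finset.mul_sum, ← Finset.mul_sum, ← mul_sub]
  -- bound |P|
  have hPub : ‖P‖ ≤ 2*σ := by
    rw [hkey]
    calc ‖∑ g ∈ G, Γ g * D (ω g)‖
        ≤ ∑ g ∈ G, ‖Γ g * D (ω g)‖ := norm_sum_le _ _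
      _ ≤ ∑ g ∈ G, ‖Γ g‖ * (2*σ) := by
          apply Finset.sum_le_sum
          intro g hg
          rw [norm_mul]
          exact mul_le_mul_of_nonneg_left (hDb _ (hων g hg)) (norm_nonneg _)
      _ = (∑ g ∈ G, ‖Γ g‖) * (2*σ) := by rw [← Finset.sum_mul]
      _ = 2*σ := by rw [hΓ1, one_mul]
  -- lower bound on P
  have hPlb : mmin * ((2*t)^2)^m ≤ ‖P‖ := by
    have hzero : ∑ l, (b l : ℂ) * ((φ (yh l) : ℝ) : ℂ) = 0 := by
      apply Finset.sum_eq_zero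
      intro l _
      rw [hφyh l]
      simp
    have hreal : P = ((∑ j, a j * φ (y j) : ℝ) : ℂ) := by
      rw [hPdef, hzero, sub_zero]
      push_cast
      rfl
    have hR : mmin * ((2*t)^2)^m ≤ ∑ j, a j * φ (y j) := by
      have h1 : mmin * ((2*t)^2)^m ≤ a js * φ (y js) :=
        mul_le_mul (hlb ⟨js, rfl⟩) hφjs (by positivity) (le_of_lt (ha js))
      calc mmin * ((2*t)^2)^m ≤ a js * φ (y js) := h1
        _ ≤ ∑ j, a j * φ (y j) :=
            Finset.single_le_sum (fun j _ => mul_nonneg (ha j).le (hφ0 _)) (Finset.mem_univ js)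
    rw [hreal, Complex.norm_real, Real.norm_eq_abs]
    exact le_trans hR (le_abs_self _)
  -- final contradiction
  have hfin : mmin * ((2*t)^2)^(n-1) ≤ mmin * ((2*t)^2)^m := by
    apply mul_le_mul_of_nonneg_left _ (le_of_lt hmpos)
    apply pow_le_pow_of_le_one (sq_nonneg _) _ (by omega)
    nlinarith
  have hval : mmin * ((2*t)^2)^(n-1) = 4^(n-1) * σ := by
    have h1 : ((2*t)^2)^(n-1) = 4^(n-1) * t^(2*(n-1)) := by
      rw [show (2*t)^2 = 4*t^2 by ring, mul_pow, ← pow_mul]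
    rw [h1, htpow]
    field_simp
  have h4 : (4:ℝ) ≤ 4^(n-1) := by
    calc (4:ℝ) = 4^1 := (pow_one 4).symm
    _ ≤ 4^(n-1) := pow_le_pow_right₀ (by norm_num) (by omega)
  have hchain : 4^(n-1) * σ ≤ 2*σ := by
    rw [← hval]; exact le_trans hfin (le_trans hPlb hPub)
  nlinarith [h4, hσ]
end

section
/- Let k ≥ 1 and n ≥ 2 be integers, let Ω > 0 and let 0 < σ ≤ m_min. Then there exist a positive discrete measure μ = Σ_{j=1}^n a_j δ_{y_j} with n distinct support points y_j ∈ ℝ^k and a_j > 0, and a positive discrete measure μ̂ = Σ_{j=1}^{n−1} â_j δ_{ŷ_j} with n−1 distinct support points ŷ_j ∈ ℝ^k and â_j > 0, such that sup_{ω∈ℝ^k, ‖ω‖₂≤Ω} |Fμ̂(ω) − Fμ(ω)| < σ, min_{1≤j≤n} a_j = m_min, and min_{p≠j} ‖y_p − y_j‖₂ = (2e^{−1}/Ω)·(σ/m_min)^{1/(2n−2)}. -/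
open Real Complex Finset
open scoped RealInnerProductSpace

lemma sum_even_odd_aux (f : ℕ → ℂ) (m : ℕ) :
    ∑ l ∈ range (2 * m + 1), f l
      = ∑ j ∈ range (m + 1), f (2 * j) + ∑ j ∈ range m, f (2 * j + 1) := by
  induction m with
  | zero => simp
  | succ m ih =>
      have h1 : 2 * (m + 1) + 1 = (2 * m + 1) + 1 + 1 := by ring
      rw [h1, Finset.sum_range_succ, Finset.sum_range_succ, ih,
        Finset.sum_range_succ (fun j => f (2 * j)) (m + 1),
        Finset.sum_range_succ (fun j => f (2 * j + 1)) m]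
      have e1 : 2 * m + 1 + 1 = 2 * (m + 1) := by ring
      rw [e1]
      ring

lemma abs_exp_I_sub_one_le (θ : ℝ) :
    ‖Complex.exp (Complex.I * θ) - 1‖ ≤ |θ| := by
  have hz : Complex.exp (Complex.I * θ) - 1
      = ((Real.cos θ - 1 : ℝ) : ℂ) + ((Real.sin θ : ℝ) : ℂ) * Complex.I := by
    rw [mul_comm, Complex.exp_mul_I, ← Complex.ofReal_cos, ← Complex.ofReal_sin]
    push_cast
    ring
  rw [hz, Complex.norm_add_mul_I]
  have h1 : (Real.cos θ - 1) ^ 2 + Real.sin θ ^ 2 ≤ θ ^ 2 := by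
    nlinarith [Real.sin_sq_add_cos_sq θ, Real.one_sub_sq_div_two_le_cos (x := θ)]
  calc Real.sqrt ((Real.cos θ - 1) ^ 2 + Real.sin θ ^ 2)
      ≤ Real.sqrt (θ ^ 2) := Real.sqrt_le_sqrt h1
    _ = |θ| := Real.sqrt_sq_eq_abs θ

/-- Theorem `thm:highdnumberlowerbound0`: lower bound for the computational
resolution limit to number detection in `k` dimensions. There exist a positive measure with
`n` supports in `ℝᵏ` and one with `n-1` supports whose Fourier data differ by less than `σ`
on the ball `‖ω‖ ≤ Ω`, with minimal amplitude `m_min` and minimal separation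
`(2e⁻¹/Ω)·(σ/m_min)^{1/(2n-2)}`. -/
theorem number_detection_lower_bound_multid
    (k n : ℕ) (hk : 1 ≤ k) (hn : 2 ≤ n)
    (Ω σ mmin : ℝ) (hΩ : 0 < Ω) (hσ : 0 < σ) (hσm : σ ≤ mmin) :
    ∃ (a : Fin n → ℝ) (y : Fin n → EuclideanSpace ℝ (Fin k))
      (b : Fin (n - 1) → ℝ) (yh : Fin (n - 1) → EuclideanSpace ℝ (Fin k)),
      (∀ j, 0 < a j) ∧ Function.Injective y ∧
      (∀ j, 0 < b j) ∧ Function.Injective yh ∧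
      (∀ ω : EuclideanSpace ℝ (Fin k), ‖ω‖ ≤ Ω →
        ‖(∑ j, (b j : ℂ) * Complex.exp (Complex.I * (⟪yh j, ω⟫ : ℝ)))
          - ∑ j, (a j : ℂ) * Complex.exp (Complex.I * (⟪y j, ω⟫ : ℝ))‖ < σ) ∧
      IsLeast (Set.range a) mmin ∧
      (∀ p j, p ≠ j →
        2 * (Real.exp 1)⁻¹ / Ω * (σ / mmin) ^ ((1 : ℝ) / (2 * (n : ℝ) - 2)) ≤ ‖y p - y j‖) ∧
      (∃ p j, p ≠ j ∧
        ‖y p - y j‖ = 2 * (Real.exp 1)⁻¹ / Ω * (σ / mmin) ^ ((1 : ℝ) / (2 * (n : ℝ) - 2))) := by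
  obtain ⟨q, rfl⟩ : ∃ q, n = q + 1 := ⟨n - 1, by omega⟩
  have hq : 1 ≤ q := by omega
  have hm : 0 < mmin := lt_of_lt_of_le hσ hσm
  have hratio : 0 < σ / mmin := div_pos hσ hm
  set N : ℕ := 2 * q with hNdef
  have hNpos : 0 < N := by omega
  set r : ℝ := (σ / mmin) ^ ((1 : ℝ) / (2 * ((q + 1 : ℕ) : ℝ) - 2)) with hrdef
  have hrpos : 0 < r := Real.rpow_pos_of_pos hratio _
  have hEcast : 2 * ((q + 1 : ℕ) : ℝ) - 2 = (N : ℝ) := by push_cast [hNdef]; ring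
  have hNne : ((N : ℝ)) ≠ 0 := by
    simp only [ne_eq, Nat.cast_eq_zero]; omega
  have hrN : r ^ N = σ / mmin := by
    rw [hrdef, ← Real.rpow_natCast ((σ / mmin) ^ ((1 : ℝ) / (2 * ((q + 1 : ℕ) : ℝ) - 2))) N,
      ← Real.rpow_mul hratio.le, hEcast, one_div, inv_mul_cancel₀ hNne, Real.rpow_one]
  obtain ⟨h, hhdef⟩ : ∃ h : ℝ, h = r / (Real.exp 1 * Ω) := ⟨_, rfl⟩
  have hh : 0 < h := hhdef ▸ div_pos hrpos (mul_pos (Real.exp_pos 1) hΩ)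
  have hsep : 2 * (Real.exp 1)⁻¹ / Ω * r = 2 * h := by
    rw [hhdef]; field_simp
  set i0 : Fin k := ⟨0, hk⟩ with hi0
  set e1 : EuclideanSpace ℝ (Fin k) := EuclideanSpace.single i0 (1 : ℝ) with he1def
  have he1 : ‖e1‖ = 1 := by simp [he1def, EuclideanSpace.norm_single]
  refine ⟨fun j => mmin * (Nat.choose N (2 * j) : ℝ),
    fun j => ((2 * (j : ℕ) : ℝ) * h) • e1,
    fun j => mmin * (Nat.choose N (2 * j + 1) : ℝ),
    fun j => ((2 * (j : ℕ) + 1 : ℝ) * h) • e1,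
    ?_, ?_, ?_, ?_, ?_, ?_, ?_, ?_⟩
  · intro j
    have : 2 * (j : ℕ) ≤ N := by omega
    exact mul_pos hm (by exact_mod_cast Nat.cast_pos.mpr (Nat.choose_pos this))
  · intro p j hpj
    have h2 := congrArg (fun v => ⟪e1, v⟫) hpj
    simp only [real_inner_smul_right, real_inner_self_eq_norm_sq, he1] at h2
    have : (2 * (p : ℕ) : ℝ) * h = (2 * (j : ℕ) : ℝ) * h := by
      simpa using h2
    have hcast : ((p : ℕ) : ℝ) = ((j : ℕ) : ℝ) := by
      have := mul_right_cancel₀ hh.ne' this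
      linarith
    exact Fin.ext (by exact_mod_cast hcast)
  · intro j
    have hj : (j : ℕ) < q := j.isLt
    have : 2 * (j : ℕ) + 1 ≤ N := by omega
    exact mul_pos hm (by exact_mod_cast Nat.cast_pos.mpr (Nat.choose_pos this))
  · intro p j hpj
    have h2 := congrArg (fun v => ⟪e1, v⟫) hpj
    simp only [real_inner_smul_right, real_inner_self_eq_norm_sq, he1] at h2
    have : (2 * (p : ℕ) + 1 : ℝ) * h = (2 * (j : ℕ) + 1 : ℝ) * h := by
      simpa using h2
    have hcast : ((p : ℕ) : ℝ) = ((j : ℕ) : ℝ) := by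
      have := mul_right_cancel₀ hh.ne' this
      linarith
    exact Fin.ext (by exact_mod_cast hcast)
  · -- Fourier bound
    intro ω hω
    obtain ⟨θ, hθdef⟩ : ∃ θ : ℝ, θ = h * (ω i0) := ⟨_, rfl⟩
    obtain ⟨z, hzdef⟩ : ∃ z : ℂ, z = Complex.exp (Complex.I * (θ : ℝ)) := ⟨_, rfl⟩
    have hinner_e1 : ⟪e1, ω⟫ = ω i0 := by
      simp [he1def, EuclideanSpace.inner_single_left]
    have hexp_y : ∀ j : Fin (q + 1),
        Complex.exp (Complex.I * ((⟪((2 * (j : ℕ) : ℝ) * h) • e1, ω⟫ : ℝ) : ℂ))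
          = z ^ (2 * (j : ℕ)) := by
      intro j
      have harg : (⟪((2 * (j : ℕ) : ℝ) * h) • e1, ω⟫ : ℝ) = ((2 * (j : ℕ) : ℕ) : ℝ) * θ := by
        rw [real_inner_smul_left, hinner_e1, hθdef]; push_cast; ring
      rw [harg, hzdef, ← Complex.exp_nat_mul]
      congr 1
      push_cast
      ring
    have hexp_yh : ∀ j : Fin q,
        Complex.exp (Complex.I * ((⟪((2 * (j : ℕ) + 1 : ℝ) * h) • e1, ω⟫ : ℝ) : ℂ))
          = z ^ (2 * (j : ℕ) + 1) := by
      intro j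
      have harg : (⟪((2 * (j : ℕ) + 1 : ℝ) * h) • e1, ω⟫ : ℝ)
          = ((2 * (j : ℕ) + 1 : ℕ) : ℝ) * θ := by
        rw [real_inner_smul_left, hinner_e1, hθdef]; push_cast; ring
      rw [harg, hzdef, ← Complex.exp_nat_mul]
      congr 1
      push_cast
      ring
    have key : (∑ j : Fin q, ((mmin * (Nat.choose N (2 * j + 1) : ℝ) : ℝ) : ℂ)
          * z ^ (2 * (j : ℕ) + 1))
        - ∑ j : Fin (q + 1), ((mmin * (Nat.choose N (2 * j) : ℝ) : ℝ) : ℂ) * z ^ (2 * (j : ℕ))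
        = -(mmin : ℂ) * (z - 1) ^ N := by
      have hadd := add_pow z (-1 : ℂ) N
      rw [hNdef] at hadd
      rw [sum_even_odd_aux (fun l => z ^ l * (-1 : ℂ) ^ (2 * q - l) * ((2 * q).choose l : ℂ)) q]
        at hadd
      have heven : ∀ j ∈ range (q + 1),
          z ^ (2 * j) * (-1 : ℂ) ^ (2 * q - 2 * j) * (((2 * q).choose (2 * j) : ℂ))
            = z ^ (2 * j) * (((2 * q).choose (2 * j) : ℂ)) := by
        intro j hj
        have : Even (2 * q - 2 * j) := ⟨q - j, by omega⟩
        rw [this.neg_one_pow]; ring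
      have hodd : ∀ j ∈ range q,
          z ^ (2 * j + 1) * (-1 : ℂ) ^ (2 * q - (2 * j + 1)) * (((2 * q).choose (2 * j + 1) : ℂ))
            = -(z ^ (2 * j + 1) * (((2 * q).choose (2 * j + 1) : ℂ))) := by
        intro j hj
        simp only [Finset.mem_range] at hj
        have : Odd (2 * q - (2 * j + 1)) := ⟨q - j - 1, by omega⟩
        rw [this.neg_one_pow]; ring
      rw [Finset.sum_congr rfl heven, Finset.sum_congr rfl hodd, Finset.sum_neg_distrib] at hadd
      have hfin1 : ∑ j : Fin (q + 1), ((mmin * (Nat.choose N (2 * j) : ℝ) : ℝ) : ℂ)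
            * z ^ (2 * (j : ℕ))
          = (mmin : ℂ) * ∑ j ∈ range (q + 1), z ^ (2 * j) * (((2 * q).choose (2 * j) : ℂ)) := by
        rw [Finset.mul_sum, ← Fin.sum_univ_eq_sum_range]
        refine Finset.sum_congr rfl fun j _ => ?_
        push_cast [hNdef]
        ring
      have hfin2 : ∑ j : Fin q, ((mmin * (Nat.choose N (2 * j + 1) : ℝ) : ℝ) : ℂ)
            * z ^ (2 * (j : ℕ) + 1)
          = (mmin : ℂ) * ∑ j ∈ range q, z ^ (2 * j + 1) * (((2 * q).choose (2 * j + 1) : ℂ)) := by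
        rw [Finset.mul_sum, ← Fin.sum_univ_eq_sum_range]
        refine Finset.sum_congr rfl fun j _ => ?_
        push_cast [hNdef]
        ring
      rw [hfin1, hfin2, hNdef, show z - 1 = z + (-1) by ring, hadd]
      ring
    have hrw1 : ∑ j : Fin q, ((mmin * (Nat.choose N (2 * j + 1) : ℝ) : ℝ) : ℂ)
          * Complex.exp (Complex.I * ((⟪((2 * (j : ℕ) + 1 : ℝ) * h) • e1, ω⟫ : ℝ) : ℂ))
        = ∑ j : Fin q, ((mmin * (Nat.choose N (2 * j + 1) : ℝ) : ℝ) : ℂ)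
          * z ^ (2 * (j : ℕ) + 1) :=
      Finset.sum_congr rfl fun j _ => by rw [hexp_yh j]
    have hrw2 : ∑ j : Fin (q + 1), ((mmin * (Nat.choose N (2 * j) : ℝ) : ℝ) : ℂ)
          * Complex.exp (Complex.I * ((⟪((2 * (j : ℕ) : ℝ) * h) • e1, ω⟫ : ℝ) : ℂ))
        = ∑ j : Fin (q + 1), ((mmin * (Nat.choose N (2 * j) : ℝ) : ℝ) : ℂ)
          * z ^ (2 * (j : ℕ)) :=
      Finset.sum_congr rfl fun j _ => by rw [hexp_y j]
    have hfinal : ‖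
        (∑ j : Fin q, ((mmin * (Nat.choose N (2 * j + 1) : ℝ) : ℝ) : ℂ)
            * Complex.exp (Complex.I * ((⟪((2 * (j : ℕ) + 1 : ℝ) * h) • e1, ω⟫ : ℝ) : ℂ)))
          - ∑ j : Fin (q + 1), ((mmin * (Nat.choose N (2 * j) : ℝ) : ℝ) : ℂ)
            * Complex.exp (Complex.I * ((⟪((2 * (j : ℕ) : ℝ) * h) • e1, ω⟫ : ℝ) : ℂ))‖ < σ := by
      rw [hrw1, hrw2, key]
      have habs : ‖(-(mmin : ℂ) * (z - 1) ^ N)‖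
          = mmin * (‖(z - 1)‖) ^ N := by
        rw [norm_mul, norm_pow, norm_neg, Complex.norm_real, Real.norm_eq_abs, abs_of_pos hm]
      have hcoord : |ω i0| ≤ ‖ω‖ := by
        have hcs := abs_real_inner_le_norm e1 ω
        rwa [hinner_e1, he1, one_mul] at hcs
      have hzb : ‖(z - 1)‖ ≤ h * Ω := by
        rw [hzdef]
        refine (abs_exp_I_sub_one_le θ).trans ?_
        rw [hθdef, abs_mul, abs_of_pos hh]
        exact mul_le_mul_of_nonneg_left (hcoord.trans hω) hh.le
      have hhΩ : h * Ω = r / Real.exp 1 := by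
        rw [hhdef]; field_simp
      have hval : mmin * (h * Ω) ^ N = σ / (Real.exp 1) ^ N := by
        rw [hhΩ, div_pow, hrN]
        field_simp
      have hexp1 : (1 : ℝ) < Real.exp 1 := by
        have := Real.exp_one_gt_d9; linarith
      have hlt : σ / (Real.exp 1) ^ N < σ := by
        have h1 : 1 < (Real.exp 1) ^ N := one_lt_pow₀ hexp1 (by omega)
        rw [div_lt_iff₀ (by positivity)]
        nlinarith
      calc ‖(-(mmin : ℂ) * (z - 1) ^ N)‖
          = mmin * (‖(z - 1)‖) ^ N := habs
        _ ≤ mmin * (h * Ω) ^ N := by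
            gcongr
        _ = σ / (Real.exp 1) ^ N := hval
        _ < σ := hlt
    exact hfinal
  · constructor
    · exact ⟨⟨0, by omega⟩, by simp⟩
    · rintro x ⟨j, rfl⟩
      show mmin ≤ mmin * (N.choose (2 * (j : ℕ)) : ℝ)
      have hc : 1 ≤ (Nat.choose N (2 * j) : ℝ) := by
        have : 2 * (j : ℕ) ≤ N := by omega
        exact_mod_cast Nat.one_le_iff_ne_zero.mpr (Nat.choose_pos this).ne'
      nlinarith
  · intro p j hpj
    rw [hsep]
    have hsub : ((2 * (p : ℕ) : ℝ) * h) • e1 - ((2 * (j : ℕ) : ℝ) * h) • e1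
        = (((2 * (p : ℕ) : ℝ) - (2 * (j : ℕ) : ℝ)) * h) • e1 := by
      rw [← sub_smul]; ring_nf
    rw [hsub, norm_smul, he1, mul_one]
    have hne : (p : ℕ) ≠ (j : ℕ) := fun hc => hpj (Fin.ext hc)
    have hint : (1 : ℤ) ≤ |((p : ℕ) : ℤ) - ((j : ℕ) : ℤ)| := by
      rcases abs_cases (((p : ℕ) : ℤ) - ((j : ℕ) : ℤ)) with ⟨he, _⟩ | ⟨he, _⟩ <;> omega
    have h1 : (1 : ℝ) ≤ |((p : ℕ) : ℝ) - ((j : ℕ) : ℝ)| := by exact_mod_cast hint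
    have hge : (2 : ℝ) ≤ |(2 * (p : ℕ) : ℝ) - (2 * (j : ℕ) : ℝ)| := by
      have he2 : (2 * (p : ℕ) : ℝ) - (2 * (j : ℕ) : ℝ)
          = 2 * (((p : ℕ) : ℝ) - ((j : ℕ) : ℝ)) := by ring
      rw [he2, abs_mul, abs_of_pos (by norm_num : (0:ℝ) < 2)]; linarith
    rw [Real.norm_eq_abs, abs_mul, abs_of_pos hh]
    nlinarith
  · refine ⟨⟨1, by omega⟩, ⟨0, by omega⟩, by simp [Fin.ext_iff], ?_⟩
    rw [hsep]
    simp only [Fin.val_mk, Nat.cast_one, Nat.cast_zero, mul_one, mul_zero, zero_mul,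
      zero_smul, sub_zero]
    rw [norm_smul, he1, mul_one, Real.norm_eq_abs, abs_of_pos (by positivity)]
end

section
/- Let k ≥ 1 and n ≥ 2 be integers, Ω > 0, 0 < σ ≤ m_min, and set τ = (e^{−1}/Ω)·(σ/m_min)^{1/(2n−1)}. Let e₁ denote the first standard basis vector of ℝ^k. Then there exist a positive discrete measure μ = Σ_{j=1}^n a_j δ_{y_j} with a_j > 0 whose support points are exactly {(−(n−1/2)+2(j−1))τ·e₁ : j = 1,…,n} (i.e. (−(n−1/2)τ, 0,…,0), (−(n−5/2)τ, 0,…,0), …, ((n−3/2)τ, 0,…,0)), and a positive discrete measure μ̂ = Σ_{j=1}^n â_j δ_{ŷ_j} with â_j > 0 whose support points are exactly {(−(n−3/2)+2(j−1))τ·e₁ : j = 1,…,n}, such that sup_{ω∈ℝ^k, ‖ω‖₂≤Ω} |Fμ̂(ω) − Fμ(ω)| < σ and min_{1≤j≤n} a_j = m_min. -/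
open Real Complex Finset
open scoped RealInnerProductSpace

private lemma sum_range_two_mul' {M : Type*} [AddCommMonoid M] (n : ℕ) (f : ℕ → M) :
    ∑ l ∈ Finset.range (2 * n), f l = ∑ j ∈ Finset.range n, (f (2 * j) + f (2 * j + 1)) := by
  induction n with
  | zero => simp
  | succ n ih =>
      rw [show 2 * (n + 1) = 2 * n + 1 + 1 by ring, Finset.sum_range_succ, Finset.sum_range_succ,
        Finset.sum_range_succ, ih]
      abel

/-- Theorem `thm:highdsupportlowerboundthm0`: lower bound for the computational
resolution limit to support recovery in `k` dimensions. With
`τ = (e⁻¹/Ω)(σ/m_min)^{1/(2n-1)}`, there are two positive measures with `n` supports each,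
located on the first coordinate axis at the interleaved grids `(-(n-1/2)+2(j-1))τ·e₁` and
`(-(n-3/2)+2(j-1))τ·e₁`, whose Fourier data on the ball `‖ω‖ ≤ Ω` differ by less than `σ`,
and whose minimal amplitude is `m_min`. -/
theorem support_recovery_lower_bound_multid
    (k n : ℕ) (hk : 1 ≤ k) (hn : 2 ≤ n)
    (Ω σ mmin : ℝ) (hΩ : 0 < Ω) (hσ : 0 < σ) (hσm : σ ≤ mmin)
    (τ : ℝ) (hτ : τ = (Real.exp 1)⁻¹ / Ω * (σ / mmin) ^ ((1 : ℝ) / (2 * (n : ℝ) - 1))) :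
    ∃ a b : Fin n → ℝ,
      (∀ j, 0 < a j) ∧ (∀ j, 0 < b j) ∧
      (∀ ω : EuclideanSpace ℝ (Fin k), ‖ω‖ ≤ Ω →
        Norm.norm
          ((∑ j, (b j : ℂ) * Complex.exp (Complex.I *
              (⟪((-(n : ℝ) + 3 / 2 + 2 * (j : ℝ)) * τ) •
                  EuclideanSpace.single (⟨0, by omega⟩ : Fin k) (1 : ℝ), ω⟫ : ℝ)))
            - ∑ j, (a j : ℂ) * Complex.exp (Complex.I *
              (⟪((-(n : ℝ) + 1 / 2 + 2 * (j : ℝ)) * τ) •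
                  EuclideanSpace.single (⟨0, by omega⟩ : Fin k) (1 : ℝ), ω⟫ : ℝ)))
          < σ) ∧
      IsLeast (Set.range a) mmin := by
  have hm : 0 < mmin := lt_of_lt_of_le hσ hσm
  set m : ℕ := 2 * n - 1 with hm_def
  have hmn : m + 1 = 2 * n := by omega
  have hmcast : (m : ℝ) = 2 * (n : ℝ) - 1 := by
    have h1 : (1 : ℕ) ≤ 2 * n := by omega
    push_cast [hm_def, Nat.cast_sub h1]
    ring
  -- the amplitudes
  refine ⟨fun j => mmin * (m.choose (2 * (j : ℕ)) : ℝ),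
          fun j => mmin * (m.choose (2 * (j : ℕ) + 1) : ℝ), ?_, ?_, ?_, ?_⟩
  · intro j
    have : 0 < m.choose (2 * (j : ℕ)) := Nat.choose_pos (by have := j.isLt; omega)
    positivity
  · intro j
    have : 0 < m.choose (2 * (j : ℕ) + 1) := Nat.choose_pos (by have := j.isLt; omega)
    positivity
  · -- the Fourier bound
    intro ω hω
    set i0 : Fin k := ⟨0, by omega⟩ with hi0
    set ω0 : ℝ := ω i0 with hω0
    have hinner : ∀ c : ℝ, (⟪c • EuclideanSpace.single i0 (1 : ℝ), ω⟫ : ℝ) = c * ω0 := by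
      intro c
      rw [real_inner_smul_left, EuclideanSpace.inner_single_left]
      simp [hω0]
    have hω0le : |ω0| ≤ Ω := by
      have h1 : |ω0| ≤ ‖ω‖ := by
        have := abs_real_inner_le_norm (EuclideanSpace.single i0 (1 : ℝ)) ω
        simpa [EuclideanSpace.inner_single_left, EuclideanSpace.norm_single, hω0] using this
      linarith
    set x : ℝ := τ * ω0 with hx
    set E : ℂ := Complex.exp (Complex.I * x) with hE
    set e0 : ℂ := Complex.exp (Complex.I * ((-(n : ℝ) + 1 / 2) * x)) with he0
    have habse0 : ‖e0‖ = 1 := by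
      rw [he0, Complex.norm_exp]
      norm_num
    -- each exponential term in terms of e0 and powers of E
    have hterm : ∀ l : ℕ,
        Complex.exp (Complex.I * (((-(n : ℝ) + 1 / 2 + l) * τ * ω0 : ℝ) : ℂ)) = e0 * E ^ l := by
      intro l
      rw [hE, he0, ← Complex.exp_nat_mul, ← Complex.exp_add]
      congr 1
      push_cast [hx]
      ring
    -- positivity facts about τ and τΩ
    have hr : (0 : ℝ) < σ / mmin := by positivity
    have hr1 : σ / mmin ≤ 1 := by
      rw [div_le_one hm]; exact hσm
    have hτΩ : τ * Ω = (Real.exp 1)⁻¹ * (σ / mmin) ^ ((1 : ℝ) / (2 * (n : ℝ) - 1)) := by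
      rw [hτ]; field_simp
    have hτΩpos : 0 < τ * Ω := by
      rw [hτΩ]
      positivity
    have hτpos : 0 < τ := by
      by_contra h
      push_neg at h
      nlinarith
    have hτΩle : τ * Ω ≤ 1 := by
      rw [hτΩ]
      have h1 : (σ / mmin) ^ ((1 : ℝ) / (2 * (n : ℝ) - 1)) ≤ 1 := by
        apply Real.rpow_le_one hr.le hr1
        have h2n : (2 : ℝ) ≤ (n : ℝ) := by exact_mod_cast hn
        apply div_nonneg one_pos.le
        linarith
      have h2 : (Real.exp 1)⁻¹ ≤ 1 := by
        rw [inv_le_one_iff₀]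
        right
        linarith [Real.exp_one_gt_d9]
      calc (Real.exp 1)⁻¹ * (σ / mmin) ^ ((1 : ℝ) / (2 * (n : ℝ) - 1))
          ≤ 1 * 1 := by
            apply mul_le_mul h2 h1 (by positivity) (by norm_num)
        _ = 1 := by norm_num
    have hxle : |x| ≤ τ * Ω := by
      rw [hx, abs_mul, abs_of_pos hτpos]
      exact mul_le_mul_of_nonneg_left hω0le hτpos.le
    -- the key algebraic identity
    have hkey :
        ((∑ j : Fin n, ((mmin * (m.choose (2 * (j : ℕ) + 1) : ℝ) : ℝ) : ℂ) * Complex.exp (Complex.I *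
              ((⟪((-(n : ℝ) + 3 / 2 + 2 * (j : ℝ)) * τ) •
                  EuclideanSpace.single i0 (1 : ℝ), ω⟫ : ℝ) : ℂ)))
            - ∑ j : Fin n, ((mmin * (m.choose (2 * (j : ℕ)) : ℝ) : ℝ) : ℂ) * Complex.exp (Complex.I *
              ((⟪((-(n : ℝ) + 1 / 2 + 2 * (j : ℝ)) * τ) •
                  EuclideanSpace.single i0 (1 : ℝ), ω⟫ : ℝ) : ℂ)))
          = -((mmin : ℂ) * e0) * (1 - E) ^ m := by
      have hsum : ∀ j : Fin n,
          ((mmin * (m.choose (2 * (j : ℕ) + 1) : ℝ) : ℝ) : ℂ) * Complex.exp (Complex.I *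
              ((⟪((-(n : ℝ) + 3 / 2 + 2 * (j : ℝ)) * τ) •
                  EuclideanSpace.single i0 (1 : ℝ), ω⟫ : ℝ) : ℂ))
            - ((mmin * (m.choose (2 * (j : ℕ)) : ℝ) : ℝ) : ℂ) * Complex.exp (Complex.I *
              ((⟪((-(n : ℝ) + 1 / 2 + 2 * (j : ℝ)) * τ) •
                  EuclideanSpace.single i0 (1 : ℝ), ω⟫ : ℝ) : ℂ))
          = -((mmin : ℂ) * e0) *
              (((-E) ^ (2 * (j : ℕ)) * (m.choose (2 * (j : ℕ)) : ℂ))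
               + ((-E) ^ (2 * (j : ℕ) + 1) * (m.choose (2 * (j : ℕ) + 1) : ℂ))) := by
        intro j
        rw [hinner, hinner,
          show (-(n : ℝ) + 3 / 2 + 2 * (j : ℝ)) * τ * ω0
              = (-(n : ℝ) + 1 / 2 + ((2 * (j : ℕ) + 1 : ℕ) : ℝ)) * τ * ω0 by push_cast; ring,
          show (-(n : ℝ) + 1 / 2 + 2 * (j : ℝ)) * τ * ω0
              = (-(n : ℝ) + 1 / 2 + ((2 * (j : ℕ) : ℕ) : ℝ)) * τ * ω0 by push_cast; ring,
          hterm, hterm]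
        have h1 : (-E) ^ (2 * (j : ℕ)) = E ^ (2 * (j : ℕ)) := by
          rw [neg_pow, Even.neg_one_pow ⟨(j : ℕ), by ring⟩, one_mul]
        have h2 : (-E) ^ (2 * (j : ℕ) + 1) = -(E ^ (2 * (j : ℕ) + 1)) := by
          rw [neg_pow, Odd.neg_one_pow ⟨(j : ℕ), by ring⟩]
          ring
        rw [h1, h2]
        push_cast
        ring
      rw [← Finset.sum_sub_distrib]
      rw [Finset.sum_congr rfl (fun j _ => hsum j), ← Finset.mul_sum]
      congr 1
      have hbinom : ((1 : ℂ) - E) ^ m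
          = ∑ l ∈ Finset.range (2 * n), (-E) ^ l * ((m.choose l : ℕ) : ℂ) := by
        have h := add_pow (-E) 1 m
        rw [← hmn]
        rw [sub_eq_neg_add]
        simpa using h
      rw [hbinom, sum_range_two_mul' n (fun l => (-E) ^ l * ((m.choose l : ℕ) : ℂ))]
      rw [← Fin.sum_univ_eq_sum_range
        (fun l => (-E) ^ (2 * l) * ((m.choose (2 * l) : ℕ) : ℂ)
          + (-E) ^ (2 * l + 1) * ((m.choose (2 * l + 1) : ℕ) : ℂ)) n]
    rw [hkey]
    -- now bound the absolute value
    have habs : ‖(-((mmin : ℂ) * e0) * (1 - E) ^ m)‖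
        = mmin * ‖(1 - E)‖ ^ m := by
      rw [norm_mul, norm_pow, norm_neg, norm_mul, habse0, Complex.norm_of_nonneg hm.le,
        mul_one]
    rw [habs]
    have hE1 : ‖(1 - E)‖ ≤ 2 * |x| := by
      have h1 : ‖(Complex.I * (x : ℂ))‖ = |x| := by
        rw [norm_mul, Complex.norm_I, one_mul, Complex.norm_real, Real.norm_eq_abs]
      have h2 : ‖(Complex.I * (x : ℂ))‖ ≤ 1 := by
        rw [h1]; exact hxle.trans hτΩle
      have h3 := Complex.norm_exp_sub_one_le h2
      rw [h1] at h3
      calc ‖(1 - E)‖ = ‖(E - 1)‖ := by rw [norm_sub_rev]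
        _ ≤ 2 * |x| := h3
    -- numerical computation
    have hpow : (τ * Ω) ^ m = (Real.exp 1)⁻¹ ^ m * (σ / mmin) := by
      rw [hτΩ, mul_pow]
      congr 1
      rw [← Real.rpow_natCast ((σ / mmin) ^ ((1 : ℝ) / (2 * (n : ℝ) - 1))) m,
        ← Real.rpow_mul hr.le, hmcast]
      have hne : (2 * (n : ℝ) - 1) ≠ 0 := by
        have : (2 : ℝ) ≤ (n : ℝ) := by exact_mod_cast hn
        linarith
      rw [one_div, inv_mul_cancel₀ hne, Real.rpow_one]
    have hfinal : mmin * (2 * (τ * Ω)) ^ m = σ * (2 * (Real.exp 1)⁻¹) ^ m := by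
      rw [mul_pow, hpow, mul_pow]
      field_simp
    have hlt1 : (2 * (Real.exp 1)⁻¹) ^ m < 1 := by
      apply pow_lt_one₀ (by positivity)
      · rw [mul_inv_lt_iff₀ (Real.exp_pos 1), one_mul]
        linarith [Real.exp_one_gt_d9]
      · omega
    calc mmin * ‖(1 - E)‖ ^ m
        ≤ mmin * (2 * |x|) ^ m := by
          apply mul_le_mul_of_nonneg_left _ hm.le
          exact pow_le_pow_left₀ (norm_nonneg _) hE1 m
      _ ≤ mmin * (2 * (τ * Ω)) ^ m := by
          apply mul_le_mul_of_nonneg_left _ hm.le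
          apply pow_le_pow_left₀ (by positivity)
          linarith
      _ = σ * (2 * (Real.exp 1)⁻¹) ^ m := hfinal
      _ < σ * 1 := by
          exact mul_lt_mul_of_pos_left hlt1 hσ
      _ = σ := mul_one σ
  · -- minimum amplitude
    constructor
    · refine ⟨⟨0, by omega⟩, ?_⟩
      simp
    · rintro y ⟨j, rfl⟩
      dsimp only
      have h1 : (1 : ℝ) ≤ (m.choose (2 * (j : ℕ)) : ℝ) := by
        exact_mod_cast Nat.one_le_iff_ne_zero.mpr
          (Nat.choose_pos (by have := j.isLt; omega)).ne'
      nlinarith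
end

section
/- For every integer n ≥ 4, the inequality (2⌈n/2⌉)! · (2⌈n/2⌉ − 1)! / ((2⌊⌊n/2⌋/2⌋ − 1)!)⁴ ≤ (e¹¹/π²) · (n+1)¹⁰ · 2^{2n−8} holds. -/
open Real

private lemma stirling_aux (n : ℕ) : Real.sqrt π ≤ Stirling.stirlingSeq (n + 1) :=
  Stirling.stirlingSeq'_antitone.le_of_tendsto
    (Stirling.tendsto_stirlingSeq_sqrt_pi.comp (Filter.tendsto_add_atTop_nat 1)) n

private lemma stirling_lower (n : ℕ) (hn : 1 ≤ n) :
    2 * Real.sqrt n * ((n : ℝ) / Real.exp 1) ^ n ≤ (n.factorial : ℝ) := by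
  obtain ⟨m, rfl⟩ : ∃ m, n = m + 1 := ⟨n - 1, by omega⟩
  have h := stirling_aux m
  have hd : (0:ℝ) < Real.sqrt (2 * (m+1 : ℕ)) * (((m+1 : ℕ) : ℝ) / Real.exp 1) ^ (m+1) := by
    have : (0:ℝ) < ((m+1 : ℕ) : ℝ) := by positivity
    positivity
  rw [Stirling.stirlingSeq, le_div_iff₀ hd] at h
  refine le_trans ?_ h
  have h2 : Real.sqrt (2 * (m+1 : ℕ)) = Real.sqrt 2 * Real.sqrt ((m+1 : ℕ)) := by
    rw [← Real.sqrt_mul (by norm_num)]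
  have h3 : (2:ℝ) ≤ Real.sqrt π * Real.sqrt 2 := by
    rw [← Real.sqrt_mul pi_pos.le]
    have : (2:ℝ) = Real.sqrt 4 := by
      rw [show (4:ℝ) = 2^2 by norm_num, Real.sqrt_sq (by norm_num)]
    rw [this]
    exact Real.sqrt_le_sqrt (by nlinarith [pi_gt_three])
  rw [h2]
  have hp : (0:ℝ) ≤ (((m+1 : ℕ) : ℝ) / Real.exp 1) ^ (m+1) := by positivity
  have hs : (0:ℝ) ≤ Real.sqrt ((m+1:ℕ)) := Real.sqrt_nonneg _
  nlinarith [mul_le_mul_of_nonneg_right h3 (mul_nonneg hs hp)]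

private lemma stirling_upper (n : ℕ) (hn : 1 ≤ n) :
    (n.factorial : ℝ) ≤ Real.exp 1 * Real.sqrt n * ((n : ℝ) / Real.exp 1) ^ n := by
  obtain ⟨m, rfl⟩ : ∃ m, n = m + 1 := ⟨n - 1, by omega⟩
  have h : Stirling.stirlingSeq (m + 1) ≤ Stirling.stirlingSeq 1 := by
    have := Stirling.stirlingSeq'_antitone (Nat.zero_le m)
    simpa using this
  rw [Stirling.stirlingSeq_one] at h
  have hd : (0:ℝ) < Real.sqrt (2 * (m+1 : ℕ)) * (((m+1 : ℕ) : ℝ) / Real.exp 1) ^ (m+1) := by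
    have : (0:ℝ) < ((m+1 : ℕ) : ℝ) := by positivity
    positivity
  rw [Stirling.stirlingSeq, div_le_iff₀ hd] at h
  refine h.trans (le_of_eq ?_)
  have h2 : Real.sqrt (2 * (m+1 : ℕ)) = Real.sqrt 2 * Real.sqrt ((m+1 : ℕ)) := by
    rw [← Real.sqrt_mul (by norm_num)]
  rw [h2]
  have hs2 : Real.sqrt 2 ≠ 0 := by positivity
  field_simp

private lemma core (B c : ℕ) (hB : 1 ≤ B) (hc : 1 ≤ c) :
    ((2*(B+c)).factorial : ℝ) * ((2*(B+c)-1).factorial : ℝ) / ((B.factorial : ℝ))^4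
      ≤ Real.exp 1 ^ 4 * 4 ^ (2*(B+c)) * ((B:ℝ)+(c:ℝ)) ^ (4*c) / (16 * (B:ℝ)^2) := by
  have he0 : (0:ℝ) < Real.exp 1 := Real.exp_pos 1
  set e : ℝ := Real.exp 1 with he
  set M : ℕ := 2*(B+c) - 1 with hMdef
  have hM1 : 2*(B+c) = M + 1 := by omega
  have hMge : 1 ≤ M := by omega
  have hb0 : (0:ℝ) < (B:ℝ) := by exact_mod_cast hB
  set b : ℝ := (B:ℝ) with hbdef
  set d : ℝ := (B:ℝ) + (c:ℝ) with hddef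
  have hd0 : (0:ℝ) < d := by positivity
  have hm2d : (M:ℝ) + 1 = 2 * d := by
    have : ((2*(B+c) : ℕ) : ℝ) = ((M + 1 : ℕ) : ℝ) := by rw [hM1]
    push_cast at this
    linarith
  have hmle : (M:ℝ) ≤ 2 * d := by linarith [Nat.cast_nonneg (α := ℝ) M]
  have hm0 : (0:ℝ) ≤ (M:ℝ) := Nat.cast_nonneg M
  -- numerator bound
  have hMu : (M.factorial : ℝ) ≤ e * Real.sqrt M * ((M:ℝ)/e)^M := stirling_upper M hMge
  have hnum : ((2*(B+c)).factorial : ℝ) * ((2*(B+c)-1).factorial : ℝ)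
      ≤ ((M:ℝ)+1) * (e^2 * (M:ℝ) * ((M:ℝ)/e)^(2*M)) := by
    rw [hM1, Nat.factorial_succ]
    have h2 : (e * Real.sqrt M * ((M:ℝ)/e)^M)^2 = e^2 * (M:ℝ) * ((M:ℝ)/e)^(2*M) := by
      rw [mul_pow, mul_pow, Real.sq_sqrt hm0, ← pow_mul, Nat.mul_comm]
    have h1 : (M.factorial : ℝ) * (M.factorial : ℝ) ≤ e^2 * (M:ℝ) * ((M:ℝ)/e)^(2*M) := by
      rw [← h2, sq]
      exact mul_le_mul hMu hMu (by positivity) (by positivity)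
    push_cast
    calc ((M:ℝ)+1) * (M.factorial : ℝ) * (M.factorial : ℝ)
        = ((M:ℝ)+1) * ((M.factorial : ℝ) * (M.factorial : ℝ)) := by ring
      _ ≤ ((M:ℝ)+1) * (e^2 * (M:ℝ) * ((M:ℝ)/e)^(2*M)) := by
          apply mul_le_mul_of_nonneg_left h1 (by positivity)
  -- denominator bound
  have hden : 16 * b^2 * ((b/e)^(4*B)) ≤ ((B.factorial : ℝ))^4 := by
    have h1 : (2 * Real.sqrt b * ((b:ℝ)/e)^B)^4 ≤ ((B.factorial : ℝ))^4 :=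
      pow_le_pow_left₀ (by positivity) (stirling_lower B hB) 4
    refine le_trans (le_of_eq ?_) h1
    rw [mul_pow, mul_pow, show (Real.sqrt b)^4 = ((Real.sqrt b)^2)^2 by ring,
      Real.sq_sqrt hb0.le, ← pow_mul, Nat.mul_comm]
    norm_num
  have hdenpos : (0:ℝ) < 16 * b^2 * ((b/e)^(4*B)) := by positivity
  -- key step
  have hde : d ≤ b * Real.exp ((c:ℝ)/b) := by
    have h := Real.add_one_le_exp ((c:ℝ)/b)
    have h2 := mul_le_mul_of_nonneg_left h hb0.le
    have h3 : b * ((c:ℝ)/b + 1) = d := by field_simp [hddef]; ring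
    linarith [h3 ▸ h2]
  have hdB : (d/e)^(4*B) ≤ (b/e)^(4*B) * e^(4*c) := by
    have hstep : d^(4*B) ≤ b^(4*B) * e^(4*c) := by
      calc d^(4*B) ≤ (b * Real.exp ((c:ℝ)/b))^(4*B) := pow_le_pow_left₀ hd0.le hde _
        _ = b^(4*B) * Real.exp ((c:ℝ)/b)^(4*B) := mul_pow _ _ _
        _ = b^(4*B) * e^(4*c) := by
            rw [he, ← Real.exp_nat_mul, ← Real.exp_nat_mul]
            congr 1
            push_cast
            field_simp
            simp only [hbdef]
            rw [mul_comm (4:ℝ) (B:ℝ), mul_assoc, mul_div_cancel_left₀ _ (Nat.cast_ne_zero.mpr (by omega) : (B:ℝ) ≠ 0)]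
    rw [div_pow, div_pow, div_mul_eq_mul_div]
    exact (div_le_div_iff_of_pos_right (by positivity)).mpr hstep
  set K : ℕ := 4*c - 2 with hKdef
  have h2M : 2*M = 4*B + K := by omega
  have hKc : 4*c = K + 2 := by omega
  have keystep : ((M:ℝ)+1) * (e^2 * (M:ℝ) * ((M:ℝ)/e)^(2*M))
      ≤ e^4 * 4^(M+1) * d^(4*c) * ((b/e)^(4*B)) := by
    calc ((M:ℝ)+1) * (e^2 * (M:ℝ) * ((M:ℝ)/e)^(2*M))
        ≤ (2*d) * (e^2 * (2*d) * ((2*d)/e)^(2*M)) := by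
          rw [hm2d]
          gcongr
      _ = 4*d^2*e^2 * (2:ℝ)^(2*M) * (d/e)^(2*M) := by
          rw [show (2*d)/e = 2*(d/e) by ring, mul_pow]; ring
      _ = 4*d^2*e^2 * (2:ℝ)^(2*M) * ((d/e)^(4*B) * (d/e)^K) := by
          rw [← pow_add, ← h2M]
      _ ≤ 4*d^2*e^2 * (2:ℝ)^(2*M) * (((b/e)^(4*B) * e^(4*c)) * (d/e)^K) := by
          gcongr
      _ = e^4 * 4^(M+1) * d^(4*c) * ((b/e)^(4*B)) := by
          rw [show (4:ℝ) = 2^2 by norm_num, ← pow_mul, show 2*(M+1) = 2*M + 2 by ring,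
            pow_add, hKc, pow_add, pow_add, div_pow, div_pow]
          field_simp
  -- assemble
  rw [hM1]
  calc ((M+1).factorial : ℝ) * ((M+1-1).factorial : ℝ) / ((B.factorial : ℝ))^4
      ≤ (((M:ℝ)+1) * (e^2 * (M:ℝ) * ((M:ℝ)/e)^(2*M))) / (16 * b^2 * ((b/e)^(4*B))) := by
        apply div_le_div₀ (by positivity) ?_ hdenpos hden
        · have : M + 1 - 1 = M := by omega
          rw [this, ← hM1]
          exact hnum
    _ ≤ (e^4 * 4^(M+1) * d^(4*c) * ((b/e)^(4*B))) / (16 * b^2 * ((b/e)^(4*B))) := by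
        gcongr
    _ = e^4 * 4^(M+1) * d^(4*c) / (16 * b^2) := by
        rw [mul_comm (16 * b^2) ((b/e)^(4*B))]
        rw [← div_div]
        congr 1
        rw [mul_div_assoc, div_self (by positivity), mul_one]

private lemma finishlem (B c n : ℕ) (hB : 1 ≤ B) (hc1 : 1 ≤ c) (hc3 : c ≤ 3)
    (h1 : 2*(B+c) ≤ n+1) (h2 : n+1 ≤ 8*B) (hn : 4 ≤ n) :
    Real.exp 1 ^ 4 * 4 ^ (2*(B+c)) * ((B:ℝ)+(c:ℝ)) ^ (4*c) / (16 * (B:ℝ)^2)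
      ≤ Real.exp 1 ^ 11 / π ^ 2 * ((n:ℝ)+1) ^ 10 * 2 ^ (2*n-8) := by
  have he0 : (0:ℝ) < Real.exp 1 := Real.exp_pos 1
  set e : ℝ := Real.exp 1 with he
  have he2 : (2:ℝ) ≤ e := by
    have := Real.add_one_le_exp (1:ℝ); rw [he]; linarith
  have hb1 : (1:ℝ) ≤ (B:ℝ) := by exact_mod_cast hB
  set x : ℝ := (n:ℝ) + 1 with hxdef
  have hx5 : (5:ℝ) ≤ x := by
    have : (4:ℝ) ≤ (n:ℝ) := by exact_mod_cast hn
    rw [hxdef]; linarith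
  have hx8 : x ≤ 8 * (B:ℝ) := by
    have : ((n+1 : ℕ):ℝ) ≤ ((8*B : ℕ):ℝ) := by exact_mod_cast h2
    push_cast at this; rw [hxdef]; linarith
  have hdle : (B:ℝ) + (c:ℝ) ≤ x / 2 := by
    have : ((2*(B+c) : ℕ):ℝ) ≤ ((n+1 : ℕ):ℝ) := by exact_mod_cast h1
    push_cast at this; rw [hxdef]; linarith
  have hp1 : (4:ℝ)^(2*(B+c)) ≤ 4^(n+1) := pow_le_pow_right₀ (by norm_num) h1
  have hp2 : ((B:ℝ)+(c:ℝ))^(4*c) ≤ (x/2)^12 := by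
    calc ((B:ℝ)+(c:ℝ))^(4*c) ≤ (x/2)^(4*c) := by
          apply pow_le_pow_left₀ (by positivity) hdle
      _ ≤ (x/2)^12 := by
          apply pow_le_pow_right₀ (by linarith) (by omega)
  have h4 : (4:ℝ)^(n+1) = 2^(2*n-8) * 2^10 := by
    rw [show (4:ℝ) = 2^2 by norm_num, ← pow_mul, ← pow_add]
    congr 1; omega
  have hpi : π^2 ≤ 16 := by nlinarith [pi_le_four, pi_pos]
  have hπ0 : (0:ℝ) < π^2 := by positivity
  have hx0 : (0:ℝ) < x := by linarith
  have hX0 : (0:ℝ) < (2:ℝ)^(2*n-8) := by positivity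
  have hEdiv : e^4 ≤ e^11 / π^2 := by
    rw [le_div_iff₀ hπ0]
    have h27 : (2:ℝ)^7 ≤ e^7 := pow_le_pow_left₀ (by norm_num) he2 7
    nlinarith [pow_pos he0 4, pow_pos he0 7]
  calc e^4 * 4^(2*(B+c)) * ((B:ℝ)+(c:ℝ))^(4*c) / (16 * (B:ℝ)^2)
      ≤ e^4 * (2^(2*n-8) * 2^10) * (x/2)^12 / (16 * (B:ℝ)^2) := by
        rw [← h4]; gcongr
    _ = (e^4 * 2^10 * (x/2)^12 / (16 * (B:ℝ)^2)) * 2^(2*n-8) := by ring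
    _ ≤ (e^11 / π^2 * x^10) * 2^(2*n-8) := by
        apply mul_le_mul_of_nonneg_right ?_ hX0.le
        calc e^4 * 2^10 * (x/2)^12 / (16 * (B:ℝ)^2)
            = e^4 * x^10 * (x^2 / (64 * (B:ℝ)^2)) := by ring
          _ ≤ e^4 * x^10 * 1 := by
              apply mul_le_mul_of_nonneg_left ?_ (by positivity)
              rw [div_le_one (by positivity)]
              nlinarith
          _ = e^4 * x^10 := by ring
          _ ≤ e^11 / π^2 * x^10 :=
              mul_le_mul_of_nonneg_right hEdiv (by positivity)
    _ = e^11 / π^2 * x^10 * 2^(2*n-8) := by ring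

/-- Lemma `numberlowerboundcalculate1`, for `n ≥ 4`:
`(2⌈n/2⌉)!·(2⌈n/2⌉-1)!/((2⌊⌊n/2⌋/2⌋-1)!)⁴ ≤ (e¹¹/π²)·(n+1)¹⁰·2^{2n-8}`.
Here `⌈n/2⌉ = (n+1)/2` and `⌊⌊n/2⌋/2⌋ = n/2/2` with natural division. -/
theorem factorial_ratio_bound (n : ℕ) (hn : 4 ≤ n) :
    ((2 * ((n + 1) / 2)).factorial : ℝ) * ((2 * ((n + 1) / 2) - 1).factorial : ℝ)
        / ((2 * (n / 2 / 2) - 1).factorial : ℝ) ^ 4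
      ≤ Real.exp 1 ^ 11 / π ^ 2 * ((n : ℝ) + 1) ^ 10 * 2 ^ (2 * n - 8) := by
  obtain ⟨B, c, hB, hc1, hc3, e1, e2, h1, h2⟩ :
      ∃ B c : ℕ, 1 ≤ B ∧ 1 ≤ c ∧ c ≤ 3 ∧ 2*((n+1)/2) = 2*(B+c) ∧ 2*(n/2/2)-1 = B ∧
        2*(B+c) ≤ n+1 ∧ n+1 ≤ 8*B :=
    ⟨2*(n/4)-1, (n+1)/2 - (2*(n/4)-1), by omega, by omega, by omega, by omega, by omega,
      by omega, by omega⟩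
  rw [e1, e2]
  exact (core B c hB hc1).trans (finishlem B c n hB hc1 hc3 h1 h2 hn)
end

section
/- Let n ≥ 2 be an integer and let C = {1, 2, …, n}. Then: (1) min_{z∈C} Π_{x∈C, x≠z} |x − z| = (⌈n/2⌉ − 1)! · (⌊n/2⌋)!, and this minimum is attained at z = ⌈n/2⌉; (2) max_{z∈C} Π_{x∈C, x≠z} |x − z| = (n−1)!, and the set of maximizers is exactly {1, n}. -/
open Finset


lemma prod_shift (a : ℤ) (m : ℕ) :
    ∏ x ∈ Finset.Icc (a + 1) (a + m), (x - a) = m.factorial := by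
  induction m with
  | zero => simp
  | succ m ih =>
    have hins : Finset.Icc (a + 1) (a + (m + 1 : ℕ)) =
        insert (a + (m + 1)) (Finset.Icc (a + 1) (a + m)) := by
      ext x; simp only [Finset.mem_insert, Finset.mem_Icc]; push_cast; omega
    have hnot : (a + (m + 1 : ℤ)) ∉ Finset.Icc (a + 1) (a + (m : ℤ)) := by
      simp only [Finset.mem_Icc]; omega
    rw [hins, Finset.prod_insert hnot, ih]
    push_cast [Nat.factorial_succ]
    ring

lemma prod_refl (k : ℤ) (m : ℕ) :
    ∏ x ∈ Finset.Icc (k - m) (k - 1), (k - x) = m.factorial := by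
  have h0 := prod_shift 0 m
  simp only [zero_add, sub_zero] at h0
  rw [← h0]
  apply Finset.prod_nbij (fun x => k - x)
  · intro x hx; simp only [Finset.mem_Icc] at *; omega
  · intro x hx y hy hxy; dsimp at hxy; omega
  · intro y hy; simp only [Finset.coe_Icc, Set.mem_Icc, Set.mem_image] at *
    exact ⟨k - y, by omega, by omega⟩
  · intro x hx; rfl

lemma key_prod (n k : ℕ) (h1 : 1 ≤ k) (h2 : k ≤ n) :
    ∏ x ∈ (Finset.Icc (1 : ℤ) (n : ℤ)).erase (k : ℤ), |x - (k : ℤ)|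
      = ((k - 1).factorial : ℤ) * ((n - k).factorial : ℤ) := by
  have hsplit : (Finset.Icc (1 : ℤ) (n : ℤ)).erase (k : ℤ) =
      Finset.Icc (1 : ℤ) ((k : ℤ) - 1) ∪ Finset.Icc ((k : ℤ) + 1) (n : ℤ) := by
    ext x
    simp only [Finset.mem_erase, Finset.mem_Icc, Finset.mem_union]
    omega
  have hdisj : Disjoint (Finset.Icc (1 : ℤ) ((k : ℤ) - 1))
      (Finset.Icc ((k : ℤ) + 1) (n : ℤ)) := by
    rw [Finset.disjoint_left]; intro x hx hy
    simp only [Finset.mem_Icc] at hx hy; omega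
  rw [hsplit, Finset.prod_union hdisj]
  have h1' : ∏ x ∈ Finset.Icc (1 : ℤ) ((k : ℤ) - 1), |x - (k : ℤ)|
      = ((k - 1).factorial : ℤ) := by
    have hset : Finset.Icc (1 : ℤ) ((k : ℤ) - 1)
        = Finset.Icc ((k : ℤ) - ((k - 1 : ℕ) : ℤ)) ((k : ℤ) - 1) := by
      congr 1; push_cast; omega
    rw [hset, ← prod_refl (k : ℤ) (k - 1)]
    apply Finset.prod_congr rfl
    intro x hx; simp only [Finset.mem_Icc] at hx
    rw [abs_sub_comm, abs_of_nonneg (by omega)]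
  have h2' : ∏ x ∈ Finset.Icc ((k : ℤ) + 1) (n : ℤ), |x - (k : ℤ)|
      = ((n - k).factorial : ℤ) := by
    rw [show (n : ℤ) = (k : ℤ) + ((n - k : ℕ) : ℤ) by push_cast; omega]
    rw [← prod_shift (k : ℤ) (n - k)]
    apply Finset.prod_congr rfl
    intro x hx; simp only [Finset.mem_Icc] at hx
    rw [abs_of_nonneg (by omega)]
  rw [h1', h2']

lemma choose_two_le {N j : ℕ} (h1 : 0 < j) (h2 : j < N) : 2 ≤ N.choose j := by
  obtain ⟨M, rfl⟩ := Nat.exists_eq_succ_of_ne_zero (by omega : N ≠ 0)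
  obtain ⟨i, rfl⟩ := Nat.exists_eq_succ_of_ne_zero (by omega : j ≠ 0)
  rw [Nat.choose_succ_succ]
  have a1 : 0 < M.choose i := Nat.choose_pos (by omega)
  have a2 : 0 < M.choose i.succ := Nat.choose_pos (by omega)
  omega

-- factorial identities: (k-1)!(n-k)! * C(n-1, k-1) = (n-1)!
lemma fact_id (n k : ℕ) (h1 : 1 ≤ k) (h2 : k ≤ n) :
    (k - 1).factorial * (n - k).factorial * (n - 1).choose (k - 1) = (n - 1).factorial := by
  have h : k - 1 ≤ n - 1 := by omega
  have := Nat.choose_mul_factorial_mul_factorial h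
  have hnk : n - 1 - (k - 1) = n - k := by omega
  rw [hnk] at this
  rw [← this]; ring

lemma min_ineq (n k : ℕ) (hn : 2 ≤ n) (h1 : 1 ≤ k) (h2 : k ≤ n) :
    ((n + 1) / 2 - 1).factorial * (n / 2).factorial
      ≤ (k - 1).factorial * (n - k).factorial := by
  set m := (n + 1) / 2 with hm
  have hm1 : 1 ≤ m := by omega
  have hm2 : m ≤ n := by omega
  have hnm : n - m = n / 2 := by omega
  have hm1' : m - 1 = (n - 1) / 2 := by omega
  have hA := fact_id n k h1 h2
  have hB := fact_id n m hm1 hm2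
  have hc : (n - 1).choose (k - 1) ≤ (n - 1).choose (m - 1) := by
    rw [hm1']; exact Nat.choose_le_middle _ _
  have hcpos : 0 < (n - 1).choose (m - 1) := Nat.choose_pos (by omega)
  have hle : (m - 1).factorial * (n - m).factorial * (n - 1).choose (m - 1)
      ≤ (k - 1).factorial * (n - k).factorial * (n - 1).choose (m - 1) := by
    rw [hB, ← hA]
    exact Nat.mul_le_mul_left _ hc
  rw [← hnm]
  exact Nat.le_of_mul_le_mul_right hle hcpos

lemma max_ineq (n k : ℕ) (h1 : 1 ≤ k) (h2 : k ≤ n) :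
    (k - 1).factorial * (n - k).factorial ≤ (n - 1).factorial := by
  have hA := fact_id n k h1 h2
  have hc : 0 < (n - 1).choose (k - 1) := Nat.choose_pos (by omega)
  calc (k - 1).factorial * (n - k).factorial
      ≤ (k - 1).factorial * (n - k).factorial * (n - 1).choose (k - 1) :=
        Nat.le_mul_of_pos_right _ hc
    _ = (n - 1).factorial := hA

lemma eq_iff (n k : ℕ) (h1 : 1 ≤ k) (h2 : k ≤ n) :
    (k - 1).factorial * (n - k).factorial = (n - 1).factorial ↔ k = 1 ∨ k = n := by
  constructor
  · intro h
    by_contra hcon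
    push_neg at hcon
    have hk1 : 1 < k := by omega
    have hkn : k < n := by omega
    have hc : 2 ≤ (n - 1).choose (k - 1) := choose_two_le (by omega) (by omega)
    have hA := fact_id n k h1 h2
    have hpos : 0 < (k - 1).factorial * (n - k).factorial :=
      Nat.mul_pos (Nat.factorial_pos _) (Nat.factorial_pos _)
    rw [h] at hA
    nlinarith [Nat.factorial_pos (n - 1)]
  · rintro (rfl | rfl)
    · simp [Nat.factorial]
    · simp [Nat.factorial]

/-- Lemma `lem:produc-min-max-2`: for `C = {1,…,n}` (as integers),
(1) `min_{z∈C} Π_{x∈C, x≠z} |x-z| = (⌈n/2⌉-1)!·(⌊n/2⌋)!`, attained at `z = ⌈n/2⌉`;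
(2) `max_{z∈C} Π_{x∈C, x≠z} |x-z| = (n-1)!`, with maximizer set exactly `{1, n}`.
Here `⌈n/2⌉ = (n+1)/2` and `⌊n/2⌋ = n/2` with natural division. -/
theorem product_of_distances_min_max (n : ℕ) (hn : 2 ≤ n) :
    (∀ z ∈ Finset.Icc (1 : ℤ) (n : ℤ),
        ((((n + 1) / 2 - 1).factorial : ℤ) * ((n / 2).factorial : ℤ)
          ≤ ∏ x ∈ (Finset.Icc (1 : ℤ) (n : ℤ)).erase z, |x - z|)) ∧
    (∏ x ∈ (Finset.Icc (1 : ℤ) (n : ℤ)).erase (((n + 1) / 2 : ℕ) : ℤ),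
        |x - (((n + 1) / 2 : ℕ) : ℤ)|
      = (((n + 1) / 2 - 1).factorial : ℤ) * ((n / 2).factorial : ℤ)) ∧
    (∀ z ∈ Finset.Icc (1 : ℤ) (n : ℤ),
        ∏ x ∈ (Finset.Icc (1 : ℤ) (n : ℤ)).erase z, |x - z| ≤ ((n - 1).factorial : ℤ)) ∧
    (∀ z ∈ Finset.Icc (1 : ℤ) (n : ℤ),
        (∏ x ∈ (Finset.Icc (1 : ℤ) (n : ℤ)).erase z, |x - z| = ((n - 1).factorial : ℤ)
          ↔ z = 1 ∨ z = (n : ℤ))) := by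
  have hmem : ∀ z ∈ Finset.Icc (1 : ℤ) (n : ℤ), ∃ k : ℕ, z = (k : ℤ) ∧ 1 ≤ k ∧ k ≤ n := by
    intro z hz
    simp only [Finset.mem_Icc] at hz
    exact ⟨z.toNat, by omega, by omega, by omega⟩
  refine ⟨?_, ?_, ?_, ?_⟩
  · intro z hz
    obtain ⟨k, rfl, h1, h2⟩ := hmem z hz
    rw [key_prod n k h1 h2]
    exact_mod_cast min_ineq n k hn h1 h2
  · have h1 : 1 ≤ (n + 1) / 2 := by omega
    have h2 : (n + 1) / 2 ≤ n := by omega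
    rw [key_prod n ((n + 1) / 2) h1 h2]
    have : n - (n + 1) / 2 = n / 2 := by omega
    rw [this]
  · intro z hz
    obtain ⟨k, rfl, h1, h2⟩ := hmem z hz
    rw [key_prod n k h1 h2]
    exact_mod_cast max_ineq n k h1 h2
  · intro z hz
    obtain ⟨k, rfl, h1, h2⟩ := hmem z hz
    rw [key_prod n k h1 h2]
    have : ((k : ℤ) = 1 ∨ (k : ℤ) = (n : ℤ)) ↔ (k = 1 ∨ k = n) := by omega
    rw [this, ← eq_iff n k h1 h2]
    exact_mod_cast Iff.rfl
end

section
/- Let n ≥ 1 be an integer and let p, q ∈ ℝ with p > q > 0. Set x_j = (j−1)p for j = 1,…,n and y_j = (j−1)p − q. Then: (1) max over z ∈ {y_1,…,y_n} of Π_{i=1}^n |z − x_i| equals Π_{j=0}^{n−1} (q + pj), and this maximum is attained at z = y_1; (2) max over z ∈ {y_1,…,y_{n+1}} of Π_{i=1}^n |z − x_i| equals Π_{j=0}^{n−1} (max(p−q, q) + pj), and it is attained at y_1 or at y_{n+1}. -/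
open Finset

/-- The product `Π_{i=1}^n |z - x_i|` with `x_i = (i-1)p` (0-based: `x_i = i·p`). -/
noncomputable def gridProd (n : ℕ) (p z : ℝ) : ℝ := ∏ i : Fin n, |z - (i : ℝ) * p|

lemma gridProd_eval (n k : ℕ) (hk : k ≤ n) (p q : ℝ) (hq : 0 < q) (hpq : q < p) :
    gridProd n p ((k : ℝ) * p - q) =
      (∏ m ∈ range k, ((p - q) + (m : ℝ) * p)) * ∏ m ∈ range (n - k), (q + (m : ℝ) * p) := by
  have hp : 0 < p := hq.trans hpq
  unfold gridProd
  rw [Fin.prod_univ_eq_prod_range (fun i => |(k:ℝ)*p - q - (i:ℝ)*p|) n]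
  have hnk : n = k + (n - k) := by omega
  rw [hnk]
  rw [Finset.prod_range_add]
  congr 1
  · rw [← Finset.prod_range_reflect]
    refine Finset.prod_congr rfl fun j hj => ?_
    rw [Finset.mem_range] at hj
    have hc : ((k - 1 - j : ℕ) : ℝ) = (k : ℝ) - 1 - j := by
      have h1 : k - 1 - j = k - (1 + j) := by omega
      rw [h1, Nat.cast_sub (by omega)]
      push_cast; ring
    rw [hc]
    have he : (k:ℝ)*p - q - ((k:ℝ)-1-j)*p = (p - q) + j*p := by ring
    rw [he, abs_of_pos (add_pos_of_pos_of_nonneg (sub_pos.mpr hpq) (by positivity))]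
  · refine Finset.prod_congr (congrArg range (by omega)) fun j hj => ?_
    have he : (k:ℝ)*p - q - ((k + j : ℕ):ℝ)*p = -(q + j*p) := by push_cast; ring
    rw [he, abs_neg, abs_of_pos (by positivity)]

/-- Lemma `lem:product2`, cases (3) and (4): with `x_j = (j-1)p` and
`y_j = (j-1)p - q`,
(1) `max_{z∈{y_1,…,y_n}} Π_{i=1}^n |z - x_i| = Π_{j=0}^{n-1}(q + pj)`, attained at `y_1`;
(2) `max_{z∈{y_1,…,y_{n+1}}} Π_{i=1}^n |z - x_i| = Π_{j=0}^{n-1}(max(p-q,q) + pj)`, attained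
at `y_1` or `y_{n+1}`. -/
theorem interleaved_grid_max_product
    (n : ℕ) (hn : 1 ≤ n) (p q : ℝ) (hq : 0 < q) (hpq : q < p) :
    (∀ j : Fin n, gridProd n p ((j : ℝ) * p - q) ≤ ∏ j ∈ Finset.range n, (q + p * (j : ℝ))) ∧
    (gridProd n p (-q) = ∏ j ∈ Finset.range n, (q + p * (j : ℝ))) ∧
    (∀ j : Fin (n + 1),
      gridProd n p ((j : ℝ) * p - q) ≤ ∏ j ∈ Finset.range n, (max (p - q) q + p * (j : ℝ))) ∧
    (gridProd n p (-q) = ∏ j ∈ Finset.range n, (max (p - q) q + p * (j : ℝ)) ∨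
      gridProd n p ((n : ℝ) * p - q) = ∏ j ∈ Finset.range n, (max (p - q) q + p * (j : ℝ))) := by
  have hp : 0 < p := hq.trans hpq
  have hpq' : 0 < p - q := sub_pos.mpr hpq
  set M := max (p - q) q with hM
  have hMq : q ≤ M := le_max_right _ _
  have hMpq : p - q ≤ M := le_max_left _ _
  have hMpos : 0 < M := lt_of_lt_of_le hq hMq
  -- base value at y₁
  have hbase : gridProd n p (-q) = ∏ m ∈ range n, (q + (m : ℝ) * p) := by
    have h := gridProd_eval n 0 (Nat.zero_le n) p q hq hpq
    simpa using h
  have hBflip : ∏ m ∈ range n, (q + (m : ℝ) * p) = ∏ j ∈ range n, (q + p * (j : ℝ)) := by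
    exact Finset.prod_congr rfl fun j _ => by ring
  -- key inequality for (1)
  have key1 : ∀ k : ℕ, k < n →
      (∏ m ∈ range k, ((p - q) + (m : ℝ) * p)) * (∏ m ∈ range (n - k), (q + (m : ℝ) * p)) ≤
        ∏ m ∈ range n, (q + (m : ℝ) * p) := by
    intro k hk
    have hnk : n = (n - k) + k := by omega
    calc (∏ m ∈ range k, ((p - q) + (m : ℝ) * p)) * (∏ m ∈ range (n - k), (q + (m : ℝ) * p))
        ≤ (∏ m ∈ range k, (q + (((n - k : ℕ) + m : ℕ) : ℝ) * p)) *
            (∏ m ∈ range (n - k), (q + (m : ℝ) * p)) := by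
          apply mul_le_mul_of_nonneg_right _ (Finset.prod_nonneg fun m _ => by positivity)
          apply Finset.prod_le_prod (fun m _ => by positivity)
          intro m _
          push_cast
          have h1 : (1:ℝ) ≤ ((n - k : ℕ) : ℝ) := by
            exact_mod_cast (by omega : 1 ≤ n - k)
          nlinarith [hp.le, (Nat.cast_nonneg m : (0:ℝ) ≤ m)]
      _ = ∏ m ∈ range n, (q + (m : ℝ) * p) := by
          rw [mul_comm]
          conv_rhs => rw [hnk, Finset.prod_range_add]
  -- key inequality for (3)
  have key3 : ∀ k : ℕ, k ≤ n →
      (∏ m ∈ range k, ((p - q) + (m : ℝ) * p)) * (∏ m ∈ range (n - k), (q + (m : ℝ) * p)) ≤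
        ∏ m ∈ range n, (M + (m : ℝ) * p) := by
    intro k hk
    have hnk : n = k + (n - k) := by omega
    calc (∏ m ∈ range k, ((p - q) + (m : ℝ) * p)) * (∏ m ∈ range (n - k), (q + (m : ℝ) * p))
        ≤ (∏ m ∈ range k, (M + (m : ℝ) * p)) *
            (∏ m ∈ range (n - k), (M + ((k + m : ℕ) : ℝ) * p)) := by
          apply mul_le_mul
          · apply Finset.prod_le_prod (fun m _ => by positivity)
            intro m _
            have : (0:ℝ) ≤ (m:ℝ) * p := by positivity
            linarith
          · apply Finset.prod_le_prod (fun m _ => by positivity)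
            intro m _
            push_cast
            nlinarith [hp.le, (Nat.cast_nonneg k : (0:ℝ) ≤ k)]
          · exact Finset.prod_nonneg fun m _ => by positivity
          · exact Finset.prod_nonneg fun m _ => by positivity
      _ = ∏ m ∈ range n, (M + (m : ℝ) * p) := by
          conv_rhs => rw [hnk, Finset.prod_range_add]
  have hMflip : ∏ m ∈ range n, (M + (m : ℝ) * p) = ∏ j ∈ range n, (M + p * (j : ℝ)) := by
    exact Finset.prod_congr rfl fun j _ => by ring
  refine ⟨?_, ?_, ?_, ?_⟩
  · intro j
    rw [← hBflip, gridProd_eval n j.val (le_of_lt j.isLt) p q hq hpq]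
    exact key1 j.val j.isLt
  · rw [hbase, hBflip]
  · intro j
    rw [← hMflip, gridProd_eval n j.val (Nat.lt_succ_iff.mp j.isLt) p q hq hpq]
    exact key3 j.val (Nat.lt_succ_iff.mp j.isLt)
  · rcases le_total q (p - q) with h | h
    · right
      rw [gridProd_eval n n le_rfl p q hq hpq]
      simp only [Nat.sub_self, Finset.range_zero, Finset.prod_empty, mul_one]
      rw [← hMflip]
      refine Finset.prod_congr rfl fun m _ => ?_
      rw [hM, max_eq_left h]
    · left
      rw [hbase, ← hMflip]
      refine Finset.prod_congr rfl fun m _ => ?_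
      rw [hM, max_eq_right h]
end

section
/- Let n ≥ 4 be an integer, let τ > 0, and let s ≥ 2 be a real number. Define t_1,…,t_{2n} by: for even j ∈ {2,4,…,2n}, t_j = −((sn−2)/2)τ + ((j−2)s/2)τ; for odd j ∈ {1,3,…,2n−1}, t_j = t_{4⌈(j+1)/4⌉−2} + (−1)^{(j+1)/2}τ. Partition these points into the four classes C₁ = {t_{4j−2} : 1 ≤ j ≤ ⌈n/2⌉}, C₂ = {t_{4j} : 1 ≤ j ≤ ⌊n/2⌋}, C₃ = {t_{4j−3} : 1 ≤ j ≤ ⌈n/2⌉}, C₄ = {t_{4j−1} : 1 ≤ j ≤ ⌊n/2⌋}, and for k = 1,2,3,4 define c_k^min = min_{x∈C_k} Π_{p=1}^{4} Π_{y∈C_p, y≠x} |x − y|. Then min_{k=1,2,3,4} c_k^min ≥ τ^{2n−1} · s^{2n−3} · ((2⌊⌊n/2⌋/2⌋ − 1)!)⁴. -/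
set_option maxHeartbeats 1000000


open Finset

/-- Class `C₁ = {t_{4j-2} : 1 ≤ j ≤ ⌈n/2⌉}` (0-based: indices `4j+2`). -/
noncomputable def classC1 (n : ℕ) (t : ℕ → ℝ) : Finset ℝ :=
  Finset.univ.image fun j : Fin ((n + 1) / 2) => t (4 * (j : ℕ) + 2)

/-- Class `C₂ = {t_{4j} : 1 ≤ j ≤ ⌊n/2⌋}` (0-based: indices `4j+4`). -/
noncomputable def classC2 (n : ℕ) (t : ℕ → ℝ) : Finset ℝ :=
  Finset.univ.image fun j : Fin (n / 2) => t (4 * (j : ℕ) + 4)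

/-- Class `C₃ = {t_{4j-3} : 1 ≤ j ≤ ⌈n/2⌉}` (0-based: indices `4j+1`). -/
noncomputable def classC3 (n : ℕ) (t : ℕ → ℝ) : Finset ℝ :=
  Finset.univ.image fun j : Fin ((n + 1) / 2) => t (4 * (j : ℕ) + 1)

/-- Class `C₄ = {t_{4j-1} : 1 ≤ j ≤ ⌊n/2⌋}` (0-based: indices `4j+3`). -/
noncomputable def classC4 (n : ℕ) (t : ℕ → ℝ) : Finset ℝ :=
  Finset.univ.image fun j : Fin (n / 2) => t (4 * (j : ℕ) + 3)

/-- The product `Π_{p=1}^4 Π_{y ∈ C_p, y ≠ x} |x - y|`. -/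
noncomputable def classDistProd (n : ℕ) (t : ℕ → ℝ) (x : ℝ) : ℝ :=
  (∏ y ∈ (classC1 n t).erase x, |x - y|) * (∏ y ∈ (classC2 n t).erase x, |x - y|) *
  (∏ y ∈ (classC3 n t).erase x, |x - y|) * ∏ y ∈ (classC4 n t).erase x, |x - y|

/-- product of first `a` odd numbers `1·3·⋯·(2a-1)` -/
def oddP (a : ℕ) : ℕ := ∏ k ∈ Finset.range a, (2*k+1)
/-- product of first `a` even numbers `2·4·⋯·(2a)` -/
def evenP (a : ℕ) : ℕ := ∏ k ∈ Finset.range a, (2*k+2)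

lemma oddP_succ (a : ℕ) : oddP (a+1) = oddP a * (2*a+1) := Finset.prod_range_succ _ a
lemma evenP_succ (a : ℕ) : evenP (a+1) = evenP a * (2*a+2) := Finset.prod_range_succ _ a

lemma oddP_zero : oddP 0 = 1 := rfl
lemma evenP_zero : evenP 0 = 1 := rfl

lemma oddP_le_evenP (a : ℕ) : oddP a ≤ evenP a :=
  Finset.prod_le_prod' fun i _ => by omega

lemma evenP_mul_oddP (a : ℕ) : evenP a * oddP a = (2*a).factorial := by
  induction a with
  | zero => simp [oddP, evenP]
  | succ a ih =>
    rw [oddP_succ, evenP_succ, show 2*(a+1) = (2*a+1)+1 by ring, Nat.factorial_succ,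
      show (2*a+1) = (2*a)+1 by ring, Nat.factorial_succ, ← ih]
    ring

lemma fac_le_evenP_mul_oddP (a b : ℕ) : (a+b).factorial ≤ evenP a * oddP b := by
  rcases le_total a b with h | h
  · induction b, h using Nat.le_induction with
    | base => rw [show a+a = 2*a by ring]; exact (evenP_mul_oddP a).symm.le
    | succ b hb ih =>
      calc (a+(b+1)).factorial = (a+b+1) * (a+b).factorial := by
            rw [show a+(b+1) = (a+b)+1 by ring, Nat.factorial_succ]
        _ ≤ (2*b+1) * (evenP a * oddP b) := Nat.mul_le_mul (by omega) ih
        _ = evenP a * oddP (b+1) := by rw [oddP_succ]; ring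
  · induction a, h using Nat.le_induction with
    | base => rw [show b+b = 2*b by ring]; exact (evenP_mul_oddP b).symm.le
    | succ a ha ih =>
      calc (a+1+b).factorial = (a+b+1) * (a+b).factorial := by
            rw [show a+1+b = (a+b)+1 by ring, Nat.factorial_succ]
        _ ≤ (2*a+2) * (evenP a * oddP b) := Nat.mul_le_mul (by omega) ih
        _ = evenP (a+1) * oddP b := by rw [evenP_succ]; ring

lemma fac_add_le (a b : ℕ) : a.factorial * b.factorial ≤ (a+b).factorial :=
  Nat.le_of_dvd (a+b).factorial_pos (Nat.factorial_mul_factorial_dvd_factorial_add a b)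

lemma fac_sq_le (x y w : ℕ) (h : 2*w ≤ x + y) :
    w.factorial * w.factorial ≤ x.factorial * y.factorial := by
  set m := (x+y)/2 with hm
  have h1 : w ≤ m := by omega
  have h2 : w ≤ x + y - m := by omega
  have e1 : (x+y).choose x * (x.factorial * y.factorial) = (x+y).factorial := by
    have := Nat.choose_mul_factorial_mul_factorial (show x ≤ x+y by omega)
    rw [show x+y-x = y by omega] at this; rw [← this]; ring
  have e2 : (x+y).choose m * (m.factorial * (x+y-m).factorial) = (x+y).factorial := by
    have := Nat.choose_mul_factorial_mul_factorial (show m ≤ x+y by omega)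
    rw [← this]; ring
  have hc : (x+y).choose x ≤ (x+y).choose m := Nat.choose_le_middle x (x+y)
  have hpos : 0 < (x+y).choose x := Nat.choose_pos (by omega)
  have key : m.factorial * (x+y-m).factorial ≤ x.factorial * y.factorial := by
    have : (x+y).choose x * (m.factorial * (x+y-m).factorial)
        ≤ (x+y).choose x * (x.factorial * y.factorial) := by
      rw [e1]
      calc (x+y).choose x * (m.factorial * (x+y-m).factorial)
          ≤ (x+y).choose m * (m.factorial * (x+y-m).factorial) :=
            Nat.mul_le_mul_right _ hc
        _ = (x+y).factorial := e2
    exact Nat.le_of_mul_le_mul_left this hpos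
  calc w.factorial * w.factorial ≤ m.factorial * (x+y-m).factorial :=
        Nat.mul_le_mul (Nat.factorial_le h1) (Nat.factorial_le h2)
    _ ≤ x.factorial * y.factorial := key


noncomputable def PLr (s ε : ℝ) (L : ℕ) : ℝ := ∏ k ∈ Finset.range L, |(2*(k:ℝ)+2)*s + ε|
noncomputable def POr (s ε : ℝ) (L : ℕ) : ℝ := ∏ k ∈ Finset.range L, |(2*(k:ℝ)+1)*s + ε|

lemma PLr_nonneg (s ε : ℝ) (L : ℕ) : 0 ≤ PLr s ε L :=
  Finset.prod_nonneg fun _ _ => abs_nonneg _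
lemma POr_nonneg (s ε : ℝ) (L : ℕ) : 0 ≤ POr s ε L :=
  Finset.prod_nonneg fun _ _ => abs_nonneg _

lemma PLr_ge_even {s ε : ℝ} (hs : 2 ≤ s) (hε : 0 ≤ ε) (L : ℕ) :
    s^L * (evenP L : ℝ) ≤ PLr s ε L := by
  have : s^L * (evenP L : ℝ) = ∏ k ∈ Finset.range L, (s * (2*(k:ℝ)+2)) := by
    rw [Finset.prod_mul_distrib, Finset.prod_const, Finset.card_range, evenP]
    push_cast
    ring
  rw [this]
  apply Finset.prod_le_prod
  · intro k _; positivity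
  · intro k _
    have hk : (0:ℝ) ≤ (k:ℝ) := k.cast_nonneg
    have h0 : 0 ≤ (2*(k:ℝ)+2)*s + ε := by nlinarith
    rw [abs_of_nonneg h0]; nlinarith

lemma PLr_ge_odd {s ε : ℝ} (hs : 2 ≤ s) (hε : -2 ≤ ε) (L : ℕ) :
    s^L * (oddP L : ℝ) ≤ PLr s ε L := by
  have : s^L * (oddP L : ℝ) = ∏ k ∈ Finset.range L, (s * (2*(k:ℝ)+1)) := by
    rw [Finset.prod_mul_distrib, Finset.prod_const, Finset.card_range, oddP]
    push_cast
    ring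
  rw [this]
  apply Finset.prod_le_prod
  · intro k _; positivity
  · intro k _
    have hk : (0:ℝ) ≤ (k:ℝ) := k.cast_nonneg
    have h0 : 0 ≤ (2*(k:ℝ)+2)*s + ε := by nlinarith
    rw [abs_of_nonneg h0]; nlinarith

lemma POr_ge_odd {s ε : ℝ} (hs : 2 ≤ s) (hε : 0 ≤ ε) (L : ℕ) :
    s^L * (oddP L : ℝ) ≤ POr s ε L := by
  have : s^L * (oddP L : ℝ) = ∏ k ∈ Finset.range L, (s * (2*(k:ℝ)+1)) := by
    rw [Finset.prod_mul_distrib, Finset.prod_const, Finset.card_range, oddP]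
    push_cast
    ring
  rw [this]
  apply Finset.prod_le_prod
  · intro k _; positivity
  · intro k _
    have hk : (0:ℝ) ≤ (k:ℝ) := k.cast_nonneg
    have h0 : 0 ≤ (2*(k:ℝ)+1)*s + ε := by nlinarith
    rw [abs_of_nonneg h0]; nlinarith

lemma POr_ge_sub {s : ℝ} (hs : 2 ≤ s) (L : ℕ) :
    (s-1) * (s^L * (evenP L : ℝ)) ≤ POr s (-1) (L+1) := by
  rw [POr, Finset.prod_range_succ']
  have h0 : |(2*((0:ℕ):ℝ)+1)*s + (-1)| = s - 1 := by
    rw [show (2*((0:ℕ):ℝ)+1)*s + (-1) = s - 1 by push_cast; ring, abs_of_nonneg (by linarith)]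
  rw [h0, mul_comm _ (s-1)]
  apply mul_le_mul_of_nonneg_left _ (by linarith : (0:ℝ) ≤ s - 1)
  have : s^L * (evenP L : ℝ) = ∏ k ∈ Finset.range L, (s * (2*(k:ℝ)+2)) := by
    rw [Finset.prod_mul_distrib, Finset.prod_const, Finset.card_range, evenP]
    push_cast
    ring
  rw [this]
  apply Finset.prod_le_prod
  · intro k _; positivity
  · intro k _
    have hk : (0:ℝ) ≤ (k:ℝ) := k.cast_nonneg
    have h0 : 0 ≤ (2*((k:ℝ)+1)+1)*s + (-1) := by nlinarith
    have : |(2*(((k+1):ℕ):ℝ)+1)*s + (-1)| = (2*((k:ℝ)+1)+1)*s + (-1) := by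
      push_cast; rw [abs_of_nonneg h0]
    rw [this]; nlinarith


lemma left_even (s ε : ℝ) (i : ℕ) :
    ∏ j ∈ Finset.range i, |(2*((i:ℝ) - (j:ℝ)))*s + ε| = PLr s ε i := by
  rw [PLr, ← Finset.prod_range_reflect]
  apply Finset.prod_congr rfl
  intro j hj
  simp only [Finset.mem_range] at hj
  have h1 : ((i - 1 - j : ℕ) : ℝ) = (i:ℝ) - 1 - (j:ℝ) := by
    rw [Nat.sub_sub, Nat.cast_sub (by omega)]; push_cast; ring
  rw [h1]; congr 1; ring

lemma left_odd (s ε : ℝ) (i : ℕ) :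
    ∏ j ∈ Finset.range i, |(2*((i:ℝ) - (j:ℝ)) - 1)*s + ε| = POr s ε i := by
  rw [POr, ← Finset.prod_range_reflect]
  apply Finset.prod_congr rfl
  intro j hj
  simp only [Finset.mem_range] at hj
  have h1 : ((i - 1 - j : ℕ) : ℝ) = (i:ℝ) - 1 - (j:ℝ) := by
    rw [Nat.sub_sub, Nat.cast_sub (by omega)]; push_cast; ring
  rw [h1]; congr 1; ring

lemma split_even (s ε : ℝ) {i m : ℕ} (him : i < m) :
    ∏ j ∈ Finset.range m, |(2*((i:ℝ) - (j:ℝ)))*s + ε|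
      = PLr s ε i * |ε| * PLr s (-ε) (m-1-i) := by
  obtain ⟨R, rfl⟩ : ∃ R, m = i + 1 + R := ⟨m - (i+1), by omega⟩
  rw [show i+1+R-1-i = R by omega]
  rw [Finset.prod_range_add, Finset.prod_range_succ, left_even]
  have hc : |(2*((i:ℝ) - (i:ℝ)))*s + ε| = |ε| := by norm_num
  rw [hc]
  congr 1
  rw [PLr]
  apply Finset.prod_congr rfl
  intro k _
  rw [show (2*((i:ℝ) - ((i+1+k : ℕ):ℝ)))*s + ε = -((2*(k:ℝ)+2)*s + (-ε)) by push_cast; ring,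
    abs_neg]

lemma split_even_erase (s ε : ℝ) {i m : ℕ} (him : i < m) :
    ∏ j ∈ (Finset.range m).erase i, |(2*((i:ℝ) - (j:ℝ)))*s + ε|
      = PLr s ε i * PLr s (-ε) (m-1-i) := by
  have hu : (Finset.range m).erase i = Finset.range i ∪ Finset.Ico (i+1) m := by
    ext j; simp only [Finset.mem_erase, Finset.mem_range, Finset.mem_union, Finset.mem_Ico]
    omega
  have hd : Disjoint (Finset.range i) (Finset.Ico (i+1) m) := by
    rw [Finset.disjoint_left]
    intro a ha hb
    simp only [Finset.mem_range] at ha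
    simp only [Finset.mem_Ico] at hb
    omega
  rw [hu, Finset.prod_union hd, left_even, Finset.prod_Ico_eq_prod_range]
  congr 1
  rw [show m - (i+1) = m-1-i by omega, PLr]
  apply Finset.prod_congr rfl
  intro k _
  rw [show (2*((i:ℝ) - ((i+1+k : ℕ):ℝ)))*s + ε = -((2*(k:ℝ)+2)*s + (-ε)) by push_cast; ring,
    abs_neg]

lemma split_even_left (s ε : ℝ) (m : ℕ) :
    ∏ j ∈ Finset.range m, |(2*((m:ℝ) - (j:ℝ)))*s + ε| = PLr s ε m :=
  left_even s ε m

lemma split_odd (s ε : ℝ) {i m : ℕ} (him : i ≤ m) :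
    ∏ j ∈ Finset.range m, |(2*((i:ℝ) - (j:ℝ)) - 1)*s + ε|
      = POr s ε i * POr s (-ε) (m-i) := by
  obtain ⟨R, rfl⟩ : ∃ R, m = i + R := ⟨m - i, by omega⟩
  rw [show i+R-i = R by omega]
  rw [Finset.prod_range_add, left_odd]
  congr 1
  rw [POr]
  apply Finset.prod_congr rfl
  intro k _
  rw [show (2*((i:ℝ) - ((i+k : ℕ):ℝ)) - 1)*s + ε = -((2*(k:ℝ)+1)*s + (-ε)) by push_cast; ring,
    abs_neg]

lemma split_odd' (s ε : ℝ) {i m : ℕ} (him : i < m) :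
    ∏ j ∈ Finset.range m, |(2*((i:ℝ) - (j:ℝ)) + 1)*s + ε|
      = POr s ε (i+1) * POr s (-ε) (m-1-i) := by
  obtain ⟨R, rfl⟩ : ∃ R, m = (i + 1) + R := ⟨m - (i+1), by omega⟩
  rw [show i+1+R-1-i = R by omega]
  rw [Finset.prod_range_add]
  congr 1
  · rw [POr, ← Finset.prod_range_reflect]
    apply Finset.prod_congr rfl
    intro j hj
    simp only [Finset.mem_range] at hj
    have h1 : ((i + 1 - 1 - j : ℕ) : ℝ) = (i:ℝ) - (j:ℝ) := by
      rw [show i+1-1-j = i-j by omega, Nat.cast_sub (by omega)]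
    rw [h1]; congr 1; ring
  · rw [POr]
    apply Finset.prod_congr rfl
    intro k _
    rw [show (2*((i:ℝ) - ((i+1+k : ℕ):ℝ)) + 1)*s + ε = -((2*(k:ℝ)+1)*s + (-ε)) by push_cast; ring,
      abs_neg]

lemma mul4_le {a1 a2 a3 a4 b1 b2 b3 b4 : ℝ} (h1 : a1 ≤ b1) (h2 : a2 ≤ b2) (h3 : a3 ≤ b3)
    (h4 : a4 ≤ b4) (n1 : 0 ≤ a1) (n2 : 0 ≤ a2) (n3 : 0 ≤ a3) (n4 : 0 ≤ a4) :
    a1*a2*a3*a4 ≤ b1*b2*b3*b4 := by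
  have m1 : 0 ≤ b1 := le_trans n1 h1
  have m2 : 0 ≤ b2 := le_trans n2 h2
  have m3 : 0 ≤ b3 := le_trans n3 h3
  exact mul_le_mul (mul_le_mul (mul_le_mul h1 h2 n2 m1) h3 n3 (mul_nonneg m1 m2)) h4 n4
    (mul_nonneg (mul_nonneg m1 m2) m3)

lemma caseC1 (M1 M2 q i : ℕ) (s : ℝ) (hs : 2 ≤ s)
    (hM : M2 ≤ M1) (hM' : M1 ≤ M2 + 1) (hM2 : 2 ≤ M2) (hq : 2*q ≤ M2) (hq1 : 1 ≤ q)
    (hi : i < M1) :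
    s^(2*(M1+M2)-3) * ((2*q-1).factorial : ℝ)^4 ≤
    (∏ j ∈ (Finset.range M1).erase i, |(2*((i:ℝ) - (j:ℝ)))*s + 0|) *
    (∏ j ∈ Finset.range M2, |(2*((i:ℝ) - (j:ℝ)) - 1)*s + 0|) *
    (∏ j ∈ Finset.range M1, |(2*((i:ℝ) - (j:ℝ)))*s + 1|) *
    (∏ j ∈ Finset.range M2, |(2*((i:ℝ) - (j:ℝ)))*s + (-1)|) := by
  have hs0 : (0:ℝ) < s := lt_of_lt_of_le two_pos hs
  have hs1 : (1:ℝ) ≤ s := by linarith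
  obtain ⟨R1, hR1⟩ : ∃ R1, M1 = i + R1 + 1 := ⟨M1-i-1, by omega⟩
  have hiM2 : i ≤ M2 := by omega
  have e1 : (∏ j ∈ (Finset.range M1).erase i, |(2*((i:ℝ) - (j:ℝ)))*s + 0|)
      = PLr s 0 i * PLr s 0 R1 := by
    rw [split_even_erase s 0 hi, show M1-1-i = R1 by omega, neg_zero]
  have e2 : (∏ j ∈ Finset.range M2, |(2*((i:ℝ) - (j:ℝ)) - 1)*s + 0|)
      = POr s 0 i * POr s 0 (M2-i) := by
    rw [split_odd s 0 hiM2, neg_zero]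
  have e3 : (∏ j ∈ Finset.range M1, |(2*((i:ℝ) - (j:ℝ)))*s + 1|)
      = PLr s 1 i * PLr s (-1) R1 := by
    rw [split_even s 1 hi, show M1-1-i = R1 by omega, abs_one, mul_one]
  rw [e1, e2, e3]
  have b1 : s^i * (evenP i:ℝ) * (s^R1 * (evenP R1:ℝ)) ≤ PLr s 0 i * PLr s 0 R1 :=
    mul_le_mul (PLr_ge_even hs le_rfl i) (PLr_ge_even hs le_rfl R1) (by positivity)
      (PLr_nonneg s 0 i)
  have b3 : s^i * (evenP i:ℝ) * (s^R1 * (oddP R1:ℝ)) ≤ PLr s 1 i * PLr s (-1) R1 :=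
    mul_le_mul (PLr_ge_even hs (by norm_num) i) (PLr_ge_odd hs (by norm_num) R1) (by positivity)
      (PLr_nonneg s 1 i)
  rcases Nat.lt_or_ge i M2 with hiM | hiM
  · -- generic case i < M2
    obtain ⟨R2, hR2⟩ : ∃ R2, M2 = i + R2 + 1 := ⟨M2-i-1, by omega⟩
    have e2' : POr s 0 i * POr s 0 (M2-i) = POr s 0 i * POr s 0 (R2+1) := by
      rw [show M2-i = R2+1 by omega]
    rw [e2']
    have e4 : (∏ j ∈ Finset.range M2, |(2*((i:ℝ) - (j:ℝ)))*s + (-1)|)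
        = PLr s (-1) i * PLr s 1 R2 := by
      rw [split_even s (-1) hiM, show M2-1-i = R2 by omega, abs_neg, abs_one, mul_one, neg_neg]
    rw [e4]
    have b2 : s^i * (oddP i:ℝ) * (s^(R2+1) * (oddP (R2+1):ℝ)) ≤ POr s 0 i * POr s 0 (R2+1) :=
      mul_le_mul (POr_ge_odd hs le_rfl i) (POr_ge_odd hs le_rfl (R2+1)) (by positivity)
        (POr_nonneg s 0 i)
    have b4 : s^i * (oddP i:ℝ) * (s^R2 * (evenP R2:ℝ)) ≤ PLr s (-1) i * PLr s 1 R2 :=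
      mul_le_mul (PLr_ge_odd hs (by norm_num) i) (PLr_ge_even hs (by norm_num) R2) (by positivity)
        (PLr_nonneg s (-1) i)
    have hnat : (2*q-1).factorial^4 ≤
        ((evenP i * oddP i) * (evenP R1 * oddP (R2+1))) *
        ((evenP i * oddP R1) * (evenP R2 * oddP i)) := by
      calc (2*q-1).factorial^4
          = ((2*q-1).factorial * (2*q-1).factorial) *
            ((2*q-1).factorial * (2*q-1).factorial) := by ring
        _ ≤ ((i+i).factorial * (R1+(R2+1)).factorial) *
            ((i+R1).factorial * (R2+i).factorial) :=
            Nat.mul_le_mul (fac_sq_le _ _ _ (by omega)) (fac_sq_le _ _ _ (by omega))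
        _ ≤ ((evenP i * oddP i) * (evenP R1 * oddP (R2+1))) *
            ((evenP i * oddP R1) * (evenP R2 * oddP i)) :=
            Nat.mul_le_mul (Nat.mul_le_mul (fac_le_evenP_mul_oddP i i)
             (fac_le_evenP_mul_oddP R1 (R2+1)))
             (Nat.mul_le_mul (fac_le_evenP_mul_oddP i R1) (fac_le_evenP_mul_oddP R2 i))
    calc s^(2*(M1+M2)-3) * ((2*q-1).factorial : ℝ)^4
        ≤ s^(2*(M1+M2)-3) * ((((evenP i * oddP i) * (evenP R1 * oddP (R2+1))) *
            ((evenP i * oddP R1) * (evenP R2 * oddP i)) : ℕ) : ℝ) := by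
          apply mul_le_mul_of_nonneg_left _ (by positivity)
          calc ((2*q-1).factorial : ℝ)^4 = (((2*q-1).factorial^4 : ℕ) : ℝ) := by push_cast; ring
            _ ≤ _ := Nat.cast_le.2 hnat
      _ = (s^i * (evenP i:ℝ) * (s^R1 * (evenP R1:ℝ))) *
          (s^i * (oddP i:ℝ) * (s^(R2+1) * (oddP (R2+1):ℝ))) *
          (s^i * (evenP i:ℝ) * (s^R1 * (oddP R1:ℝ))) *
          (s^i * (oddP i:ℝ) * (s^R2 * (evenP R2:ℝ))) := by
          rw [show 2*(M1+M2)-3 = (i + R1) + (i + (R2+1)) + (i + R1) + (i + R2) by omega]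
          push_cast; ring
      _ ≤ _ := mul4_le b1 b2 b3 b4 (by positivity) (by positivity) (by positivity) (by positivity)
  · -- edge case i = M2 (so M1 = M2+1, R1 = 0)
    have hie : i = M2 := by omega
    have hR10 : R1 = 0 := by omega
    have e4 : (∏ j ∈ Finset.range M2, |(2*((i:ℝ) - (j:ℝ)))*s + (-1)|) = PLr s (-1) M2 := by
      rw [hie]; exact split_even_left s (-1) M2
    rw [e4]
    have b4 : s^M2 * (oddP M2:ℝ) ≤ PLr s (-1) M2 := PLr_ge_odd hs (by norm_num) M2
    have b2 : s^i * (oddP i:ℝ) * (s^(M2-i) * (oddP (M2-i):ℝ)) ≤ POr s 0 i * POr s 0 (M2-i) :=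
      mul_le_mul (POr_ge_odd hs le_rfl i) (POr_ge_odd hs le_rfl (M2-i)) (by positivity)
        (POr_nonneg s 0 i)
    have hnat : (2*q-1).factorial^4 ≤
        ((evenP M2 * oddP M2) * (evenP M2 * oddP M2)) := by
      have h1 : (2*q-1).factorial * (2*q-1).factorial ≤ (2*M2).factorial := by
        calc (2*q-1).factorial * (2*q-1).factorial ≤ ((2*q-1)+(2*q-1)).factorial :=
              fac_add_le _ _
          _ ≤ (2*M2).factorial := Nat.factorial_le (by omega)
      calc (2*q-1).factorial^4
          = ((2*q-1).factorial * (2*q-1).factorial) *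
            ((2*q-1).factorial * (2*q-1).factorial) := by ring
        _ ≤ (2*M2).factorial * (2*M2).factorial := Nat.mul_le_mul h1 h1
        _ = ((evenP M2 * oddP M2) * (evenP M2 * oddP M2)) := by rw [evenP_mul_oddP]
    calc s^(2*(M1+M2)-3) * ((2*q-1).factorial : ℝ)^4
        ≤ s^(2*(M1+M2)-3) * ((((evenP M2 * oddP M2) * (evenP M2 * oddP M2) : ℕ)) : ℝ) := by
          apply mul_le_mul_of_nonneg_left _ (by positivity)
          calc ((2*q-1).factorial : ℝ)^4 = (((2*q-1).factorial^4 : ℕ) : ℝ) := by push_cast; ring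
            _ ≤ _ := Nat.cast_le.2 hnat
      _ ≤ s^(2*(M1+M2)-2) * ((((evenP M2 * oddP M2) * (evenP M2 * oddP M2) : ℕ)) : ℝ) := by
          apply mul_le_mul_of_nonneg_right _ (by positivity)
          exact pow_le_pow_right₀ hs1 (by omega)
      _ = (s^i * (evenP i:ℝ) * (s^R1 * (evenP R1:ℝ))) *
          (s^i * (oddP i:ℝ) * (s^(M2-i) * (oddP (M2-i):ℝ))) *
          (s^i * (evenP i:ℝ) * (s^R1 * (oddP R1:ℝ))) *
          (s^M2 * (oddP M2:ℝ)) := by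
          rw [hie, hR10, show M2-M2 = 0 by omega,
            show 2*(M1+M2)-2 = (M2+0) + (M2+0) + (M2+0) + M2 by omega]
          simp [oddP_zero, evenP_zero]
          push_cast; ring
      _ ≤ _ := mul4_le b1 b2 b3 b4 (by positivity) (by positivity) (by positivity) (by positivity)

lemma PLr_zero (s ε : ℝ) : PLr s ε 0 = 1 := rfl
lemma POr_zero (s ε : ℝ) : POr s ε 0 = 1 := rfl

lemma caseC2 (M1 M2 q i : ℕ) (s : ℝ) (hs : 2 ≤ s)
    (hM : M2 ≤ M1) (hM' : M1 ≤ M2 + 1) (hM2 : 2 ≤ M2) (hq : 2*q ≤ M2) (hq1 : 1 ≤ q)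
    (hi : i < M2) :
    s^(2*(M1+M2)-3) * ((2*q-1).factorial : ℝ)^4 ≤
    (∏ j ∈ Finset.range M1, |(2*((i:ℝ) - (j:ℝ)) + 1)*s + 0|) *
    (∏ j ∈ (Finset.range M2).erase i, |(2*((i:ℝ) - (j:ℝ)))*s + 0|) *
    (∏ j ∈ Finset.range M1, |(2*((i:ℝ) - (j:ℝ)) + 1)*s + 1|) *
    (∏ j ∈ Finset.range M2, |(2*((i:ℝ) - (j:ℝ)) + 1)*s + (-1)|) := by
  have hs0 : (0:ℝ) < s := lt_of_lt_of_le two_pos hs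
  have hs1 : (1:ℝ) ≤ s := by linarith
  have hsm : (0:ℝ) ≤ s - 1 := by linarith
  have hiM1 : i < M1 := by omega
  obtain ⟨R1, hR1⟩ : ∃ R1, M1 = i + R1 + 1 := ⟨M1-i-1, by omega⟩
  obtain ⟨R2, hR2⟩ : ∃ R2, M2 = i + R2 + 1 := ⟨M2-i-1, by omega⟩
  have e1 : (∏ j ∈ Finset.range M1, |(2*((i:ℝ) - (j:ℝ)) + 1)*s + 0|)
      = POr s 0 (i+1) * POr s 0 R1 := by
    rw [split_odd' s 0 hiM1, show M1-1-i = R1 by omega, neg_zero]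
  have e2 : (∏ j ∈ (Finset.range M2).erase i, |(2*((i:ℝ) - (j:ℝ)))*s + 0|)
      = PLr s 0 i * PLr s 0 R2 := by
    rw [split_even_erase s 0 hi, show M2-1-i = R2 by omega, neg_zero]
  have e3 : (∏ j ∈ Finset.range M1, |(2*((i:ℝ) - (j:ℝ)) + 1)*s + 1|)
      = POr s 1 (i+1) * POr s (-1) R1 := by
    rw [split_odd' s 1 hiM1, show M1-1-i = R1 by omega]
  have e4 : (∏ j ∈ Finset.range M2, |(2*((i:ℝ) - (j:ℝ)) + 1)*s + (-1)|)
      = POr s (-1) (i+1) * POr s 1 R2 := by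
    rw [split_odd' s (-1) hi, show M2-1-i = R2 by omega, neg_neg]
  rw [e1, e2, e3, e4]
  have b2 : s^i * (evenP i:ℝ) * (s^R2 * (evenP R2:ℝ)) ≤ PLr s 0 i * PLr s 0 R2 :=
    mul_le_mul (PLr_ge_even hs le_rfl i) (PLr_ge_even hs le_rfl R2) (by positivity)
      (PLr_nonneg s 0 i)
  have b4 : ((s-1) * (s^i * (evenP i:ℝ))) * (s^R2 * (oddP R2:ℝ))
      ≤ POr s (-1) (i+1) * POr s 1 R2 :=
    mul_le_mul (POr_ge_sub hs i) (POr_ge_odd hs (by norm_num) R2) (by positivity)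
      (POr_nonneg s (-1) (i+1))
  rcases Nat.eq_zero_or_pos R1 with hR10 | hR1pos
  · -- edge: i = M1 - 1, hence M1 = M2, R2 = 0
    have hR20 : R2 = 0 := by omega
    subst hR10 hR20
    have b1 : s^(i+1) * (oddP (i+1):ℝ) * 1 ≤ POr s 0 (i+1) * POr s 0 0 := by
      rw [POr_zero, mul_one, mul_one]; exact POr_ge_odd hs le_rfl (i+1)
    have b3 : s^(i+1) * (oddP (i+1):ℝ) * 1 ≤ POr s 1 (i+1) * POr s (-1) 0 := by
      rw [POr_zero, mul_one, mul_one]; exact POr_ge_odd hs (by norm_num) (i+1)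
    have hnat : (2*q-1).factorial^4 ≤
        ((evenP i * oddP (i+1)) * (evenP i * oddP (i+1))) := by
      have h1 : (2*q-1).factorial * (2*q-1).factorial ≤ (i+(i+1)).factorial := by
        calc (2*q-1).factorial * (2*q-1).factorial ≤ ((2*q-1)+(2*q-1)).factorial :=
              fac_add_le _ _
          _ ≤ (i+(i+1)).factorial := Nat.factorial_le (by omega)
      calc (2*q-1).factorial^4
          = ((2*q-1).factorial * (2*q-1).factorial) *
            ((2*q-1).factorial * (2*q-1).factorial) := by ring
        _ ≤ (i+(i+1)).factorial * (i+(i+1)).factorial := Nat.mul_le_mul h1 h1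
        _ ≤ ((evenP i * oddP (i+1)) * (evenP i * oddP (i+1))) :=
            Nat.mul_le_mul (fac_le_evenP_mul_oddP i (i+1)) (fac_le_evenP_mul_oddP i (i+1))
    calc s^(2*(M1+M2)-3) * ((2*q-1).factorial : ℝ)^4
        ≤ s^(2*(M1+M2)-3) * ((((evenP i * oddP (i+1)) * (evenP i * oddP (i+1)) : ℕ)) : ℝ) := by
          apply mul_le_mul_of_nonneg_left _ (by positivity)
          calc ((2*q-1).factorial : ℝ)^4 = (((2*q-1).factorial^4 : ℕ) : ℝ) := by push_cast; ring
            _ ≤ _ := Nat.cast_le.2 hnat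
      _ ≤ (s-1) * (s^(2*(M1+M2)-2) *
            ((((evenP i * oddP (i+1)) * (evenP i * oddP (i+1)) : ℕ)) : ℝ)) := by
          have h1 : s^(2*(M1+M2)-3) * ((((evenP i * oddP (i+1)) * (evenP i * oddP (i+1)) : ℕ)) : ℝ)
              ≤ s^(2*(M1+M2)-2) * ((((evenP i * oddP (i+1)) * (evenP i * oddP (i+1)) : ℕ)) : ℝ) := by
            apply mul_le_mul_of_nonneg_right _ (by positivity)
            exact pow_le_pow_right₀ hs1 (by omega)
          nlinarith [h1, mul_nonneg (pow_nonneg hs0.le (2*(M1+M2)-2))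
            (Nat.cast_nonneg ((evenP i * oddP (i+1)) * (evenP i * oddP (i+1))))]
      _ = (s^(i+1) * (oddP (i+1):ℝ) * 1) * (s^i * (evenP i:ℝ) * (s^0 * (evenP 0:ℝ))) *
          (s^(i+1) * (oddP (i+1):ℝ) * 1) * (((s-1) * (s^i * (evenP i:ℝ))) * (s^0 * (oddP 0:ℝ))) := by
          rw [show 2*(M1+M2)-2 = (i+1) + i + (i+1) + i by omega]
          simp only [oddP_zero, evenP_zero]
          push_cast; ring
      _ ≤ _ := mul4_le b1 b2 b3 b4 (by positivity) (by positivity) (by positivity)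
            (mul_nonneg (mul_nonneg hsm (by positivity)) (by positivity))
  · -- generic: R1 ≥ 1
    obtain ⟨R1', rfl⟩ : ∃ R1', R1 = R1' + 1 := ⟨R1-1, by omega⟩
    have b1 : s^(i+1) * (oddP (i+1):ℝ) * (s^(R1'+1) * (oddP (R1'+1):ℝ))
        ≤ POr s 0 (i+1) * POr s 0 (R1'+1) :=
      mul_le_mul (POr_ge_odd hs le_rfl (i+1)) (POr_ge_odd hs le_rfl (R1'+1)) (by positivity)
        (POr_nonneg s 0 (i+1))
    have b3 : (s^(i+1) * (oddP (i+1):ℝ)) * ((s-1) * (s^R1' * (evenP R1':ℝ)))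
        ≤ POr s 1 (i+1) * POr s (-1) (R1'+1) :=
      mul_le_mul (POr_ge_odd hs (by norm_num) (i+1)) (POr_ge_sub hs R1')
        (mul_nonneg hsm (by positivity)) (POr_nonneg s 1 (i+1))
    have hnat : (2*q-1).factorial^4 ≤
        ((evenP i * oddP (i+1)) * (evenP R1' * oddP R2)) *
        ((evenP i * oddP (i+1)) * (evenP R2 * oddP (R1'+1))) := by
      calc (2*q-1).factorial^4
          = ((2*q-1).factorial * (2*q-1).factorial) *
            ((2*q-1).factorial * (2*q-1).factorial) := by ring
        _ ≤ ((i+(i+1)).factorial * (R1'+R2).factorial) *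
            ((i+(i+1)).factorial * (R2+(R1'+1)).factorial) :=
            Nat.mul_le_mul (fac_sq_le _ _ _ (by omega)) (fac_sq_le _ _ _ (by omega))
        _ ≤ _ :=
            Nat.mul_le_mul (Nat.mul_le_mul (fac_le_evenP_mul_oddP i (i+1))
              (fac_le_evenP_mul_oddP R1' R2))
              (Nat.mul_le_mul (fac_le_evenP_mul_oddP i (i+1))
              (fac_le_evenP_mul_oddP R2 (R1'+1)))
    set K : ℕ := ((evenP i * oddP (i+1)) * (evenP R1' * oddP R2)) *
        ((evenP i * oddP (i+1)) * (evenP R2 * oddP (R1'+1))) with hK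
    calc s^(2*(M1+M2)-3) * ((2*q-1).factorial : ℝ)^4
        ≤ s^(2*(M1+M2)-3) * ((K:ℕ) : ℝ) := by
          apply mul_le_mul_of_nonneg_left _ (by positivity)
          calc ((2*q-1).factorial : ℝ)^4 = (((2*q-1).factorial^4 : ℕ) : ℝ) := by push_cast; ring
            _ ≤ _ := Nat.cast_le.2 hnat
      _ ≤ ((s-1)*(s-1)) * (s^(2*(M1+M2)-3) * ((K:ℕ) : ℝ)) := by
          have h11 : (1:ℝ) ≤ (s-1)*(s-1) := by nlinarith
          nlinarith [mul_nonneg (pow_nonneg hs0.le (2*(M1+M2)-3)) (Nat.cast_nonneg K)]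
      _ = (s^(i+1) * (oddP (i+1):ℝ) * (s^(R1'+1) * (oddP (R1'+1):ℝ))) *
          (s^i * (evenP i:ℝ) * (s^R2 * (evenP R2:ℝ))) *
          ((s^(i+1) * (oddP (i+1):ℝ)) * ((s-1) * (s^R1' * (evenP R1':ℝ)))) *
          (((s-1) * (s^i * (evenP i:ℝ))) * (s^R2 * (oddP R2:ℝ))) := by
          rw [hK, show 2*(M1+M2)-3 = ((i+1) + (R1'+1)) + (i + R2) + ((i+1) + R1') + (i + R2)
            by omega]
          push_cast; ring
      _ ≤ _ := mul4_le b1 b2 b3 b4 (by positivity) (by positivity)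
            (mul_nonneg (by positivity) (mul_nonneg hsm (by positivity)))
            (mul_nonneg (mul_nonneg hsm (by positivity)) (by positivity))

lemma caseC3 (M1 M2 q i : ℕ) (s : ℝ) (hs : 2 ≤ s)
    (hM : M2 ≤ M1) (hM' : M1 ≤ M2 + 1) (hM2 : 2 ≤ M2) (hq : 2*q ≤ M2) (hq1 : 1 ≤ q)
    (hi : i < M1) :
    s^(2*(M1+M2)-3) * ((2*q-1).factorial : ℝ)^4 ≤
    (∏ j ∈ Finset.range M1, |(2*((i:ℝ) - (j:ℝ)))*s + (-1)|) *
    (∏ j ∈ Finset.range M2, |(2*((i:ℝ) - (j:ℝ)) - 1)*s + (-1)|) *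
    (∏ j ∈ (Finset.range M1).erase i, |(2*((i:ℝ) - (j:ℝ)))*s + 0|) *
    (∏ j ∈ Finset.range M2, |(2*((i:ℝ) - (j:ℝ)))*s + (-2)|) := by
  have hs0 : (0:ℝ) < s := lt_of_lt_of_le two_pos hs
  have hs1 : (1:ℝ) ≤ s := by linarith
  have hsm : (0:ℝ) ≤ s - 1 := by linarith
  obtain ⟨R1, hR1⟩ : ∃ R1, M1 = i + R1 + 1 := ⟨M1-i-1, by omega⟩
  have hiM2 : i ≤ M2 := by omega
  have e1 : (∏ j ∈ Finset.range M1, |(2*((i:ℝ) - (j:ℝ)))*s + (-1)|)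
      = PLr s (-1) i * PLr s 1 R1 := by
    rw [split_even s (-1) hi, show M1-1-i = R1 by omega, abs_neg, abs_one, mul_one, neg_neg]
  have e2 : (∏ j ∈ Finset.range M2, |(2*((i:ℝ) - (j:ℝ)) - 1)*s + (-1)|)
      = POr s (-1) i * POr s 1 (M2-i) := by
    rw [split_odd s (-1) hiM2, neg_neg]
  have e3 : (∏ j ∈ (Finset.range M1).erase i, |(2*((i:ℝ) - (j:ℝ)))*s + 0|)
      = PLr s 0 i * PLr s 0 R1 := by
    rw [split_even_erase s 0 hi, show M1-1-i = R1 by omega, neg_zero]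
  rw [e1, e2, e3]
  have b1 : s^i * (oddP i:ℝ) * (s^R1 * (evenP R1:ℝ)) ≤ PLr s (-1) i * PLr s 1 R1 :=
    mul_le_mul (PLr_ge_odd hs (by norm_num) i) (PLr_ge_even hs (by norm_num) R1) (by positivity)
      (PLr_nonneg s (-1) i)
  have b3 : s^i * (evenP i:ℝ) * (s^R1 * (evenP R1:ℝ)) ≤ PLr s 0 i * PLr s 0 R1 :=
    mul_le_mul (PLr_ge_even hs le_rfl i) (PLr_ge_even hs le_rfl R1) (by positivity)
      (PLr_nonneg s 0 i)
  rcases Nat.lt_or_ge i M2 with hiM | hiM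
  · -- i < M2
    obtain ⟨R2, hR2⟩ : ∃ R2, M2 = i + R2 + 1 := ⟨M2-i-1, by omega⟩
    have e4 : (∏ j ∈ Finset.range M2, |(2*((i:ℝ) - (j:ℝ)))*s + (-2)|)
        = PLr s (-2) i * 2 * PLr s 2 R2 := by
      rw [split_even s (-2) hiM, show M2-1-i = R2 by omega, neg_neg,
        show |(-2:ℝ)| = 2 by norm_num]
    rw [e4]
    have e2' : POr s (-1) i * POr s 1 (M2-i) = POr s (-1) i * POr s 1 (R2+1) := by
      rw [show M2-i = R2+1 by omega]
    rw [e2']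
    have b4 : (s^i * (oddP i:ℝ)) * 2 * (s^R2 * (evenP R2:ℝ))
        ≤ PLr s (-2) i * 2 * PLr s 2 R2 :=
      mul_le_mul (mul_le_mul (PLr_ge_odd hs (by norm_num) i) le_rfl (by norm_num)
          (PLr_nonneg s (-2) i))
        (PLr_ge_even hs (by norm_num) R2) (by positivity)
        (mul_nonneg (PLr_nonneg s (-2) i) (by norm_num))
    rcases Nat.eq_zero_or_pos i with hi0 | hipos
    · -- sub-case i = 0
      subst hi0
      have b2 : 1 * (s^(R2+1) * (oddP (R2+1):ℝ)) ≤ POr s (-1) 0 * POr s 1 (R2+1) := by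
        rw [POr_zero]
        exact mul_le_mul le_rfl (POr_ge_odd hs (by norm_num) (R2+1)) (by positivity)
          (by norm_num)
      have hnat : (2*q-1).factorial^4 ≤
          (evenP R1 * oddP (R2+1)) * (evenP R1 * evenP R2) := by
        have h1 : (2*q-1).factorial * (2*q-1).factorial ≤ (R1+(R2+1)).factorial := by
          calc (2*q-1).factorial * (2*q-1).factorial ≤ ((2*q-1)+(2*q-1)).factorial :=
                fac_add_le _ _
            _ ≤ (R1+(R2+1)).factorial := Nat.factorial_le (by omega)
        have h2 : (2*q-1).factorial * (2*q-1).factorial ≤ (R1+R2).factorial := by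
          calc (2*q-1).factorial * (2*q-1).factorial ≤ ((2*q-1)+(2*q-1)).factorial :=
                fac_add_le _ _
            _ ≤ (R1+R2).factorial := Nat.factorial_le (by omega)
        calc (2*q-1).factorial^4
            = ((2*q-1).factorial * (2*q-1).factorial) *
              ((2*q-1).factorial * (2*q-1).factorial) := by ring
          _ ≤ (R1+(R2+1)).factorial * (R1+R2).factorial := Nat.mul_le_mul h1 h2
          _ ≤ (evenP R1 * oddP (R2+1)) * (evenP R1 * oddP R2) :=
              Nat.mul_le_mul (fac_le_evenP_mul_oddP R1 (R2+1)) (fac_le_evenP_mul_oddP R1 R2)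
          _ ≤ (evenP R1 * oddP (R2+1)) * (evenP R1 * evenP R2) :=
              Nat.mul_le_mul_left _ (Nat.mul_le_mul_left _ (oddP_le_evenP R2))
      calc s^(2*(M1+M2)-3) * ((2*q-1).factorial : ℝ)^4
          ≤ s^(2*(M1+M2)-3) *
              (((evenP R1 * oddP (R2+1)) * (evenP R1 * evenP R2) : ℕ) : ℝ) := by
            apply mul_le_mul_of_nonneg_left _ (by positivity)
            calc ((2*q-1).factorial : ℝ)^4 = (((2*q-1).factorial^4 : ℕ) : ℝ) := by
                  push_cast; ring
              _ ≤ _ := Nat.cast_le.2 hnat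
        _ ≤ 2 * (s^(2*(M1+M2)-3) *
              (((evenP R1 * oddP (R2+1)) * (evenP R1 * evenP R2) : ℕ) : ℝ)) := by
            nlinarith [mul_nonneg (pow_nonneg hs0.le (2*(M1+M2)-3))
              (Nat.cast_nonneg ((evenP R1 * oddP (R2+1)) * (evenP R1 * evenP R2)))]
        _ = (s^0 * (oddP 0:ℝ) * (s^R1 * (evenP R1:ℝ))) *
            (1 * (s^(R2+1) * (oddP (R2+1):ℝ))) *
            (s^0 * (evenP 0:ℝ) * (s^R1 * (evenP R1:ℝ))) *
            ((s^0 * (oddP 0:ℝ)) * 2 * (s^R2 * (evenP R2:ℝ))) := by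
            rw [show 2*(M1+M2)-3 = R1 + (R2+1) + R1 + R2 by omega]
            simp only [oddP_zero, evenP_zero]
            push_cast; ring
        _ ≤ _ := mul4_le b1 b2 b3 b4 (by positivity) (by positivity) (by positivity)
              (by positivity)
    · -- sub-case 1 ≤ i < M2
      obtain ⟨i', rfl⟩ : ∃ i', i = i' + 1 := ⟨i-1, by omega⟩
      have b2 : ((s-1) * (s^i' * (evenP i':ℝ))) * (s^(R2+1) * (oddP (R2+1):ℝ))
          ≤ POr s (-1) (i'+1) * POr s 1 (R2+1) :=
        mul_le_mul (POr_ge_sub hs i') (POr_ge_odd hs (by norm_num) (R2+1))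
          (by positivity) (POr_nonneg s (-1) (i'+1))
      have hnat : (2*q-1).factorial^4 ≤
          ((evenP (i'+1) * oddP (i'+1)) * (evenP R1 * evenP R2)) *
          ((evenP i' * oddP (i'+1)) * (evenP R1 * oddP (R2+1))) := by
        calc (2*q-1).factorial^4
            = ((2*q-1).factorial * (2*q-1).factorial) *
              ((2*q-1).factorial * (2*q-1).factorial) := by ring
          _ ≤ (((i'+1)+(i'+1)).factorial * (R1+R2).factorial) *
              ((i'+(i'+1)).factorial * (R1+(R2+1)).factorial) :=
              Nat.mul_le_mul (fac_sq_le _ _ _ (by omega)) (fac_sq_le _ _ _ (by omega))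
          _ ≤ (((evenP (i'+1) * oddP (i'+1))) * (evenP R1 * oddP R2)) *
              ((evenP i' * oddP (i'+1)) * (evenP R1 * oddP (R2+1))) :=
              Nat.mul_le_mul (Nat.mul_le_mul (fac_le_evenP_mul_oddP (i'+1) (i'+1))
                (fac_le_evenP_mul_oddP R1 R2))
                (Nat.mul_le_mul (fac_le_evenP_mul_oddP i' (i'+1))
                (fac_le_evenP_mul_oddP R1 (R2+1)))
          _ ≤ _ := Nat.mul_le_mul (Nat.mul_le_mul_left _
                (Nat.mul_le_mul_left _ (oddP_le_evenP R2))) le_rfl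
      set K : ℕ := ((evenP (i'+1) * oddP (i'+1)) * (evenP R1 * evenP R2)) *
          ((evenP i' * oddP (i'+1)) * (evenP R1 * oddP (R2+1))) with hK
      calc s^(2*(M1+M2)-3) * ((2*q-1).factorial : ℝ)^4
          ≤ s^(2*(M1+M2)-3) * ((K:ℕ) : ℝ) := by
            apply mul_le_mul_of_nonneg_left _ (by positivity)
            calc ((2*q-1).factorial : ℝ)^4 = (((2*q-1).factorial^4 : ℕ) : ℝ) := by
                  push_cast; ring
              _ ≤ _ := Nat.cast_le.2 hnat
        _ = s * (s^(2*(M1+M2)-4) * ((K:ℕ) : ℝ)) := by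
            rw [show 2*(M1+M2)-3 = (2*(M1+M2)-4)+1 by omega, pow_succ]; ring
        _ ≤ ((s-1)*2) * (s^(2*(M1+M2)-4) * ((K:ℕ) : ℝ)) := by
            apply mul_le_mul_of_nonneg_right (by linarith) (by positivity)
        _ = (s^(i'+1) * (oddP (i'+1):ℝ) * (s^R1 * (evenP R1:ℝ))) *
            (((s-1) * (s^i' * (evenP i':ℝ))) * (s^(R2+1) * (oddP (R2+1):ℝ))) *
            (s^(i'+1) * (evenP (i'+1):ℝ) * (s^R1 * (evenP R1:ℝ))) *
            ((s^(i'+1) * (oddP (i'+1):ℝ)) * 2 * (s^R2 * (evenP R2:ℝ))) := by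
            rw [hK, show 2*(M1+M2)-4 = ((i'+1) + R1) + (i' + (R2+1)) + ((i'+1) + R1) +
              ((i'+1) + R2) by omega]
            push_cast; ring
        _ ≤ _ := mul4_le b1 b2 b3 b4 (by positivity)
              (mul_nonneg (mul_nonneg hsm (by positivity)) (by positivity))
              (by positivity) (by positivity)
  · -- i = M2, M1 = M2+1
    have hie : i = M2 := by omega
    have hR10 : R1 = 0 := by omega
    have e4 : (∏ j ∈ Finset.range M2, |(2*((i:ℝ) - (j:ℝ)))*s + (-2)|) = PLr s (-2) M2 := by
      rw [hie]; exact split_even_left s (-2) M2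
    have hM2i : M2 - i = 0 := by omega
    rw [e4, hM2i, hR10, hie]
    rw [hie, hR10] at b1 b3
    obtain ⟨i', hi'⟩ : ∃ i', M2 = i' + 1 := ⟨M2-1, by omega⟩
    have b2 : ((s-1) * (s^i' * (evenP i':ℝ))) * 1 ≤ POr s (-1) M2 * POr s 1 0 := by
      rw [POr_zero, hi']
      exact mul_le_mul (POr_ge_sub hs i') le_rfl (by norm_num)
        (POr_nonneg s (-1) (i'+1))
    have b4 : s^M2 * (oddP M2:ℝ) ≤ PLr s (-2) M2 := PLr_ge_odd hs (by norm_num) M2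
    have hnat : (2*q-1).factorial^4 ≤
        (evenP i' * oddP M2) * (evenP M2 * oddP M2) := by
      have h1 : (2*q-1).factorial * (2*q-1).factorial ≤ (i'+M2).factorial := by
        calc (2*q-1).factorial * (2*q-1).factorial ≤ ((2*q-1)+(2*q-1)).factorial :=
              fac_add_le _ _
          _ ≤ (i'+M2).factorial := Nat.factorial_le (by omega)
      have h2 : (2*q-1).factorial * (2*q-1).factorial ≤ (M2+M2).factorial := by
        calc (2*q-1).factorial * (2*q-1).factorial ≤ ((2*q-1)+(2*q-1)).factorial :=
              fac_add_le _ _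
          _ ≤ (M2+M2).factorial := Nat.factorial_le (by omega)
      calc (2*q-1).factorial^4
          = ((2*q-1).factorial * (2*q-1).factorial) *
            ((2*q-1).factorial * (2*q-1).factorial) := by ring
        _ ≤ (i'+M2).factorial * (M2+M2).factorial := Nat.mul_le_mul h1 h2
        _ ≤ _ := Nat.mul_le_mul (fac_le_evenP_mul_oddP i' M2) (fac_le_evenP_mul_oddP M2 M2)
    set K : ℕ := (evenP i' * oddP M2) * (evenP M2 * oddP M2) with hK
    calc s^(2*(M1+M2)-3) * ((2*q-1).factorial : ℝ)^4
        ≤ s^(2*(M1+M2)-3) * ((K:ℕ) : ℝ) := by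
          apply mul_le_mul_of_nonneg_left _ (by positivity)
          calc ((2*q-1).factorial : ℝ)^4 = (((2*q-1).factorial^4 : ℕ) : ℝ) := by
                push_cast; ring
            _ ≤ _ := Nat.cast_le.2 hnat
      _ ≤ (s-1) * (s^(2*(M1+M2)-3) * ((K:ℕ) : ℝ)) := by
          have h0 : (0:ℝ) ≤ s^(2*(M1+M2)-3) * ((K:ℕ) : ℝ) := by positivity
          nlinarith [h0]
      _ = (s^M2 * (oddP M2:ℝ) * (s^0 * (evenP 0:ℝ))) *
          (((s-1) * (s^i' * (evenP i':ℝ))) * 1) *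
          (s^M2 * (evenP M2:ℝ) * (s^0 * (evenP 0:ℝ))) *
          (s^M2 * (oddP M2:ℝ)) := by
          rw [hK, show 2*(M1+M2)-3 = M2 + i' + M2 + M2 by omega]
          simp only [evenP_zero]
          push_cast; ring
      _ ≤ _ := mul4_le b1 b2 b3 b4 (by positivity)
            (mul_nonneg (mul_nonneg hsm (by positivity)) (by norm_num))
            (by positivity) (by positivity)

lemma caseC4 (M1 M2 q i : ℕ) (s : ℝ) (hs : 2 ≤ s)
    (hM : M2 ≤ M1) (hM' : M1 ≤ M2 + 1) (hM2 : 2 ≤ M2) (hq : 2*q ≤ M2) (hq1 : 1 ≤ q)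
    (hi : i < M2) :
    s^(2*(M1+M2)-3) * ((2*q-1).factorial : ℝ)^4 ≤
    (∏ j ∈ Finset.range M1, |(2*((i:ℝ) - (j:ℝ)))*s + 1|) *
    (∏ j ∈ Finset.range M2, |(2*((i:ℝ) - (j:ℝ)) - 1)*s + 1|) *
    (∏ j ∈ Finset.range M1, |(2*((i:ℝ) - (j:ℝ)))*s + 2|) *
    (∏ j ∈ (Finset.range M2).erase i, |(2*((i:ℝ) - (j:ℝ)))*s + 0|) := by
  have hs0 : (0:ℝ) < s := lt_of_lt_of_le two_pos hs
  have hs1 : (1:ℝ) ≤ s := by linarith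
  have hsm : (0:ℝ) ≤ s - 1 := by linarith
  have hiM1 : i < M1 := by omega
  have hiM2 : i ≤ M2 := by omega
  obtain ⟨R1, hR1⟩ : ∃ R1, M1 = i + R1 + 1 := ⟨M1-i-1, by omega⟩
  obtain ⟨R2, hR2⟩ : ∃ R2, M2 = i + R2 + 1 := ⟨M2-i-1, by omega⟩
  have e1 : (∏ j ∈ Finset.range M1, |(2*((i:ℝ) - (j:ℝ)))*s + 1|)
      = PLr s 1 i * PLr s (-1) R1 := by
    rw [split_even s 1 hiM1, show M1-1-i = R1 by omega, abs_one, mul_one]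
  have e2 : (∏ j ∈ Finset.range M2, |(2*((i:ℝ) - (j:ℝ)) - 1)*s + 1|)
      = POr s 1 i * POr s (-1) (R2+1) := by
    rw [split_odd s 1 hiM2, show M2-i = R2+1 by omega]
  have e3 : (∏ j ∈ Finset.range M1, |(2*((i:ℝ) - (j:ℝ)))*s + 2|)
      = PLr s 2 i * 2 * PLr s (-2) R1 := by
    rw [split_even s 2 hiM1, show M1-1-i = R1 by omega, show |(2:ℝ)| = 2 by norm_num]
  have e4 : (∏ j ∈ (Finset.range M2).erase i, |(2*((i:ℝ) - (j:ℝ)))*s + 0|)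
      = PLr s 0 i * PLr s 0 R2 := by
    rw [split_even_erase s 0 hi, show M2-1-i = R2 by omega, neg_zero]
  rw [e1, e2, e3, e4]
  have b1 : s^i * (evenP i:ℝ) * (s^R1 * (oddP R1:ℝ)) ≤ PLr s 1 i * PLr s (-1) R1 :=
    mul_le_mul (PLr_ge_even hs (by norm_num) i) (PLr_ge_odd hs (by norm_num) R1)
      (by positivity) (PLr_nonneg s 1 i)
  have b2 : (s^i * (oddP i:ℝ)) * ((s-1) * (s^R2 * (evenP R2:ℝ)))
      ≤ POr s 1 i * POr s (-1) (R2+1) :=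
    mul_le_mul (POr_ge_odd hs (by norm_num) i) (POr_ge_sub hs R2)
      (mul_nonneg hsm (by positivity)) (POr_nonneg s 1 i)
  have b3 : (s^i * (evenP i:ℝ)) * 2 * (s^R1 * (oddP R1:ℝ))
      ≤ PLr s 2 i * 2 * PLr s (-2) R1 :=
    mul_le_mul (mul_le_mul (PLr_ge_even hs (by norm_num) i) le_rfl (by norm_num)
        (PLr_nonneg s 2 i))
      (PLr_ge_odd hs (by norm_num) R1) (by positivity)
      (mul_nonneg (PLr_nonneg s 2 i) (by norm_num))
  have b4 : s^i * (evenP i:ℝ) * (s^R2 * (evenP R2:ℝ)) ≤ PLr s 0 i * PLr s 0 R2 :=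
    mul_le_mul (PLr_ge_even hs le_rfl i) (PLr_ge_even hs le_rfl R2) (by positivity)
      (PLr_nonneg s 0 i)
  have hnat : (2*q-1).factorial^4 ≤
      ((evenP i * oddP i) * (evenP R2 * oddP R1)) *
      ((evenP i * oddP R1) * (evenP i * evenP R2)) := by
    calc (2*q-1).factorial^4
        = ((2*q-1).factorial * (2*q-1).factorial) *
          ((2*q-1).factorial * (2*q-1).factorial) := by ring
      _ ≤ ((i+i).factorial * (R2+R1).factorial) *
          ((i+R1).factorial * (i+R2).factorial) :=
          Nat.mul_le_mul (fac_sq_le _ _ _ (by omega)) (fac_sq_le _ _ _ (by omega))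
      _ ≤ ((evenP i * oddP i) * (evenP R2 * oddP R1)) *
          ((evenP i * oddP R1) * (evenP i * oddP R2)) :=
          Nat.mul_le_mul (Nat.mul_le_mul (fac_le_evenP_mul_oddP i i)
            (fac_le_evenP_mul_oddP R2 R1))
            (Nat.mul_le_mul (fac_le_evenP_mul_oddP i R1) (fac_le_evenP_mul_oddP i R2))
      _ ≤ _ := Nat.mul_le_mul le_rfl (Nat.mul_le_mul_left _
            (Nat.mul_le_mul_left _ (oddP_le_evenP R2)))
  set K : ℕ := ((evenP i * oddP i) * (evenP R2 * oddP R1)) *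
      ((evenP i * oddP R1) * (evenP i * evenP R2)) with hK
  calc s^(2*(M1+M2)-3) * ((2*q-1).factorial : ℝ)^4
      ≤ s^(2*(M1+M2)-3) * ((K:ℕ) : ℝ) := by
        apply mul_le_mul_of_nonneg_left _ (by positivity)
        calc ((2*q-1).factorial : ℝ)^4 = (((2*q-1).factorial^4 : ℕ) : ℝ) := by push_cast; ring
          _ ≤ _ := Nat.cast_le.2 hnat
    _ = s * (s^(2*(M1+M2)-4) * ((K:ℕ) : ℝ)) := by
        rw [show 2*(M1+M2)-3 = (2*(M1+M2)-4)+1 by omega, pow_succ]; ring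
    _ ≤ ((s-1)*2) * (s^(2*(M1+M2)-4) * ((K:ℕ) : ℝ)) := by
        apply mul_le_mul_of_nonneg_right (by linarith) (by positivity)
    _ = (s^i * (evenP i:ℝ) * (s^R1 * (oddP R1:ℝ))) *
        ((s^i * (oddP i:ℝ)) * ((s-1) * (s^R2 * (evenP R2:ℝ)))) *
        ((s^i * (evenP i:ℝ)) * 2 * (s^R1 * (oddP R1:ℝ))) *
        (s^i * (evenP i:ℝ) * (s^R2 * (evenP R2:ℝ))) := by
        rw [hK, show 2*(M1+M2)-4 = (i + R1) + (i + R2) + (i + R1) + (i + R2) by omega]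
        push_cast; ring
    _ ≤ _ := mul4_le b1 b2 b3 b4 (by positivity)
          (mul_nonneg (by positivity) (mul_nonneg hsm (by positivity)))
          (by positivity) (by positivity)

lemma gapA (s : ℝ) (hs : 2 ≤ s) (i j : ℕ) (c : ℝ) (hc0 : c ≠ 0) (hc : |c| < 4)
    (h : (2*(j:ℝ) - 2*(i:ℝ))*s = c) : False := by
  have hb1 := neg_abs_le c
  have hb2 := le_abs_self c
  rcases lt_trichotomy j i with hlt | heq | hgt
  · have h1 : (j:ℝ) + 1 ≤ (i:ℝ) := by exact_mod_cast Nat.succ_le_of_lt hlt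
    nlinarith
  · apply hc0; rw [heq] at h; linarith [h]
  · have h1 : (i:ℝ) + 1 ≤ (j:ℝ) := by exact_mod_cast Nat.succ_le_of_lt hgt
    nlinarith

lemma gapB (s : ℝ) (hs : 2 ≤ s) (i j : ℕ) (c : ℝ) (hc : |c| < 2)
    (h : (2*(j:ℝ) - 2*(i:ℝ) - 1)*s = c) : False := by
  have hb1 := neg_abs_le c
  have hb2 := le_abs_self c
  rcases Nat.lt_or_ge j (i+1) with hlt | hge
  · have h1 : (j:ℝ) ≤ (i:ℝ) := by exact_mod_cast Nat.lt_succ_iff.1 hlt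
    nlinarith
  · have h1 : (i:ℝ) + 1 ≤ (j:ℝ) := by exact_mod_cast hge
    nlinarith

lemma classC1_eq (n : ℕ) (t : ℕ → ℝ) (f : ℕ → ℝ)
    (h : ∀ j, j < (n+1)/2 → t (4*j+2) = f j) :
    classC1 n t = (Finset.range ((n+1)/2)).image f := by
  unfold classC1
  ext y
  simp only [Finset.mem_image, Finset.mem_univ, true_and, Finset.mem_range]
  constructor
  · rintro ⟨j, rfl⟩
    exact ⟨j.1, j.2, (h j.1 j.2).symm⟩
  · rintro ⟨j, hj, hjy⟩
    exact ⟨⟨j, hj⟩, by rw [h j hj]; exact hjy⟩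

lemma classC2_eq (n : ℕ) (t : ℕ → ℝ) (f : ℕ → ℝ)
    (h : ∀ j, j < n/2 → t (4*j+4) = f j) :
    classC2 n t = (Finset.range (n/2)).image f := by
  unfold classC2
  ext y
  simp only [Finset.mem_image, Finset.mem_univ, true_and, Finset.mem_range]
  constructor
  · rintro ⟨j, rfl⟩
    exact ⟨j.1, j.2, (h j.1 j.2).symm⟩
  · rintro ⟨j, hj, hjy⟩
    exact ⟨⟨j, hj⟩, by rw [h j hj]; exact hjy⟩

lemma classC3_eq (n : ℕ) (t : ℕ → ℝ) (f : ℕ → ℝ)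
    (h : ∀ j, j < (n+1)/2 → t (4*j+1) = f j) :
    classC3 n t = (Finset.range ((n+1)/2)).image f := by
  unfold classC3
  ext y
  simp only [Finset.mem_image, Finset.mem_univ, true_and, Finset.mem_range]
  constructor
  · rintro ⟨j, rfl⟩
    exact ⟨j.1, j.2, (h j.1 j.2).symm⟩
  · rintro ⟨j, hj, hjy⟩
    exact ⟨⟨j, hj⟩, by rw [h j hj]; exact hjy⟩

lemma classC4_eq (n : ℕ) (t : ℕ → ℝ) (f : ℕ → ℝ)
    (h : ∀ j, j < n/2 → t (4*j+3) = f j) :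
    classC4 n t = (Finset.range (n/2)).image f := by
  unfold classC4
  ext y
  simp only [Finset.mem_image, Finset.mem_univ, true_and, Finset.mem_range]
  constructor
  · rintro ⟨j, rfl⟩
    exact ⟨j.1, j.2, (h j.1 j.2).symm⟩
  · rintro ⟨j, hj, hjy⟩
    exact ⟨⟨j, hj⟩, by rw [h j hj]; exact hjy⟩

/-- Lemma `lem:c-min`: `min_{k=1,2,3,4} c_k^min ≥
τ^{2n-1}·s^{2n-3}·((2⌊⌊n/2⌋/2⌋-1)!)⁴`, i.e. for every point `x` in one of the four classes,
the product of the distances from `x` to all the other points among `t_1,…,t_{2n}` is at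
least this bound. The points `t_j` are as in Proposition `thm:supportlowerboundthm1`:
`t_j = -((sn-2)/2)τ + ((j-2)s/2)τ` for even `j` and
`t_j = t_{4⌈(j+1)/4⌉-2} + (-1)^{(j+1)/2}τ` for odd `j`. -/
theorem class_distance_product_min
    (n : ℕ) (hn : 4 ≤ n) (τ : ℝ) (hτ : 0 < τ) (s : ℝ) (hs : 2 ≤ s)
    (t : ℕ → ℝ)
    (ht_even : ∀ j : ℕ, 1 ≤ j → j ≤ 2 * n → j % 2 = 0 →
      t j = -((s * (n : ℝ) - 2) / 2) * τ + (((j : ℝ) - 2) * s / 2) * τ)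
    (ht_odd : ∀ j : ℕ, 1 ≤ j → j ≤ 2 * n → j % 2 = 1 →
      t j = t (4 * ((j + 4) / 4) - 2) + (-1 : ℝ) ^ ((j + 1) / 2) * τ) :
    ∀ x ∈ classC1 n t ∪ classC2 n t ∪ classC3 n t ∪ classC4 n t,
      τ ^ (2 * n - 1) * s ^ (2 * n - 3) * ((2 * (n / 2 / 2) - 1).factorial : ℝ) ^ 4
        ≤ classDistProd n t x := by
  intro x hx
  have hs0 : (0:ℝ) < s := by linarith
  have hτ0 : τ ≠ 0 := ne_of_gt hτ
  have hst : (s*τ) ≠ 0 := ne_of_gt (mul_pos hs0 hτ)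
  set M1 := (n+1)/2 with hM1d
  set M2 := n/2 with hM2d
  have hMle : M2 ≤ M1 := by omega
  have hMle' : M1 ≤ M2 + 1 := by omega
  have hM2ge : 2 ≤ M2 := by omega
  have hqle : 2*(M2/2) ≤ M2 := by omega
  have hqge : 1 ≤ M2/2 := by omega
  set c : ℝ := -((s * (n : ℝ) - 2) / 2) * τ with hc
  have hpos1 : ∀ j, j < M1 → t (4*j+2) = c + 2*(j:ℝ)*s*τ := by
    intro j hj
    rw [ht_even (4*j+2) (by omega) (by omega) (by omega), hc]
    push_cast
    ring
  have hpos2 : ∀ j, j < M2 → t (4*j+4) = c + (2*(j:ℝ)+1)*s*τ := by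
    intro j hj
    rw [ht_even (4*j+4) (by omega) (by omega) (by omega), hc]
    push_cast
    ring
  have hpos3 : ∀ j, j < M1 → t (4*j+1) = c + 2*(j:ℝ)*s*τ - τ := by
    intro j hj
    rw [ht_odd (4*j+1) (by omega) (by omega) (by omega),
      show 4 * ((4*j+1 + 4) / 4) - 2 = 4*j+2 by omega,
      show (4*j+1+1)/2 = 2*j+1 by omega, hpos1 j hj,
      Odd.neg_one_pow ⟨j, by omega⟩]
    ring
  have hpos4 : ∀ j, j < M2 → t (4*j+3) = c + 2*(j:ℝ)*s*τ + τ := by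
    intro j hj
    rw [ht_odd (4*j+3) (by omega) (by omega) (by omega),
      show 4 * ((4*j+3 + 4) / 4) - 2 = 4*j+2 by omega,
      show (4*j+3+1)/2 = 2*j+2 by omega, hpos1 j (by omega),
      Even.neg_one_pow ⟨j+1, by omega⟩]
    ring
  have hC1 : classC1 n t = (Finset.range M1).image (fun j : ℕ => c + 2*(j:ℝ)*s*τ) :=
    classC1_eq n t _ hpos1
  have hC2 : classC2 n t = (Finset.range M2).image (fun j : ℕ => c + (2*(j:ℝ)+1)*s*τ) :=
    classC2_eq n t _ hpos2
  have hC3 : classC3 n t = (Finset.range M1).image (fun j : ℕ => c + 2*(j:ℝ)*s*τ - τ) :=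
    classC3_eq n t _ hpos3
  have hC4 : classC4 n t = (Finset.range M2).image (fun j : ℕ => c + 2*(j:ℝ)*s*τ + τ) :=
    classC4_eq n t _ hpos4
  have hinj1 : Function.Injective (fun j : ℕ => c + 2*(j:ℝ)*s*τ) := by
    intro a b hab
    simp only at hab
    have h1 : (a:ℝ) * (s*τ) = (b:ℝ) * (s*τ) := by linear_combination (1/2 : ℝ) * hab
    exact_mod_cast mul_right_cancel₀ hst h1
  have hinj2 : Function.Injective (fun j : ℕ => c + (2*(j:ℝ)+1)*s*τ) := by
    intro a b hab
    simp only at hab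
    have h1 : (a:ℝ) * (s*τ) = (b:ℝ) * (s*τ) := by linear_combination (1/2 : ℝ) * hab
    exact_mod_cast mul_right_cancel₀ hst h1
  have hinj3 : Function.Injective (fun j : ℕ => c + 2*(j:ℝ)*s*τ - τ) := by
    intro a b hab
    simp only at hab
    have h1 : (a:ℝ) * (s*τ) = (b:ℝ) * (s*τ) := by linear_combination (1/2 : ℝ) * hab
    exact_mod_cast mul_right_cancel₀ hst h1
  have hinj4 : Function.Injective (fun j : ℕ => c + 2*(j:ℝ)*s*τ + τ) := by
    intro a b hab
    simp only at hab
    have h1 : (a:ℝ) * (s*τ) = (b:ℝ) * (s*τ) := by linear_combination (1/2 : ℝ) * hab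
    exact_mod_cast mul_right_cancel₀ hst h1
  rw [Finset.mem_union, Finset.mem_union, Finset.mem_union] at hx
  rcases hx with ((hmem | hmem) | hmem) | hmem
  · -- x ∈ C1
    rw [hC1] at hmem
    obtain ⟨i, hi, hxi⟩ : ∃ i, i < M1 ∧ c + 2*(i:ℝ)*s*τ = x := by
      simpa [Finset.mem_image, Finset.mem_range] using hmem
    have hnm2 : x ∉ classC2 n t := by
      rw [hC2]
      simp only [Finset.mem_image, Finset.mem_range, not_exists, not_and]
      intro j hj heq
      rw [← hxi] at heq
      have H : ((2*(j:ℝ) - 2*(i:ℝ) + 1)*s)*τ = 0*τ := by linear_combination heq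
      have H2 := mul_right_cancel₀ hτ0 H
      exact gapB s hs i (j+1) 0 (by norm_num) (by push_cast; linear_combination H2)
    have hnm3 : x ∉ classC3 n t := by
      rw [hC3]
      simp only [Finset.mem_image, Finset.mem_range, not_exists, not_and]
      intro j hj heq
      rw [← hxi] at heq
      have H : ((2*(j:ℝ) - 2*(i:ℝ))*s)*τ = 1*τ := by linear_combination heq
      have H2 := mul_right_cancel₀ hτ0 H
      exact gapA s hs i j 1 (by norm_num) (by norm_num) (by linear_combination H2)
    have hnm4 : x ∉ classC4 n t := by
      rw [hC4]
      simp only [Finset.mem_image, Finset.mem_range, not_exists, not_and]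
      intro j hj heq
      rw [← hxi] at heq
      have H : ((2*(j:ℝ) - 2*(i:ℝ))*s)*τ = (-1)*τ := by linear_combination heq
      have H2 := mul_right_cancel₀ hτ0 H
      exact gapA s hs i j (-1) (by norm_num) (by norm_num) (by linear_combination H2)
    have hQ1 : (∏ y ∈ (classC1 n t).erase x, |x - y|)
        = τ^(M1-1) * ∏ j ∈ (Finset.range M1).erase i, |(2*((i:ℝ) - (j:ℝ)))*s + 0| := by
      have e : (classC1 n t).erase x
          = ((Finset.range M1).erase i).image (fun j : ℕ => c + 2*(j:ℝ)*s*τ) := by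
        rw [hC1, ← hxi]
        exact (Finset.image_erase hinj1 _ i).symm
      rw [e, Finset.prod_image (fun a _ b _ hab => hinj1 hab), ← hxi]
      have h' : ∀ j ∈ (Finset.range M1).erase i,
          |(c + 2*(i:ℝ)*s*τ) - (c + 2*(j:ℝ)*s*τ)| = τ * |(2*((i:ℝ) - (j:ℝ)))*s + 0| := by
        intro j _
        rw [show (c + 2*(i:ℝ)*s*τ) - (c + 2*(j:ℝ)*s*τ) = ((2*((i:ℝ) - (j:ℝ)))*s + 0)*τ by
          ring, abs_mul, abs_of_pos hτ, mul_comm]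
      rw [Finset.prod_congr rfl h', Finset.prod_mul_distrib, Finset.prod_const,
        Finset.card_erase_of_mem (Finset.mem_range.2 hi), Finset.card_range]
    have hQ2 : (∏ y ∈ (classC2 n t).erase x, |x - y|)
        = τ^M2 * ∏ j ∈ Finset.range M2, |(2*((i:ℝ) - (j:ℝ)) - 1)*s + 0| := by
      rw [Finset.erase_eq_of_notMem hnm2, hC2,
        Finset.prod_image (fun a _ b _ hab => hinj2 hab), ← hxi]
      have h' : ∀ j ∈ Finset.range M2,
          |(c + 2*(i:ℝ)*s*τ) - (c + (2*(j:ℝ)+1)*s*τ)|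
            = τ * |(2*((i:ℝ) - (j:ℝ)) - 1)*s + 0| := by
        intro j _
        rw [show (c + 2*(i:ℝ)*s*τ) - (c + (2*(j:ℝ)+1)*s*τ)
            = ((2*((i:ℝ) - (j:ℝ)) - 1)*s + 0)*τ by ring, abs_mul, abs_of_pos hτ, mul_comm]
      rw [Finset.prod_congr rfl h', Finset.prod_mul_distrib, Finset.prod_const,
        Finset.card_range]
    have hQ3 : (∏ y ∈ (classC3 n t).erase x, |x - y|)
        = τ^M1 * ∏ j ∈ Finset.range M1, |(2*((i:ℝ) - (j:ℝ)))*s + 1| := by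
      rw [Finset.erase_eq_of_notMem hnm3, hC3,
        Finset.prod_image (fun a _ b _ hab => hinj3 hab), ← hxi]
      have h' : ∀ j ∈ Finset.range M1,
          |(c + 2*(i:ℝ)*s*τ) - (c + 2*(j:ℝ)*s*τ - τ)|
            = τ * |(2*((i:ℝ) - (j:ℝ)))*s + 1| := by
        intro j _
        rw [show (c + 2*(i:ℝ)*s*τ) - (c + 2*(j:ℝ)*s*τ - τ)
            = ((2*((i:ℝ) - (j:ℝ)))*s + 1)*τ by ring, abs_mul, abs_of_pos hτ, mul_comm]
      rw [Finset.prod_congr rfl h', Finset.prod_mul_distrib, Finset.prod_const,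
        Finset.card_range]
    have hQ4 : (∏ y ∈ (classC4 n t).erase x, |x - y|)
        = τ^M2 * ∏ j ∈ Finset.range M2, |(2*((i:ℝ) - (j:ℝ)))*s + (-1)| := by
      rw [Finset.erase_eq_of_notMem hnm4, hC4,
        Finset.prod_image (fun a _ b _ hab => hinj4 hab), ← hxi]
      have h' : ∀ j ∈ Finset.range M2,
          |(c + 2*(i:ℝ)*s*τ) - (c + 2*(j:ℝ)*s*τ + τ)|
            = τ * |(2*((i:ℝ) - (j:ℝ)))*s + (-1)| := by
        intro j _
        rw [show (c + 2*(i:ℝ)*s*τ) - (c + 2*(j:ℝ)*s*τ + τ)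
            = ((2*((i:ℝ) - (j:ℝ)))*s + (-1))*τ by ring, abs_mul, abs_of_pos hτ, mul_comm]
      rw [Finset.prod_congr rfl h', Finset.prod_mul_distrib, Finset.prod_const,
        Finset.card_range]
    unfold classDistProd
    rw [hQ1, hQ2, hQ3, hQ4]
    have main := caseC1 M1 M2 (M2/2) i s hs hMle hMle' hM2ge hqle hqge hi
    calc τ ^ (2*n-1) * s ^ (2*n-3) * ((2 * (M2/2) - 1).factorial : ℝ) ^ 4
        = τ^(2*n-1) * (s^(2*(M1+M2)-3) * ((2 * (M2/2) - 1).factorial : ℝ)^4) := by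
          rw [show 2*(M1+M2)-3 = 2*n-3 by omega]; ring
      _ ≤ τ^(2*n-1) * ((∏ j ∈ (Finset.range M1).erase i, |(2*((i:ℝ) - (j:ℝ)))*s + 0|) *
          (∏ j ∈ Finset.range M2, |(2*((i:ℝ) - (j:ℝ)) - 1)*s + 0|) *
          (∏ j ∈ Finset.range M1, |(2*((i:ℝ) - (j:ℝ)))*s + 1|) *
          (∏ j ∈ Finset.range M2, |(2*((i:ℝ) - (j:ℝ)))*s + (-1)|)) :=
          mul_le_mul_of_nonneg_left main (by positivity)
      _ = _ := by rw [show 2*n-1 = (M1-1)+M2+M1+M2 by omega]; ring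
  · -- x ∈ C2
    rw [hC2] at hmem
    obtain ⟨i, hi, hxi⟩ : ∃ i, i < M2 ∧ c + (2*(i:ℝ)+1)*s*τ = x := by
      simpa [Finset.mem_image, Finset.mem_range] using hmem
    have hnm1 : x ∉ classC1 n t := by
      rw [hC1]
      simp only [Finset.mem_image, Finset.mem_range, not_exists, not_and]
      intro j hj heq
      rw [← hxi] at heq
      have H : ((2*(j:ℝ) - 2*(i:ℝ) - 1)*s)*τ = 0*τ := by linear_combination heq
      have H2 := mul_right_cancel₀ hτ0 H
      exact gapB s hs i j 0 (by norm_num) (by linear_combination H2)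
    have hnm3 : x ∉ classC3 n t := by
      rw [hC3]
      simp only [Finset.mem_image, Finset.mem_range, not_exists, not_and]
      intro j hj heq
      rw [← hxi] at heq
      have H : ((2*(j:ℝ) - 2*(i:ℝ) - 1)*s)*τ = 1*τ := by linear_combination heq
      have H2 := mul_right_cancel₀ hτ0 H
      exact gapB s hs i j 1 (by norm_num) (by linear_combination H2)
    have hnm4 : x ∉ classC4 n t := by
      rw [hC4]
      simp only [Finset.mem_image, Finset.mem_range, not_exists, not_and]
      intro j hj heq
      rw [← hxi] at heq
      have H : ((2*(j:ℝ) - 2*(i:ℝ) - 1)*s)*τ = (-1)*τ := by linear_combination heq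
      have H2 := mul_right_cancel₀ hτ0 H
      exact gapB s hs i j (-1) (by norm_num) (by linear_combination H2)
    have hQ1 : (∏ y ∈ (classC1 n t).erase x, |x - y|)
        = τ^M1 * ∏ j ∈ Finset.range M1, |(2*((i:ℝ) - (j:ℝ)) + 1)*s + 0| := by
      rw [Finset.erase_eq_of_notMem hnm1, hC1,
        Finset.prod_image (fun a _ b _ hab => hinj1 hab), ← hxi]
      have h' : ∀ j ∈ Finset.range M1,
          |(c + (2*(i:ℝ)+1)*s*τ) - (c + 2*(j:ℝ)*s*τ)|
            = τ * |(2*((i:ℝ) - (j:ℝ)) + 1)*s + 0| := by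
        intro j _
        rw [show (c + (2*(i:ℝ)+1)*s*τ) - (c + 2*(j:ℝ)*s*τ)
            = ((2*((i:ℝ) - (j:ℝ)) + 1)*s + 0)*τ by ring, abs_mul, abs_of_pos hτ, mul_comm]
      rw [Finset.prod_congr rfl h', Finset.prod_mul_distrib, Finset.prod_const,
        Finset.card_range]
    have hQ2 : (∏ y ∈ (classC2 n t).erase x, |x - y|)
        = τ^(M2-1) * ∏ j ∈ (Finset.range M2).erase i, |(2*((i:ℝ) - (j:ℝ)))*s + 0| := by
      have e : (classC2 n t).erase x
          = ((Finset.range M2).erase i).image (fun j : ℕ => c + (2*(j:ℝ)+1)*s*τ) := by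
        rw [hC2, ← hxi]
        exact (Finset.image_erase hinj2 _ i).symm
      rw [e, Finset.prod_image (fun a _ b _ hab => hinj2 hab), ← hxi]
      have h' : ∀ j ∈ (Finset.range M2).erase i,
          |(c + (2*(i:ℝ)+1)*s*τ) - (c + (2*(j:ℝ)+1)*s*τ)|
            = τ * |(2*((i:ℝ) - (j:ℝ)))*s + 0| := by
        intro j _
        rw [show (c + (2*(i:ℝ)+1)*s*τ) - (c + (2*(j:ℝ)+1)*s*τ)
            = ((2*((i:ℝ) - (j:ℝ)))*s + 0)*τ by ring, abs_mul, abs_of_pos hτ, mul_comm]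
      rw [Finset.prod_congr rfl h', Finset.prod_mul_distrib, Finset.prod_const,
        Finset.card_erase_of_mem (Finset.mem_range.2 hi), Finset.card_range]
    have hQ3 : (∏ y ∈ (classC3 n t).erase x, |x - y|)
        = τ^M1 * ∏ j ∈ Finset.range M1, |(2*((i:ℝ) - (j:ℝ)) + 1)*s + 1| := by
      rw [Finset.erase_eq_of_notMem hnm3, hC3,
        Finset.prod_image (fun a _ b _ hab => hinj3 hab), ← hxi]
      have h' : ∀ j ∈ Finset.range M1,
          |(c + (2*(i:ℝ)+1)*s*τ) - (c + 2*(j:ℝ)*s*τ - τ)|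
            = τ * |(2*((i:ℝ) - (j:ℝ)) + 1)*s + 1| := by
        intro j _
        rw [show (c + (2*(i:ℝ)+1)*s*τ) - (c + 2*(j:ℝ)*s*τ - τ)
            = ((2*((i:ℝ) - (j:ℝ)) + 1)*s + 1)*τ by ring, abs_mul, abs_of_pos hτ, mul_comm]
      rw [Finset.prod_congr rfl h', Finset.prod_mul_distrib, Finset.prod_const,
        Finset.card_range]
    have hQ4 : (∏ y ∈ (classC4 n t).erase x, |x - y|)
        = τ^M2 * ∏ j ∈ Finset.range M2, |(2*((i:ℝ) - (j:ℝ)) + 1)*s + (-1)| := by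
      rw [Finset.erase_eq_of_notMem hnm4, hC4,
        Finset.prod_image (fun a _ b _ hab => hinj4 hab), ← hxi]
      have h' : ∀ j ∈ Finset.range M2,
          |(c + (2*(i:ℝ)+1)*s*τ) - (c + 2*(j:ℝ)*s*τ + τ)|
            = τ * |(2*((i:ℝ) - (j:ℝ)) + 1)*s + (-1)| := by
        intro j _
        rw [show (c + (2*(i:ℝ)+1)*s*τ) - (c + 2*(j:ℝ)*s*τ + τ)
            = ((2*((i:ℝ) - (j:ℝ)) + 1)*s + (-1))*τ by ring, abs_mul, abs_of_pos hτ, mul_comm]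
      rw [Finset.prod_congr rfl h', Finset.prod_mul_distrib, Finset.prod_const,
        Finset.card_range]
    unfold classDistProd
    rw [hQ1, hQ2, hQ3, hQ4]
    have main := caseC2 M1 M2 (M2/2) i s hs hMle hMle' hM2ge hqle hqge hi
    calc τ ^ (2*n-1) * s ^ (2*n-3) * ((2 * (M2/2) - 1).factorial : ℝ) ^ 4
        = τ^(2*n-1) * (s^(2*(M1+M2)-3) * ((2 * (M2/2) - 1).factorial : ℝ)^4) := by
          rw [show 2*(M1+M2)-3 = 2*n-3 by omega]; ring
      _ ≤ τ^(2*n-1) * ((∏ j ∈ Finset.range M1, |(2*((i:ℝ) - (j:ℝ)) + 1)*s + 0|) *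
          (∏ j ∈ (Finset.range M2).erase i, |(2*((i:ℝ) - (j:ℝ)))*s + 0|) *
          (∏ j ∈ Finset.range M1, |(2*((i:ℝ) - (j:ℝ)) + 1)*s + 1|) *
          (∏ j ∈ Finset.range M2, |(2*((i:ℝ) - (j:ℝ)) + 1)*s + (-1)|)) :=
          mul_le_mul_of_nonneg_left main (by positivity)
      _ = _ := by rw [show 2*n-1 = M1+(M2-1)+M1+M2 by omega]; ring
  · -- x ∈ C3
    rw [hC3] at hmem
    obtain ⟨i, hi, hxi⟩ : ∃ i, i < M1 ∧ c + 2*(i:ℝ)*s*τ - τ = x := by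
      simpa [Finset.mem_image, Finset.mem_range] using hmem
    have hnm1 : x ∉ classC1 n t := by
      rw [hC1]
      simp only [Finset.mem_image, Finset.mem_range, not_exists, not_and]
      intro j hj heq
      rw [← hxi] at heq
      have H : ((2*(j:ℝ) - 2*(i:ℝ))*s)*τ = (-1)*τ := by linear_combination heq
      have H2 := mul_right_cancel₀ hτ0 H
      exact gapA s hs i j (-1) (by norm_num) (by norm_num) (by linear_combination H2)
    have hnm2 : x ∉ classC2 n t := by
      rw [hC2]
      simp only [Finset.mem_image, Finset.mem_range, not_exists, not_and]
      intro j hj heq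
      rw [← hxi] at heq
      have H : ((2*(j:ℝ) - 2*(i:ℝ) + 1)*s)*τ = (-1)*τ := by linear_combination heq
      have H2 := mul_right_cancel₀ hτ0 H
      exact gapB s hs i (j+1) (-1) (by norm_num) (by push_cast; linear_combination H2)
    have hnm4 : x ∉ classC4 n t := by
      rw [hC4]
      simp only [Finset.mem_image, Finset.mem_range, not_exists, not_and]
      intro j hj heq
      rw [← hxi] at heq
      have H : ((2*(j:ℝ) - 2*(i:ℝ))*s)*τ = (-2)*τ := by linear_combination heq
      have H2 := mul_right_cancel₀ hτ0 H
      exact gapA s hs i j (-2) (by norm_num) (by norm_num) (by linear_combination H2)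
    have hQ1 : (∏ y ∈ (classC1 n t).erase x, |x - y|)
        = τ^M1 * ∏ j ∈ Finset.range M1, |(2*((i:ℝ) - (j:ℝ)))*s + (-1)| := by
      rw [Finset.erase_eq_of_notMem hnm1, hC1,
        Finset.prod_image (fun a _ b _ hab => hinj1 hab), ← hxi]
      have h' : ∀ j ∈ Finset.range M1,
          |(c + 2*(i:ℝ)*s*τ - τ) - (c + 2*(j:ℝ)*s*τ)|
            = τ * |(2*((i:ℝ) - (j:ℝ)))*s + (-1)| := by
        intro j _
        rw [show (c + 2*(i:ℝ)*s*τ - τ) - (c + 2*(j:ℝ)*s*τ)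
            = ((2*((i:ℝ) - (j:ℝ)))*s + (-1))*τ by ring, abs_mul, abs_of_pos hτ, mul_comm]
      rw [Finset.prod_congr rfl h', Finset.prod_mul_distrib, Finset.prod_const,
        Finset.card_range]
    have hQ2 : (∏ y ∈ (classC2 n t).erase x, |x - y|)
        = τ^M2 * ∏ j ∈ Finset.range M2, |(2*((i:ℝ) - (j:ℝ)) - 1)*s + (-1)| := by
      rw [Finset.erase_eq_of_notMem hnm2, hC2,
        Finset.prod_image (fun a _ b _ hab => hinj2 hab), ← hxi]
      have h' : ∀ j ∈ Finset.range M2,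
          |(c + 2*(i:ℝ)*s*τ - τ) - (c + (2*(j:ℝ)+1)*s*τ)|
            = τ * |(2*((i:ℝ) - (j:ℝ)) - 1)*s + (-1)| := by
        intro j _
        rw [show (c + 2*(i:ℝ)*s*τ - τ) - (c + (2*(j:ℝ)+1)*s*τ)
            = ((2*((i:ℝ) - (j:ℝ)) - 1)*s + (-1))*τ by ring, abs_mul, abs_of_pos hτ, mul_comm]
      rw [Finset.prod_congr rfl h', Finset.prod_mul_distrib, Finset.prod_const,
        Finset.card_range]
    have hQ3 : (∏ y ∈ (classC3 n t).erase x, |x - y|)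
        = τ^(M1-1) * ∏ j ∈ (Finset.range M1).erase i, |(2*((i:ℝ) - (j:ℝ)))*s + 0| := by
      have e : (classC3 n t).erase x
          = ((Finset.range M1).erase i).image (fun j : ℕ => c + 2*(j:ℝ)*s*τ - τ) := by
        rw [hC3, ← hxi]
        exact (Finset.image_erase hinj3 _ i).symm
      rw [e, Finset.prod_image (fun a _ b _ hab => hinj3 hab), ← hxi]
      have h' : ∀ j ∈ (Finset.range M1).erase i,
          |(c + 2*(i:ℝ)*s*τ - τ) - (c + 2*(j:ℝ)*s*τ - τ)|
            = τ * |(2*((i:ℝ) - (j:ℝ)))*s + 0| := by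
        intro j _
        rw [show (c + 2*(i:ℝ)*s*τ - τ) - (c + 2*(j:ℝ)*s*τ - τ)
            = ((2*((i:ℝ) - (j:ℝ)))*s + 0)*τ by ring, abs_mul, abs_of_pos hτ, mul_comm]
      rw [Finset.prod_congr rfl h', Finset.prod_mul_distrib, Finset.prod_const,
        Finset.card_erase_of_mem (Finset.mem_range.2 hi), Finset.card_range]
    have hQ4 : (∏ y ∈ (classC4 n t).erase x, |x - y|)
        = τ^M2 * ∏ j ∈ Finset.range M2, |(2*((i:ℝ) - (j:ℝ)))*s + (-2)| := by
      rw [Finset.erase_eq_of_notMem hnm4, hC4,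
        Finset.prod_image (fun a _ b _ hab => hinj4 hab), ← hxi]
      have h' : ∀ j ∈ Finset.range M2,
          |(c + 2*(i:ℝ)*s*τ - τ) - (c + 2*(j:ℝ)*s*τ + τ)|
            = τ * |(2*((i:ℝ) - (j:ℝ)))*s + (-2)| := by
        intro j _
        rw [show (c + 2*(i:ℝ)*s*τ - τ) - (c + 2*(j:ℝ)*s*τ + τ)
            = ((2*((i:ℝ) - (j:ℝ)))*s + (-2))*τ by ring, abs_mul, abs_of_pos hτ, mul_comm]
      rw [Finset.prod_congr rfl h', Finset.prod_mul_distrib, Finset.prod_const,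
        Finset.card_range]
    unfold classDistProd
    rw [hQ1, hQ2, hQ3, hQ4]
    have main := caseC3 M1 M2 (M2/2) i s hs hMle hMle' hM2ge hqle hqge hi
    calc τ ^ (2*n-1) * s ^ (2*n-3) * ((2 * (M2/2) - 1).factorial : ℝ) ^ 4
        = τ^(2*n-1) * (s^(2*(M1+M2)-3) * ((2 * (M2/2) - 1).factorial : ℝ)^4) := by
          rw [show 2*(M1+M2)-3 = 2*n-3 by omega]; ring
      _ ≤ τ^(2*n-1) * ((∏ j ∈ Finset.range M1, |(2*((i:ℝ) - (j:ℝ)))*s + (-1)|) *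
          (∏ j ∈ Finset.range M2, |(2*((i:ℝ) - (j:ℝ)) - 1)*s + (-1)|) *
          (∏ j ∈ (Finset.range M1).erase i, |(2*((i:ℝ) - (j:ℝ)))*s + 0|) *
          (∏ j ∈ Finset.range M2, |(2*((i:ℝ) - (j:ℝ)))*s + (-2)|)) :=
          mul_le_mul_of_nonneg_left main (by positivity)
      _ = _ := by rw [show 2*n-1 = M1+M2+(M1-1)+M2 by omega]; ring
  · -- x ∈ C4
    rw [hC4] at hmem
    obtain ⟨i, hi, hxi⟩ : ∃ i, i < M2 ∧ c + 2*(i:ℝ)*s*τ + τ = x := by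
      simpa [Finset.mem_image, Finset.mem_range] using hmem
    have hnm1 : x ∉ classC1 n t := by
      rw [hC1]
      simp only [Finset.mem_image, Finset.mem_range, not_exists, not_and]
      intro j hj heq
      rw [← hxi] at heq
      have H : ((2*(j:ℝ) - 2*(i:ℝ))*s)*τ = 1*τ := by linear_combination heq
      have H2 := mul_right_cancel₀ hτ0 H
      exact gapA s hs i j 1 (by norm_num) (by norm_num) (by linear_combination H2)
    have hnm2 : x ∉ classC2 n t := by
      rw [hC2]
      simp only [Finset.mem_image, Finset.mem_range, not_exists, not_and]
      intro j hj heq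
      rw [← hxi] at heq
      have H : ((2*(j:ℝ) - 2*(i:ℝ) + 1)*s)*τ = 1*τ := by linear_combination heq
      have H2 := mul_right_cancel₀ hτ0 H
      exact gapB s hs i (j+1) 1 (by norm_num) (by push_cast; linear_combination H2)
    have hnm3 : x ∉ classC3 n t := by
      rw [hC3]
      simp only [Finset.mem_image, Finset.mem_range, not_exists, not_and]
      intro j hj heq
      rw [← hxi] at heq
      have H : ((2*(j:ℝ) - 2*(i:ℝ))*s)*τ = 2*τ := by linear_combination heq
      have H2 := mul_right_cancel₀ hτ0 H
      exact gapA s hs i j 2 (by norm_num) (by norm_num) (by linear_combination H2)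
    have hQ1 : (∏ y ∈ (classC1 n t).erase x, |x - y|)
        = τ^M1 * ∏ j ∈ Finset.range M1, |(2*((i:ℝ) - (j:ℝ)))*s + 1| := by
      rw [Finset.erase_eq_of_notMem hnm1, hC1,
        Finset.prod_image (fun a _ b _ hab => hinj1 hab), ← hxi]
      have h' : ∀ j ∈ Finset.range M1,
          |(c + 2*(i:ℝ)*s*τ + τ) - (c + 2*(j:ℝ)*s*τ)|
            = τ * |(2*((i:ℝ) - (j:ℝ)))*s + 1| := by
        intro j _
        rw [show (c + 2*(i:ℝ)*s*τ + τ) - (c + 2*(j:ℝ)*s*τ)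
            = ((2*((i:ℝ) - (j:ℝ)))*s + 1)*τ by ring, abs_mul, abs_of_pos hτ, mul_comm]
      rw [Finset.prod_congr rfl h', Finset.prod_mul_distrib, Finset.prod_const,
        Finset.card_range]
    have hQ2 : (∏ y ∈ (classC2 n t).erase x, |x - y|)
        = τ^M2 * ∏ j ∈ Finset.range M2, |(2*((i:ℝ) - (j:ℝ)) - 1)*s + 1| := by
      rw [Finset.erase_eq_of_notMem hnm2, hC2,
        Finset.prod_image (fun a _ b _ hab => hinj2 hab), ← hxi]
      have h' : ∀ j ∈ Finset.range M2,
          |(c + 2*(i:ℝ)*s*τ + τ) - (c + (2*(j:ℝ)+1)*s*τ)|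
            = τ * |(2*((i:ℝ) - (j:ℝ)) - 1)*s + 1| := by
        intro j _
        rw [show (c + 2*(i:ℝ)*s*τ + τ) - (c + (2*(j:ℝ)+1)*s*τ)
            = ((2*((i:ℝ) - (j:ℝ)) - 1)*s + 1)*τ by ring, abs_mul, abs_of_pos hτ, mul_comm]
      rw [Finset.prod_congr rfl h', Finset.prod_mul_distrib, Finset.prod_const,
        Finset.card_range]
    have hQ3 : (∏ y ∈ (classC3 n t).erase x, |x - y|)
        = τ^M1 * ∏ j ∈ Finset.range M1, |(2*((i:ℝ) - (j:ℝ)))*s + 2| := by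
      rw [Finset.erase_eq_of_notMem hnm3, hC3,
        Finset.prod_image (fun a _ b _ hab => hinj3 hab), ← hxi]
      have h' : ∀ j ∈ Finset.range M1,
          |(c + 2*(i:ℝ)*s*τ + τ) - (c + 2*(j:ℝ)*s*τ - τ)|
            = τ * |(2*((i:ℝ) - (j:ℝ)))*s + 2| := by
        intro j _
        rw [show (c + 2*(i:ℝ)*s*τ + τ) - (c + 2*(j:ℝ)*s*τ - τ)
            = ((2*((i:ℝ) - (j:ℝ)))*s + 2)*τ by ring, abs_mul, abs_of_pos hτ, mul_comm]
      rw [Finset.prod_congr rfl h', Finset.prod_mul_distrib, Finset.prod_const,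
        Finset.card_range]
    have hQ4 : (∏ y ∈ (classC4 n t).erase x, |x - y|)
        = τ^(M2-1) * ∏ j ∈ (Finset.range M2).erase i, |(2*((i:ℝ) - (j:ℝ)))*s + 0| := by
      have e : (classC4 n t).erase x
          = ((Finset.range M2).erase i).image (fun j : ℕ => c + 2*(j:ℝ)*s*τ + τ) := by
        rw [hC4, ← hxi]
        exact (Finset.image_erase hinj4 _ i).symm
      rw [e, Finset.prod_image (fun a _ b _ hab => hinj4 hab), ← hxi]
      have h' : ∀ j ∈ (Finset.range M2).erase i,
          |(c + 2*(i:ℝ)*s*τ + τ) - (c + 2*(j:ℝ)*s*τ + τ)|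
            = τ * |(2*((i:ℝ) - (j:ℝ)))*s + 0| := by
        intro j _
        rw [show (c + 2*(i:ℝ)*s*τ + τ) - (c + 2*(j:ℝ)*s*τ + τ)
            = ((2*((i:ℝ) - (j:ℝ)))*s + 0)*τ by ring, abs_mul, abs_of_pos hτ, mul_comm]
      rw [Finset.prod_congr rfl h', Finset.prod_mul_distrib, Finset.prod_const,
        Finset.card_erase_of_mem (Finset.mem_range.2 hi), Finset.card_range]
    unfold classDistProd
    rw [hQ1, hQ2, hQ3, hQ4]
    have main := caseC4 M1 M2 (M2/2) i s hs hMle hMle' hM2ge hqle hqge hi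
    calc τ ^ (2*n-1) * s ^ (2*n-3) * ((2 * (M2/2) - 1).factorial : ℝ) ^ 4
        = τ^(2*n-1) * (s^(2*(M1+M2)-3) * ((2 * (M2/2) - 1).factorial : ℝ)^4) := by
          rw [show 2*(M1+M2)-3 = 2*n-3 by omega]; ring
      _ ≤ τ^(2*n-1) * ((∏ j ∈ Finset.range M1, |(2*((i:ℝ) - (j:ℝ)))*s + 1|) *
          (∏ j ∈ Finset.range M2, |(2*((i:ℝ) - (j:ℝ)) - 1)*s + 1|) *
          (∏ j ∈ Finset.range M1, |(2*((i:ℝ) - (j:ℝ)))*s + 2|) *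
          (∏ j ∈ (Finset.range M2).erase i, |(2*((i:ℝ) - (j:ℝ)))*s + 0|)) :=
          mul_le_mul_of_nonneg_left main (by positivity)
      _ = _ := by rw [show 2*n-1 = M1+M2+M1+(M2-1) by omega]; ring
end
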